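/- arXiv:2211.06802 — 9 statements merged into one kernel-verified Lean document; each statement's English description precedes it below -/
import Mathlib

section
/- For permutations u, w in the symmetric group S_n and 1 ≤ k < n, one has u ≤_k w in the extended k-Bruhat order (the order generated by k-edges, i.e., w = u·t_{ab} with a ≤ k < b and u(a) < u(b)) if and only if for all a ≤ k and all b > k, u(a) ≤ w(a) and u(b) ≥ w(b). -/
/-- A `k`-edge in the Bruhat graph of `S_n` (positions 0-indexed: `a`
occupies a 1-indexed position `≤ k` iff `a.val < k`, and `b` a 1-indexed
position `> k` iff `k ≤ b.val`): `w = u * swap a b` with `u a < u b`. -/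
def kEdge {n : ℕ} (k : ℕ) (u w : Equiv.Perm (Fin n)) : Prop :=
  ∃ a b : Fin n, a.val < k ∧ k ≤ b.val ∧ u a < u b ∧ w = u * Equiv.swap a b

/-- The extended `k`-Bruhat order: the reflexive–transitive closure of the
`k`-edge relation. -/
def extKBruhat {n : ℕ} (k : ℕ) : Equiv.Perm (Fin n) → Equiv.Perm (Fin n) → Prop :=
  Relation.ReflTransGen (kEdge k)

open Finset

/-- A single `k`-edge moves values up on the front and down on the back. -/
lemma kEdge_cond {n k : ℕ} {u w : Equiv.Perm (Fin n)} (h : kEdge k u w) :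
    (∀ a : Fin n, a.val < k → u a ≤ w a) ∧ (∀ b : Fin n, k ≤ b.val → w b ≤ u b) := by
  obtain ⟨a, b, ha, hb, hlt, rfl⟩ := h
  constructor
  · intro p hp
    rcases eq_or_ne p a with rfl | hpa
    · simp only [Equiv.Perm.mul_apply, Equiv.swap_apply_left]
      exact hlt.le
    · have hpb : p ≠ b := by intro h; subst h; omega
      simp only [Equiv.Perm.mul_apply, Equiv.swap_apply_of_ne_of_ne hpa hpb, le_refl]
  · intro p hp
    rcases eq_or_ne p b with rfl | hpb
    · simp only [Equiv.Perm.mul_apply, Equiv.swap_apply_right]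
      exact hlt.le
    · have hpa : p ≠ a := by intro h; subst h; omega
      simp only [Equiv.Perm.mul_apply, Equiv.swap_apply_of_ne_of_ne hpa hpb, le_refl]

/-- Counting lemma: given a minimal "bad" back position `b`, there is a front
position `a` with `w b ≤ u a < u b ≤ w a`. -/
lemma exists_front_pos {n k : ℕ} (u w : Equiv.Perm (Fin n))
    (H1 : ∀ a : Fin n, a.val < k → u a ≤ w a)
    (b : Fin n) (hbk : k ≤ b.val) (hbw : w b < u b)
    (hmin : ∀ p : Fin n, k ≤ p.val → u p < u b → u p = w p) :
    ∃ a : Fin n, a.val < k ∧ w b ≤ u a ∧ u a < u b ∧ u b ≤ w a := by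
  set I : Finset (Fin n) := Finset.Ico (w b) (u b) with hI
  have cardv : ∀ v : Equiv.Perm (Fin n), (univ.filter fun p => v p ∈ I).card = I.card := by
    intro v
    rw [show (univ.filter fun p => v p ∈ I) = I.map v.symm.toEmbedding by
      ext p
      simp [Equiv.symm_apply_eq, eq_comm]]
    exact Finset.card_map _
  have split : ∀ v : Equiv.Perm (Fin n),
      ((univ.filter fun p => v p ∈ I).filter fun p : Fin n => p.val < k).card
      + ((univ.filter fun p => v p ∈ I).filter fun p : Fin n => ¬ p.val < k).card
      = I.card := by
    intro v
    rw [Finset.card_filter_add_card_filter_not, cardv]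
  have hsub : ((univ.filter fun p => u p ∈ I).filter fun p : Fin n => ¬ p.val < k)
      ⊆ ((univ.filter fun p => w p ∈ I).filter fun p : Fin n => ¬ p.val < k) := by
    intro p hp
    simp only [Finset.mem_filter, Finset.mem_univ, true_and] at hp ⊢
    obtain ⟨hpI, hpk⟩ := hp
    rw [Finset.mem_Ico] at hpI
    have := hmin p (by omega) hpI.2
    rw [← this]
    exact ⟨by rw [Finset.mem_Ico]; exact hpI, hpk⟩
  have hbmemw : b ∈ ((univ.filter fun p => w p ∈ I).filter fun p : Fin n => ¬ p.val < k) := by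
    simp only [Finset.mem_filter, Finset.mem_univ, true_and]
    exact ⟨by rw [Finset.mem_Ico]; exact ⟨le_refl _, hbw⟩, by omega⟩
  have hbmemu : b ∉ ((univ.filter fun p => u p ∈ I).filter fun p : Fin n => ¬ p.val < k) := by
    simp only [Finset.mem_filter, Finset.mem_univ, true_and, not_and]
    intro h
    rw [Finset.mem_Ico] at h
    exact absurd h.2 (lt_irrefl _)
  have hcardlt : ((univ.filter fun p => u p ∈ I).filter fun p : Fin n => ¬ p.val < k).card
      < ((univ.filter fun p => w p ∈ I).filter fun p : Fin n => ¬ p.val < k).card :=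
    Finset.card_lt_card ⟨hsub, fun h => hbmemu (h hbmemw)⟩
  have hfrontlt : ((univ.filter fun p => w p ∈ I).filter fun p : Fin n => p.val < k).card
      < ((univ.filter fun p => u p ∈ I).filter fun p : Fin n => p.val < k).card := by
    have h1 := split u
    have h2 := split w
    omega
  obtain ⟨a, hau, haw⟩ : ∃ a, a ∈ ((univ.filter fun p => u p ∈ I).filter
      fun p : Fin n => p.val < k) ∧ a ∉ ((univ.filter fun p => w p ∈ I).filter
      fun p : Fin n => p.val < k) := by
    by_contra hcon
    push_neg at hcon
    exact absurd (Finset.card_le_card hcon) (not_le.mpr hfrontlt)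
  simp only [Finset.mem_filter, Finset.mem_univ, true_and] at hau haw
  obtain ⟨haI, hak⟩ := hau
  rw [Finset.mem_Ico] at haI
  have hwaI : w a ∉ I := fun h => haw ⟨h, hak⟩
  rw [hI, Finset.mem_Ico] at hwaI
  have hle : u a ≤ w a := H1 a hak
  have : u b ≤ w a := by
    by_contra hcon
    exact hwaI ⟨haI.1.trans hle, not_le.mp hcon⟩
  exact ⟨a, hak, haI.1, haI.2, this⟩

/-- If the two permutations satisfy the order conditions and agree on the back,
they are equal. -/
lemma eq_of_agree_back {n k : ℕ} (u w : Equiv.Perm (Fin n))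
    (H1 : ∀ a : Fin n, a.val < k → u a ≤ w a)
    (Heq : ∀ p : Fin n, k ≤ p.val → u p = w p) : u = w := by
  have hsum : ∑ p : Fin n, (u p).val = ∑ p : Fin n, (w p).val := by
    rw [Equiv.sum_comp u (fun x : Fin n => x.val), Equiv.sum_comp w (fun x : Fin n => x.val)]
  have hsplit : ∀ v : Equiv.Perm (Fin n), ∑ p : Fin n, (v p).val
      = ∑ p ∈ univ.filter (fun p : Fin n => p.val < k), (v p).val
        + ∑ p ∈ univ.filter (fun p : Fin n => ¬ p.val < k), (v p).val := by
    intro v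
    exact (Finset.sum_filter_add_sum_filter_not univ _ _).symm
  have hback : ∑ p ∈ univ.filter (fun p : Fin n => ¬ p.val < k), (u p).val
      = ∑ p ∈ univ.filter (fun p : Fin n => ¬ p.val < k), (w p).val := by
    apply Finset.sum_congr rfl
    intro p hp
    simp only [Finset.mem_filter, Finset.mem_univ, true_and] at hp
    rw [Heq p (by omega)]
  have hfront : ∑ p ∈ univ.filter (fun p : Fin n => p.val < k), (u p).val
      = ∑ p ∈ univ.filter (fun p : Fin n => p.val < k), (w p).val := by
    have h1 := hsplit u
    have h2 := hsplit w
    omega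
  have hptwise : ∀ p ∈ univ.filter (fun p : Fin n => p.val < k), (u p).val = (w p).val := by
    rw [← Finset.sum_eq_sum_iff_of_le]
    · exact hfront
    · intro p hp
      simp only [Finset.mem_filter, Finset.mem_univ, true_and] at hp
      exact H1 p hp
  apply Equiv.ext
  intro p
  by_cases hp : p.val < k
  · exact Fin.ext (hptwise p (by simp [hp]))
  · exact Heq p (by omega)

/-- The backward direction, by strong induction on the total front deficiency. -/
lemma extKBruhat_of_cond {n k : ℕ} : ∀ (m : ℕ) (u w : Equiv.Perm (Fin n)),
    (∑ p ∈ univ.filter (fun p : Fin n => p.val < k), ((w p).val - (u p).val)) = m →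
    (∀ a : Fin n, a.val < k → u a ≤ w a) →
    (∀ b : Fin n, k ≤ b.val → w b ≤ u b) →
    extKBruhat k u w := by
  intro m
  induction m using Nat.strong_induction_on with
  | _ m IH =>
    intro u w hm H1 H2
    by_cases hex : ∃ b : Fin n, k ≤ b.val ∧ w b < u b
    · obtain ⟨b, hbmem, hbmin⟩ := Finset.exists_min_image
        (Finset.univ.filter fun p : Fin n => k ≤ p.val ∧ w p < u p) (fun p => u p)
        (by obtain ⟨b, h1, h2⟩ := hex
            exact ⟨b, by simp only [Finset.mem_filter, Finset.mem_univ, true_and]; exact ⟨h1, h2⟩⟩)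
      simp only [Finset.mem_filter, Finset.mem_univ, true_and] at hbmem
      obtain ⟨hbk, hbw⟩ := hbmem
      have hmin : ∀ p : Fin n, k ≤ p.val → u p < u b → u p = w p := by
        intro p hpk hpb
        rcases lt_or_eq_of_le (H2 p hpk) with h | h
        · have hmem : p ∈ Finset.univ.filter fun q : Fin n => k ≤ q.val ∧ w q < u q :=
            Finset.mem_filter.mpr ⟨Finset.mem_univ _, hpk, h⟩
          exact absurd (hbmin p hmem) (not_le.mpr hpb)
        · exact h.symm
      obtain ⟨a, hak, h1, h2, h3⟩ := exists_front_pos u w H1 b hbk hbw hmin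
      have hu'a : (u * Equiv.swap a b) a = u b := by
        simp [Equiv.Perm.mul_apply]
      have hu'b : (u * Equiv.swap a b) b = u a := by
        simp [Equiv.Perm.mul_apply]
      have hu'o : ∀ p, p ≠ a → p ≠ b → (u * Equiv.swap a b) p = u p := by
        intro p hpa hpb
        simp [Equiv.Perm.mul_apply, Equiv.swap_apply_of_ne_of_ne hpa hpb]
      have H1' : ∀ p : Fin n, p.val < k → (u * Equiv.swap a b) p ≤ w p := by
        intro p hp
        rcases eq_or_ne p a with rfl | hpa
        · rw [hu'a]; exact h3
        · have hpb : p ≠ b := by intro h; subst h; omega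
          rw [hu'o p hpa hpb]; exact H1 p hp
      have H2' : ∀ p : Fin n, k ≤ p.val → w p ≤ (u * Equiv.swap a b) p := by
        intro p hp
        rcases eq_or_ne p b with rfl | hpb
        · rw [hu'b]; exact h1
        · have hpa : p ≠ a := by intro h; subst h; omega
          rw [hu'o p hpa hpb]; exact H2 p hp
      have hdec : (∑ p ∈ univ.filter (fun p : Fin n => p.val < k),
          ((w p).val - (((u * Equiv.swap a b)) p).val)) < m := by
        rw [← hm]
        apply Finset.sum_lt_sum
        · intro p hp
          simp only [Finset.mem_filter, Finset.mem_univ, true_and] at hp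
          rcases eq_or_ne p a with rfl | hpa
          · rw [hu'a]
            have hv2 : (u p).val < (u b).val := h2
            omega
          · have hpb : p ≠ b := by intro h; subst h; omega
            rw [hu'o p hpa hpb]
        · refine ⟨a, by simp [hak], ?_⟩
          rw [hu'a]
          have hv2 : (u a).val < (u b).val := h2
          have hv3 : (u b).val ≤ (w a).val := h3
          omega
      exact Relation.ReflTransGen.head ⟨a, b, hak, hbk, h2, rfl⟩
        (IH _ hdec (u * Equiv.swap a b) w rfl H1' H2')
    · push_neg at hex
      have : u = w := eq_of_agree_back u w H1
        (fun p hp => le_antisymm (hex p hp) (H2 p hp))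
      rw [this]
      exact Relation.ReflTransGen.refl

/-- Criterion for the extended `k`-Bruhat order: `u ≤_k w` iff
`u(a) ≤ w(a)` for all positions `a ≤ k` and `u(b) ≥ w(b)` for all positions `b > k`. -/
theorem stmt0 (n k : ℕ) (hk1 : 1 ≤ k) (hkn : k < n) (u w : Equiv.Perm (Fin n)) :
    extKBruhat k u w ↔
      ((∀ a : Fin n, a.val < k → u a ≤ w a) ∧ (∀ b : Fin n, k ≤ b.val → w b ≤ u b)) := by
  constructor
  · intro h
    induction h with
    | refl => exact ⟨fun a _ => le_refl _, fun b _ => le_refl _⟩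
    | tail hstep hedge ih =>
        obtain ⟨ih1, ih2⟩ := ih
        obtain ⟨e1, e2⟩ := kEdge_cond hedge
        exact ⟨fun a ha => (ih1 a ha).trans (e1 a ha),
               fun p hp => (e2 p hp).trans (ih2 p hp)⟩
  · rintro ⟨H1, H2⟩
    exact extKBruhat_of_cond _ u w rfl H1 H2
end

section
/- Let A be a finite set of formal variables x_a. Then the product (1/(q+z))·(∏_{a∈A}(1+q·x_a)/∏_{a∈A}(1−z·x_a) − 1), viewed as a formal power series in q and z, equals the double sum over α, β ≥ 0 of z^α·q^β times the Schur polynomial s_{(1+α,1^β)}(x_A) of hook shape with arm length α and leg length β. -/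
noncomputable section

open MvPolynomial

variable (σ : Type*) [Fintype σ] [DecidableEq σ]

/-- The Schur polynomial of hook shape `(1+α, 1^β)` (arm length `α`, leg
length `β`), via the dual Jacobi–Trudi expansion
`s_{(1+α,1^β)} = Σ_{j=0}^{β} (−1)^j h_{1+α+j} e_{β−j}`. -/
def hookSchur (α β : ℕ) : MvPolynomial σ ℚ :=
  ∑ j ∈ Finset.range (β + 1),
    ((-1 : ℚ) ^ j) •
      (MvPolynomial.hsymm σ ℚ (1 + α + j) * MvPolynomial.esymm σ ℚ (β - j))

/-- The ambient ring of formal power series in `q` (outer variable) and `z`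
(inner variable) over the polynomial ring in the variables `x_a`, `a ∈ A`. -/
abbrev PS := PowerSeries (PowerSeries (MvPolynomial σ ℚ))

/-- The power series variable `q`. -/
def qq : PS σ := PowerSeries.X

/-- The power series variable `z`. -/
def zz : PS σ := PowerSeries.C (R := PowerSeries (MvPolynomial σ ℚ)) PowerSeries.X

/-- The variable `x_a` as a constant power series. -/
def XX (a : σ) : PS σ :=
  PowerSeries.C (R := PowerSeries (MvPolynomial σ ℚ))
    (PowerSeries.C (R := MvPolynomial σ ℚ) (MvPolynomial.X a))

/-- `Q(x_A) = ∏_{a∈A} (1 + q x_a)`. -/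
def Qprod : PS σ := ∏ a : σ, (1 + qq σ * XX σ a)

/-- `Z(x_A) = ∏_{a∈A} (1 − z x_a)`. -/
def Zprod : PS σ := ∏ a : σ, (1 - zz σ * XX σ a)

/-- The double sum `Σ_{α,β≥0} z^α q^β s_{(1+α,1^β)}(x_A)`, recorded via its
coefficients: the coefficient of `q^β z^α` is the hook Schur polynomial. -/
def Eseries : PS σ := PowerSeries.mk fun β => PowerSeries.mk fun α => hookSchur σ α β

namespace HookAux

variable {σ}

/-- Vieta-style coefficient formula for products of `1 + X * C (f a)`. -/
lemma coeff_prod_one_add {T : Type*} [CommRing T] (f : σ → T) (s : Finset σ) (d : ℕ) :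
    PowerSeries.coeff (R := T) d (∏ a ∈ s, (1 + PowerSeries.X * PowerSeries.C (R := T) (f a))) =
      ∑ t ∈ s.powersetCard d, ∏ a ∈ t, f a := by
  induction s using Finset.induction_on generalizing d with
  | empty =>
      cases d with
      | zero => simp
      | succ d =>
          rw [Finset.powersetCard_eq_empty.2 (by simp)]
          simp
  | @insert a s ha ih =>
      rw [Finset.prod_insert ha, one_add_mul, map_add]
      cases d with
      | zero =>
          rw [ih 0]
          simp [Finset.powersetCard_zero]
      | succ n =>
          have hinj : ∀ t ∈ s.powersetCard n, ∀ t' ∈ s.powersetCard n,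
              insert a t = insert a t' → t = t' := by
            intro t ht t' ht' h
            rw [Finset.mem_powersetCard] at ht ht'
            have hat : a ∉ t := fun hmem => ha (ht.1 hmem)
            have hat' : a ∉ t' := fun hmem => ha (ht'.1 hmem)
            rw [← Finset.erase_insert hat, ← Finset.erase_insert hat', h]
          have hdisj : Disjoint (s.powersetCard (n + 1))
              ((s.powersetCard n).image (insert a)) := by
            rw [Finset.disjoint_left]
            intro t ht ht'
            rw [Finset.mem_powersetCard] at ht
            rw [Finset.mem_image] at ht'
            obtain ⟨u, _, rfl⟩ := ht'
            exact ha (ht.1 (Finset.mem_insert_self a u))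
          rw [mul_assoc, PowerSeries.coeff_succ_X_mul, PowerSeries.coeff_C_mul, ih, ih,
            Finset.powersetCard_succ_insert ha, Finset.sum_union hdisj,
            Finset.sum_image hinj, Finset.mul_sum]
          congr 1
          refine Finset.sum_congr rfl fun t ht => ?_
          rw [Finset.mem_powersetCard] at ht
          rw [Finset.prod_insert (fun hmem => ha (ht.1 hmem))]

lemma geom_mul {T : Type*} [CommRing T] (x : T) :
    (1 - PowerSeries.X * PowerSeries.C (R := T) x) * PowerSeries.mk (fun n => x ^ n) = 1 := by
  ext n
  rw [sub_mul, one_mul, map_sub]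
  cases n with
  | zero => simp
  | succ n =>
      rw [mul_assoc, PowerSeries.coeff_succ_X_mul, PowerSeries.coeff_C_mul,
        PowerSeries.coeff_mk, PowerSeries.coeff_mk, PowerSeries.coeff_one]
      simp [pow_succ, mul_comm]

lemma multiset_prod_map {M : Type*} [CommMonoid M] (g : σ → M) (m : Multiset σ) :
    (m.map g).prod = ∏ a : σ, g a ^ m.count a := by
  induction m using Multiset.induction_on with
  | empty => simp
  | cons a m ih =>
      rename_i x
      rw [Multiset.map_cons, Multiset.prod_cons, ih]
      rw [show (∏ b : σ, g b ^ (a ::ₘ m).count b) =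
          ∏ b : σ, (if b = a then g b else 1) * g b ^ m.count b from
        Finset.prod_congr rfl fun b _ => by
          rw [Multiset.count_cons]
          split <;> simp_all [pow_add, pow_succ, mul_comm]]
      rw [Finset.prod_mul_distrib, Finset.prod_ite_eq' Finset.univ a g]
      simp

lemma prod_geom :
    (∏ a : σ, PowerSeries.mk fun n => (MvPolynomial.X a : MvPolynomial σ ℚ) ^ n)
      = PowerSeries.mk fun d => hsymm σ ℚ d := by
  refine PowerSeries.ext fun d => ?_
  rw [PowerSeries.coeff_mk, PowerSeries.coeff_prod, hsymm]
  simp only [PowerSeries.coeff_mk]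
  have hcard : ∀ l ∈ Finset.finsuppAntidiag (Finset.univ : Finset σ) d,
      Multiset.card (Finsupp.toMultiset l) = d := by
    intro l hl
    rw [Finsupp.card_toMultiset]
    rw [Finset.mem_finsuppAntidiag'] at hl
    exact hl.1
  refine Finset.sum_bij'
    (fun l hl => (⟨Finsupp.toMultiset l, hcard l hl⟩ : Sym σ d))
    (fun (s : Sym σ d) (_ : s ∈ (Finset.univ : Finset (Sym σ d))) => Multiset.toFinsupp s.1)
    ?_ ?_ ?_ ?_ ?_
  · intro l hl
    exact Finset.mem_univ _
  · intro s _
    rw [Finset.mem_finsuppAntidiag']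
    refine ⟨?_, fun x _ => Finset.mem_univ x⟩
    rw [show (fun (_ : σ) (x : ℕ) => x) = fun _ => id from rfl, Multiset.toFinsupp_sum_eq]
    exact s.2
  · intro l hl
    simp [Finsupp.toMultiset_toFinsupp]
  · intro s hs
    exact Sym.ext (by simp [Multiset.toFinsupp_toMultiset])
  · intro l hl
    rw [multiset_prod_map]
    refine Finset.prod_congr rfl fun a _ => ?_
    rw [Finsupp.count_toMultiset]

variable (σ)

/-- The inner series `Z(x) = ∏ (1 - z x_a)` as a power series in one variable. -/
def Zin : PowerSeries (MvPolynomial σ ℚ) :=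
  ∏ a : σ, (1 - PowerSeries.X * PowerSeries.C (R := MvPolynomial σ ℚ) (MvPolynomial.X a))

/-- The generating series of the complete homogeneous symmetric polynomials. -/
def Hin : PowerSeries (MvPolynomial σ ℚ) := PowerSeries.mk fun n => hsymm σ ℚ n

lemma Zin_mul_Hin : Zin σ * Hin σ = 1 := by
  rw [Hin, ← prod_geom, Zin, ← Finset.prod_mul_distrib]
  rw [show (∏ a : σ, ((1 - PowerSeries.X * PowerSeries.C (R := MvPolynomial σ ℚ) (MvPolynomial.X a)) *
      PowerSeries.mk fun n => (MvPolynomial.X a : MvPolynomial σ ℚ) ^ n)) =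
      ∏ _a : σ, (1 : PowerSeries (MvPolynomial σ ℚ)) from
    Finset.prod_congr rfl fun a _ => geom_mul _]
  exact Finset.prod_const_one

lemma coeff_Zin (n : ℕ) :
    PowerSeries.coeff (R := MvPolynomial σ ℚ) n (Zin σ) = (-1) ^ n * esymm σ ℚ n := by
  have : Zin σ = ∏ a : σ, (1 + PowerSeries.X *
      PowerSeries.C (R := MvPolynomial σ ℚ) (-(MvPolynomial.X a))) := by
    refine Finset.prod_congr rfl fun a _ => ?_
    rw [map_neg, mul_neg, sub_eq_add_neg]
  rw [this, coeff_prod_one_add, esymm, Finset.mul_sum]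
  refine Finset.sum_congr rfl fun t ht => ?_
  rw [Finset.mem_powersetCard_univ] at ht
  rw [show (∏ a ∈ t, -(MvPolynomial.X a : MvPolynomial σ ℚ)) =
      ∏ a ∈ t, (-1) * MvPolynomial.X a from Finset.prod_congr rfl fun a _ => by ring]
  rw [Finset.prod_mul_distrib, Finset.prod_const, ht]

lemma coeff_Qprod (β : ℕ) :
    PowerSeries.coeff β (Qprod σ) =
      PowerSeries.C (R := MvPolynomial σ ℚ) (esymm σ ℚ β) := by
  have : Qprod σ = ∏ a : σ, (1 + PowerSeries.X * PowerSeries.C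
      (PowerSeries.C (R := MvPolynomial σ ℚ) (MvPolynomial.X a))) := rfl
  rw [this, coeff_prod_one_add, esymm, map_sum]
  refine Finset.sum_congr rfl fun t _ => ?_
  rw [map_prod]

lemma Zprod_eq : Zprod σ = PowerSeries.C (R := PowerSeries (MvPolynomial σ ℚ)) (Zin σ) := by
  rw [Zprod, Zin, map_prod]
  refine Finset.prod_congr rfl fun a _ => ?_
  rw [map_sub, map_one, map_mul]
  rfl

/-- The alternating convolution of `esymm` and `hsymm` vanishes in positive degree. -/
lemma key_identity (n : ℕ) :
    ∑ p ∈ Finset.HasAntidiagonal.antidiagonal (n + 1),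
      (-1 : MvPolynomial σ ℚ) ^ p.1 * esymm σ ℚ p.1 * hsymm σ ℚ p.2 = 0 := by
  have h := congrArg (PowerSeries.coeff (R := MvPolynomial σ ℚ) (n + 1)) (Zin_mul_Hin σ)
  rw [PowerSeries.coeff_mul, PowerSeries.coeff_one, if_neg (Nat.succ_ne_zero n)] at h
  rw [← h]
  refine Finset.sum_congr rfl fun p _ => ?_
  rw [coeff_Zin, Hin, PowerSeries.coeff_mk, mul_assoc]

lemma smul_eq_mul_neg_one_pow (j : ℕ) (p : MvPolynomial σ ℚ) :
    ((-1 : ℚ) ^ j) • p = (-1 : MvPolynomial σ ℚ) ^ j * p := by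
  rw [Algebra.smul_def, map_pow, map_neg, map_one]

lemma hook_zero (k : ℕ) : hookSchur σ k 0 = hsymm σ ℚ (k + 1) := by
  simp [hookSchur, esymm_zero, Nat.add_comm 1 k]

lemma hook_col (n : ℕ) : hookSchur σ 0 n = esymm σ ℚ (n + 1) := by
  have hk := key_identity σ n
  rw [Finset.Nat.sum_antidiagonal_eq_sum_range_succ_mk, Finset.sum_range_succ] at hk
  simp only [Nat.sub_self, hsymm_zero, mul_one] at hk
  have eq1 : ∑ i ∈ Finset.range (n + 1),
      (-1 : MvPolynomial σ ℚ) ^ i * esymm σ ℚ i * hsymm σ ℚ (n + 1 - i) =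
      (-1 : MvPolynomial σ ℚ) ^ n * esymm σ ℚ (n + 1) := by
    have h2 := eq_neg_of_add_eq_zero_left hk
    rw [h2, pow_succ]
    ring
  have hsign : ∀ j ≤ n, (-1 : MvPolynomial σ ℚ) ^ (n - j) =
      (-1 : MvPolynomial σ ℚ) ^ n * (-1 : MvPolynomial σ ℚ) ^ j := by
    intro j hj
    have h2 : (-1 : MvPolynomial σ ℚ) ^ n =
        (-1 : MvPolynomial σ ℚ) ^ (n - j) * (-1 : MvPolynomial σ ℚ) ^ j := by
      rw [← pow_add]
      congr 1
      omega
    rw [h2, mul_assoc, ← pow_add, Even.neg_one_pow ⟨j, rfl⟩, mul_one]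
  calc hookSchur σ 0 n
      = ∑ j ∈ Finset.range (n + 1), ((-1 : ℚ) ^ (n + 1 - 1 - j)) •
          (hsymm σ ℚ (1 + 0 + (n + 1 - 1 - j)) * esymm σ ℚ (n - (n + 1 - 1 - j))) := by
        simp only [hookSchur]
        exact (Finset.sum_range_reflect
          (fun j => ((-1 : ℚ) ^ j) • (hsymm σ ℚ (1 + 0 + j) * esymm σ ℚ (n - j))) (n + 1)).symm
    _ = ∑ j ∈ Finset.range (n + 1), (-1 : MvPolynomial σ ℚ) ^ n *
          ((-1 : MvPolynomial σ ℚ) ^ j * esymm σ ℚ j * hsymm σ ℚ (n + 1 - j)) := by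
        refine Finset.sum_congr rfl fun j hj => ?_
        rw [Finset.mem_range] at hj
        have hj' : j ≤ n := Nat.lt_succ_iff.mp hj
        rw [smul_eq_mul_neg_one_pow]
        have e1 : n + 1 - 1 - j = n - j := by omega
        have e2 : n - (n - j) = j := by omega
        have e3 : 1 + 0 + (n - j) = n + 1 - j := by omega
        rw [e1, e2, e3, hsign j hj']
        ring
    _ = esymm σ ℚ (n + 1) := by
        rw [← Finset.mul_sum, eq1, ← mul_assoc, ← pow_add,
          Even.neg_one_pow ⟨n, rfl⟩, one_mul]

lemma hook_rec (k n : ℕ) :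
    hookSchur σ (k + 1) n + hookSchur σ k (n + 1) =
      hsymm σ ℚ (k + 1) * esymm σ ℚ (n + 1) := by
  simp only [hookSchur]
  rw [Finset.sum_range_succ' (fun j => ((-1 : ℚ) ^ j) •
      (hsymm σ ℚ (1 + k + j) * esymm σ ℚ (n + 1 - j))) (n + 1)]
  rw [← add_assoc]
  have hz : (∑ j ∈ Finset.range (n + 1), ((-1 : ℚ) ^ j) •
        (hsymm σ ℚ (1 + (k + 1) + j) * esymm σ ℚ (n - j))) +
      ∑ i ∈ Finset.range (n + 1), ((-1 : ℚ) ^ (i + 1)) •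
        (hsymm σ ℚ (1 + k + (i + 1)) * esymm σ ℚ (n + 1 - (i + 1))) = 0 := by
    rw [← Finset.sum_add_distrib]
    refine Finset.sum_eq_zero fun i _ => ?_
    have e1 : 1 + k + (i + 1) = 1 + (k + 1) + i := by omega
    have e2 : n + 1 - (i + 1) = n - i := by omega
    rw [e1, e2, pow_succ, mul_comm ((-1 : ℚ) ^ i), mul_smul, neg_one_smul]
    exact add_neg_cancel _
  rw [hz, zero_add, pow_zero, one_smul]
  have e1 : 1 + k + 0 = k + 1 := by omega
  have e2 : n + 1 - 0 = n + 1 := by omega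
  rw [e1, e2]

end HookAux

open HookAux in
/-- `(1/(q+z))·(Q(x_A)/Z(x_A) − 1) = Σ_{α,β≥0} z^α q^β s_{(1+α,1^β)}(x_A)`,
stated with denominators cleared (note `Z(x_A)` is a unit and `q+z` a
non-zero-divisor in the power series ring). -/
theorem stmt1 : (qq σ + zz σ) * Eseries σ * Zprod σ = Qprod σ - Zprod σ := by
  have key : (qq σ + zz σ) * Eseries σ =
      Qprod σ * PowerSeries.C (R := PowerSeries (MvPolynomial σ ℚ)) (Hin σ) - 1 := by
    refine PowerSeries.ext fun β => ?_
    rw [add_mul, map_add, map_sub, PowerSeries.coeff_mul_C, coeff_Qprod,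
      PowerSeries.coeff_one, zz, PowerSeries.coeff_C_mul, Eseries, PowerSeries.coeff_mk]
    cases β with
    | zero =>
        rw [qq, PowerSeries.coeff_zero_eq_constantCoeff, map_mul,
          PowerSeries.constantCoeff_X, zero_mul, zero_add, if_pos rfl,
          esymm_zero, map_one, one_mul]
        refine PowerSeries.ext fun α => ?_
        rw [map_sub]
        cases α with
        | zero =>
            rw [PowerSeries.coeff_zero_eq_constantCoeff, map_mul,
              PowerSeries.constantCoeff_X, zero_mul, Hin]
            simp [PowerSeries.constantCoeff_mk, hsymm_zero]
        | succ k =>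
            rw [PowerSeries.coeff_succ_X_mul, PowerSeries.coeff_mk, hook_zero,
              PowerSeries.coeff_one, if_neg (Nat.succ_ne_zero k), sub_zero, Hin,
              PowerSeries.coeff_mk]
    | succ n =>
        rw [qq, PowerSeries.coeff_succ_X_mul, PowerSeries.coeff_mk,
          if_neg (Nat.succ_ne_zero n), sub_zero]
        refine PowerSeries.ext fun α => ?_
        rw [map_add, PowerSeries.coeff_C_mul, Hin, PowerSeries.coeff_mk]
        cases α with
        | zero =>
            rw [PowerSeries.coeff_zero_eq_constantCoeff, map_mul,
              PowerSeries.constantCoeff_X, zero_mul, add_zero]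
            rw [show (PowerSeries.constantCoeff (R := MvPolynomial σ ℚ))
                (PowerSeries.mk fun n => hsymm σ ℚ n) = hsymm σ ℚ 0 from rfl]
            rw [hook_col, hsymm_zero, mul_one]
        | succ k =>
            rw [PowerSeries.coeff_succ_X_mul, PowerSeries.coeff_mk, PowerSeries.coeff_mk,
              hook_rec, mul_comm]
  calc (qq σ + zz σ) * Eseries σ * Zprod σ
      = (Qprod σ * PowerSeries.C (R := PowerSeries (MvPolynomial σ ℚ)) (Hin σ) - 1) *
          Zprod σ := by rw [key]
    _ = Qprod σ * (PowerSeries.C (R := PowerSeries (MvPolynomial σ ℚ)) (Hin σ) *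
          PowerSeries.C (R := PowerSeries (MvPolynomial σ ℚ)) (Zin σ)) - Zprod σ := by
        rw [Zprod_eq]; ring
    _ = Qprod σ - Zprod σ := by
        rw [← map_mul, mul_comm (Hin σ), Zin_mul_Hin, map_one, mul_one]
end
end

section
/- Let m ≥ 0 and w = t_{a_1 b_1} ⋯ t_{a_m b_m} in S_n. If the iterated divided difference ∂_{a_1 b_1} ⋯ ∂_{a_m b_m} applied to Q(x_A)/Z(x_B) is nonzero for some subsets A ⊆ B of [n], then the set of non-fixed points of w equals {a_1, b_1, ..., a_m, b_m}. -/
noncomputable section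

open MvPolynomial

/-- The polynomial ring `ℚ[x_1,…,x_n,q,z]`:
`Sum.inl i` is the variable `x_i`, `Sum.inr 0` is `q`, `Sum.inr 1` is `z`. -/
abbrev Rng (n : ℕ) := MvPolynomial (Fin n ⊕ Fin 2) ℚ

/-- The field of rational functions in `x_1,…,x_n, q, z` over `ℚ`. -/
abbrev F (n : ℕ) := FractionRing (Rng n)

/-- The variable `x_i`. -/
def XF (n : ℕ) (i : Fin n) : F n := algebraMap (Rng n) (F n) (X (Sum.inl i))

/-- The variable `q`. -/
def qF (n : ℕ) : F n := algebraMap (Rng n) (F n) (X (Sum.inr 0))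

/-- The variable `z`. -/
def zF (n : ℕ) : F n := algebraMap (Rng n) (F n) (X (Sum.inr 1))

/-- The field automorphism `t_{ab}` exchanging the variables `x_a` and `x_b`. -/
def swapVars (n : ℕ) (a b : Fin n) : F n ≃+* F n :=
  IsFractionRing.ringEquivOfRingEquiv
    ((renameEquiv ℚ ((Equiv.swap a b).sumCongr (Equiv.refl (Fin 2)))).toRingEquiv)

/-- The divided difference operator `∂_{ab} f = (f − t_{ab} f)/(x_a − x_b)`. -/
def dd (n : ℕ) (a b : Fin n) (f : F n) : F n :=
  (f - swapVars n a b f) / (XF n a - XF n b)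

/-- `Q(x_A) = ∏_{a'∈A} (1 + q x_{a'})`. -/
def Qp (n : ℕ) (A : Finset (Fin n)) : F n := ∏ i ∈ A, (1 + qF n * XF n i)

/-- `Z(x_B) = ∏_{b'∈B} (1 − z x_{b'})`. -/
def Zp (n : ℕ) (B : Finset (Fin n)) : F n := ∏ i ∈ B, (1 - zF n * XF n i)


set_option maxHeartbeats 1600000
variable {n : ℕ}

lemma swapVars_algebraMap (a b : Fin n) (p : Rng n) :
    swapVars n a b (algebraMap (Rng n) (F n) p) =
      algebraMap (Rng n) (F n)
        (rename ((Equiv.swap a b).sumCongr (Equiv.refl (Fin 2))) p) := by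
  unfold swapVars
  exact IsFractionRing.ringEquivOfRingEquiv_algebraMap _ p

lemma swapVars_XF (a b i : Fin n) :
    swapVars n a b (XF n i) = XF n (Equiv.swap a b i) := by
  simp only [XF, swapVars_algebraMap, rename_X]
  congr 1

lemma swapVars_qF (a b : Fin n) : swapVars n a b (qF n) = qF n := by
  simp only [qF, swapVars_algebraMap, rename_X]
  congr 1

lemma swapVars_zF (a b : Fin n) : swapVars n a b (zF n) = zF n := by
  simp only [zF, swapVars_algebraMap, rename_X]
  congr 1

lemma mF_ne (i : Fin n) : (1 : F n) - zF n * XF n i ≠ 0 := by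
  have : ((1 : Rng n) - X (Sum.inr 1) * X (Sum.inl i)) ≠ 0 := by
    intro hh
    have := congrArg constantCoeff hh
    simp at this
  have h2 : (1 : F n) - zF n * XF n i
      = algebraMap (Rng n) (F n) (1 - X (Sum.inr 1) * X (Sum.inl i)) := by
    simp [zF, XF]
  rw [h2]
  exact fun hc => this (IsFractionRing.injective (Rng n) (F n) (by simpa using hc))

lemma xF_sub_ne {a b : Fin n} (hab : a ≠ b) : XF n a - XF n b ≠ 0 := by
  have : (X (Sum.inl a) - X (Sum.inl b) : Rng n) ≠ 0 := by
    intro hh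
    have := sub_eq_zero.mp hh
    exact hab (by simpa using (X_injective this))
  have h2 : XF n a - XF n b
      = algebraMap (Rng n) (F n) (X (Sum.inl a) - X (Sum.inl b)) := by simp [XF]
  rw [h2]
  exact fun hc => this (IsFractionRing.injective (Rng n) (F n) (by simpa using hc))

/-- factor of given type at variable `i` -/
def fac (n : ℕ) (t : Fin 3) (i : Fin n) : F n :=
  if t = 0 then (1 + qF n * XF n i) / (1 - zF n * XF n i)
  else if t = 1 then 1 / (1 - zF n * XF n i) else 1

def Fprod (n : ℕ) (τ : Fin n → Fin 3) : F n := ∏ i, fac n (τ i) i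

lemma swapVars_fac (a b : Fin n) (t : Fin 3) (i : Fin n) :
    swapVars n a b (fac n t i) = fac n t (Equiv.swap a b i) := by
  unfold fac
  split_ifs <;>
    simp [map_div₀, map_add, map_sub, map_mul, map_one, swapVars_XF, swapVars_qF, swapVars_zF]

lemma swapVars_Fprod (a b : Fin n) (τ : Fin n → Fin 3) :
    swapVars n a b (Fprod n τ) = Fprod n (τ ∘ Equiv.swap a b) := by
  unfold Fprod
  rw [map_prod]
  rw [← Equiv.prod_comp (Equiv.swap a b) (fun i => fac n ((τ ∘ Equiv.swap a b) i) i)]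
  refine Finset.prod_congr rfl fun i _ => ?_
  rw [swapVars_fac]
  simp

lemma dd_self (a : Fin n) (f : F n) : dd n a a f = 0 := by
  simp [dd]

lemma dd_zero (a b : Fin n) : dd n a b 0 = 0 := by
  simp [dd]

lemma dd_mul_left (a b : Fin n) (c f : F n) (hc : swapVars n a b c = c) :
    dd n a b (c * f) = c * dd n a b f := by
  simp only [dd, map_mul, hc, ← mul_sub, mul_div_assoc]

lemma dd_mul_right (a b : Fin n) (f R : F n) (hR : swapVars n a b R = R) :
    dd n a b (f * R) = dd n a b f * R := by
  rw [mul_comm f R, dd_mul_left a b R f hR, mul_comm]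

lemma dd_of_swap_eq (a b : Fin n) (f : F n) (hf : swapVars n a b f = f) :
    dd n a b f = 0 := by
  simp [dd, hf]

lemma swapVars_pair (a b : Fin n) (s t : Fin 3) :
    swapVars n a b (fac n s a * fac n t b) = fac n s b * fac n t a := by
  rw [map_mul, swapVars_fac, swapVars_fac, Equiv.swap_apply_left, Equiv.swap_apply_right]

lemma dd_fac_fac (a b : Fin n) (hab : a ≠ b) (s t : Fin 3) (hst : s ≠ t) :
    ∃ c : F n, (∀ a' b' : Fin n, swapVars n a' b' c = c) ∧
      dd n a b (fac n s a * fac n t b) = c * (fac n 1 a * fac n 1 b) := by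
  have hma := mF_ne (n := n) a
  have hmb := mF_ne (n := n) b
  have hd := xF_sub_ne hab
  have hq : ∀ a' b' : Fin n, swapVars n a' b' (qF n) = qF n := swapVars_qF
  have hz : ∀ a' b' : Fin n, swapVars n a' b' (zF n) = zF n := swapVars_zF
  fin_cases s <;> fin_cases t <;> simp_all <;> unfold dd <;> rw [swapVars_pair]  <;>
    simp only [fac, Fin.reduceEq, reduceIte]
  · exact ⟨qF n, hq, by rw [div_eq_iff hd]; field_simp; ring⟩
  · exact ⟨qF n + zF n, fun a' b' => by rw [map_add, hq, hz], by
      rw [div_eq_iff hd]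
      have ha' : (1 : F n) - XF n a * zF n ≠ 0 := by rwa [mul_comm]
      have hb' : (1 : F n) - XF n b * zF n ≠ 0 := by rwa [mul_comm]
      field_simp; ring⟩
  · exact ⟨-qF n, fun a' b' => by rw [map_neg, hq], by rw [div_eq_iff hd]; field_simp; ring⟩
  · exact ⟨zF n, hz, by rw [div_eq_iff hd]; field_simp; ring⟩
  · exact ⟨-(qF n + zF n), fun a' b' => by rw [map_neg, map_add, hq, hz], by
      rw [div_eq_iff hd]
      have ha' : (1 : F n) - XF n a * zF n ≠ 0 := by rwa [mul_comm]
      have hb' : (1 : F n) - XF n b * zF n ≠ 0 := by rwa [mul_comm]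
      field_simp; ring⟩
  · exact ⟨-zF n, fun a' b' => by rw [map_neg, hz], by rw [div_eq_iff hd]; field_simp; ring⟩

lemma comp_swap_eq (a b : Fin n) (τ : Fin n → Fin 3) (h : τ a = τ b) :
    τ ∘ (Equiv.swap a b) = τ := by
  funext i
  rcases eq_or_ne i a with rfl | hia
  · simpa [Equiv.swap_apply_left] using h.symm
  · rcases eq_or_ne i b with rfl | hib
    · simpa [Equiv.swap_apply_right] using h
    · simp [Equiv.swap_apply_of_ne_of_ne hia hib]

lemma dd_Fprod (a b : Fin n) (hab : a ≠ b) (τ : Fin n → Fin 3) (hτ : τ a ≠ τ b) :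
    ∃ c : F n, (∀ a' b' : Fin n, swapVars n a' b' c = c) ∧
      dd n a b (Fprod n τ) =
        c * Fprod n (Function.update (Function.update τ a 1) b 1) := by
  obtain ⟨c, hc, hdd⟩ := dd_fac_fac a b hab (τ a) (τ b) hτ
  set s : Finset (Fin n) := (Finset.univ.erase a).erase b with hs
  have hbmem : b ∈ Finset.univ.erase a := Finset.mem_erase.2 ⟨hab.symm, Finset.mem_univ b⟩
  have hR : ∀ (σ : Fin n → Fin 3), swapVars n a b (∏ i ∈ s, fac n (σ i) i) = ∏ i ∈ s, fac n (σ i) i := by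
    intro σ
    rw [map_prod]
    refine Finset.prod_congr rfl fun i hi => ?_
    obtain ⟨hib, hia, -⟩ : i ≠ b ∧ i ≠ a ∧ True := by
      simp only [hs, Finset.mem_erase] at hi; exact ⟨hi.1, hi.2.1, trivial⟩
    rw [swapVars_fac, Equiv.swap_apply_of_ne_of_ne hia hib]
  have hsplit : ∀ (σ : Fin n → Fin 3),
      Fprod n σ = (fac n (σ a) a * fac n (σ b) b) * ∏ i ∈ s, fac n (σ i) i := by
    intro σ
    rw [Fprod, ← Finset.mul_prod_erase Finset.univ _ (Finset.mem_univ a),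
      ← Finset.mul_prod_erase (Finset.univ.erase a) _ hbmem, ← hs, mul_assoc]
  set τ' := Function.update (Function.update τ a 1) b 1 with hτ'
  have hτ'a : τ' a = 1 := by
    rw [hτ', Function.update_of_ne hab, Function.update_self]
  have hτ'b : τ' b = 1 := by rw [hτ', Function.update_self]
  have hτ'i : ∀ i ∈ s, τ' i = τ i := by
    intro i hi
    simp only [hs, Finset.mem_erase] at hi
    rw [hτ', Function.update_of_ne hi.1, Function.update_of_ne hi.2.1]
  refine ⟨c, hc, ?_⟩
  rw [hsplit τ, dd_mul_right _ _ _ _ (hR τ), hdd, hsplit τ', hτ'a, hτ'b, mul_assoc]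
  congr 2
  exact (Finset.prod_congr rfl fun i hi => by rw [hτ'i i hi]).symm

/-- the letters appearing in the list -/
def lettersF (l : List (Fin n × Fin n)) : Finset (Fin n) :=
  l.foldr (fun p s => insert p.1 (insert p.2 s)) ∅

lemma mem_lettersF (i : Fin n) (l : List (Fin n × Fin n)) :
    i ∈ lettersF l ↔ ∃ p ∈ l, p.1 = i ∨ p.2 = i := by
  induction l with
  | nil => simp [lettersF]
  | cons p l ih =>
    simp only [lettersF, List.foldr_cons] at ih ⊢
    simp only [Finset.mem_insert, ih, List.mem_cons]
    constructor
    · rintro (rfl | rfl | ⟨p', hp', hor⟩)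
      · exact ⟨p, Or.inl rfl, Or.inl rfl⟩
      · exact ⟨p, Or.inl rfl, Or.inr rfl⟩
      · exact ⟨p', Or.inr hp', hor⟩
    · rintro ⟨p', (rfl | hp'), hor⟩
      · rcases hor with rfl | rfl
        · exact Or.inl rfl
        · exact Or.inr (Or.inl rfl)
      · exact Or.inr (Or.inr ⟨p', hp', hor⟩)

/-- the type function -/
def τfun (A B L : Finset (Fin n)) : Fin n → Fin 3 :=
  fun i => if i ∈ L then 1 else if i ∈ A then 0 else if i ∈ B then 1 else 2

lemma base_eq (A B : Finset (Fin n)) (hAB : A ⊆ B) :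
    Qp n A / Zp n B = Fprod n (τfun A B ∅) := by
  have hq : Qp n A = ∏ i, (if i ∈ A then 1 + qF n * XF n i else 1) := by
    rw [Finset.prod_ite_mem, Finset.univ_inter, Qp]
  have hz : Zp n B = ∏ i, (if i ∈ B then 1 - zF n * XF n i else 1) := by
    rw [Finset.prod_ite_mem, Finset.univ_inter, Zp]
  rw [hq, hz, div_eq_mul_inv, ← Finset.prod_inv_distrib, ← Finset.prod_mul_distrib, Fprod]
  refine Finset.prod_congr rfl fun i _ => ?_
  simp only [τfun, Finset.notMem_empty, if_false]
  by_cases hA : i ∈ A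
  · rw [if_pos hA, if_pos (hAB hA), if_pos hA]
    simp [fac, div_eq_mul_inv]
  · rw [if_neg hA, if_neg hA]
    by_cases hB : i ∈ B
    · rw [if_pos hB, if_pos hB]
      simp [fac, div_eq_mul_inv]
    · rw [if_neg hB, if_neg hB]
      simp [fac]

lemma τfun_insert (A B L : Finset (Fin n)) (a b : Fin n) :
    τfun A B (insert a (insert b L)) =
      Function.update (Function.update (τfun A B L) a 1) b 1 := by
  funext i
  rcases eq_or_ne i b with rfl | hib
  · simp [τfun, Function.update_self]
  · rw [Function.update_of_ne hib]
    rcases eq_or_ne i a with rfl | hia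
    · simp [τfun, Function.update_self]
    · rw [Function.update_of_ne hia]
      simp only [τfun, Finset.mem_insert, hia, hib, false_or]

lemma moved_swap (w : Equiv.Perm (Fin n)) (a b : Fin n) (hab : a ≠ b) (hb : w b = b)
    (i : Fin n) : (Equiv.swap a b * w) i ≠ i ↔ (i = a ∨ i = b ∨ w i ≠ i) := by
  rw [Equiv.Perm.mul_apply]
  constructor
  · intro hne
    by_contra hcon
    push_neg at hcon
    obtain ⟨hia, hib, hwi⟩ := hcon
    rw [hwi, Equiv.swap_apply_of_ne_of_ne hia hib] at hne
    exact hne rfl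
  · rintro (rfl | rfl | hw) <;> intro hfix
    · have h1 : w i = Equiv.swap i b i := by
        have := congrArg (Equiv.swap i b) hfix
        rwa [Equiv.swap_apply_self] at this
      rw [Equiv.swap_apply_left] at h1
      exact hab (w.injective (h1.trans hb.symm))
    · rw [hb, Equiv.swap_apply_right] at hfix
      exact hab hfix
    · have h1 : w i = Equiv.swap a b i := by
        have := congrArg (Equiv.swap a b) hfix
        rwa [Equiv.swap_apply_self] at this
      rcases eq_or_ne i a with rfl | hia
      · rw [Equiv.swap_apply_left] at h1
        exact hab (w.injective (h1.trans hb.symm))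
      · rcases eq_or_ne i b with rfl | hib
        · exact hw hb
        · rw [Equiv.swap_apply_of_ne_of_ne hia hib] at h1
          exact hw h1

lemma key (A B : Finset (Fin n)) (hAB : A ⊆ B) (l : List (Fin n × Fin n))
    (h : l.foldr (fun p f => dd n p.1 p.2 f) (Qp n A / Zp n B) ≠ 0) :
    (∀ i, ((l.map fun p => Equiv.swap p.1 p.2).prod i ≠ i ↔ i ∈ lettersF l)) ∧
      ∃ c : F n, (∀ a b, swapVars n a b c = c) ∧
        l.foldr (fun p f => dd n p.1 p.2 f) (Qp n A / Zp n B)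
          = c * Fprod n (τfun A B (lettersF l)) := by
  induction l with
  | nil =>
    refine ⟨fun i => by simp [lettersF], 1, fun a b => map_one _, ?_⟩
    simpa [lettersF] using base_eq A B hAB
  | cons p l ih =>
    obtain ⟨a, b⟩ := p
    simp only [List.foldr_cons] at h ⊢
    have hl : l.foldr (fun p f => dd n p.1 p.2 f) (Qp n A / Zp n B) ≠ 0 := by
      intro e; rw [e] at h; exact h (dd_zero a b)
    obtain ⟨hmov, c, hc, heq⟩ := ih hl
    have hab : a ≠ b := by
      rintro rfl; exact h (dd_self a _)
    set L := lettersF l with hL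
    have hτ : τfun A B L a ≠ τfun A B L b := by
      intro he
      apply h
      rw [heq, dd_mul_left _ _ _ _ (hc a b), dd_of_swap_eq, mul_zero]
      rw [swapVars_Fprod, comp_swap_eq a b _ he]
    have hfresh : a ∉ L ∨ b ∉ L := by
      by_contra hcon
      push_neg at hcon
      exact hτ (by simp [τfun, hcon.1, hcon.2])
    have hlet : lettersF ((a, b) :: l) = insert a (insert b L) := rfl
    constructor
    · intro i
      rw [List.map_cons, List.prod_cons, hlet, Finset.mem_insert, Finset.mem_insert]
      rcases hfresh with hfa | hfb
      · have hwa : (l.map fun p => Equiv.swap p.1 p.2).prod a = a := by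
          by_contra hne; exact hfa ((hmov a).1 hne)
        rw [Equiv.swap_comm, moved_swap _ b a hab.symm hwa i, hmov i]
        tauto
      · have hwb : (l.map fun p => Equiv.swap p.1 p.2).prod b = b := by
          by_contra hne; exact hfb ((hmov b).1 hne)
        rw [moved_swap _ a b hab hwb i, hmov i]
    · obtain ⟨c', hc', hdd⟩ := dd_Fprod a b hab _ hτ
      refine ⟨c * c', fun a' b' => by rw [map_mul, hc, hc'], ?_⟩
      rw [heq, dd_mul_left _ _ _ _ (hc a b), hdd, hlet, τfun_insert, mul_assoc]


/-- If `w = t_{a₁b₁} ⋯ t_{a_m b_m}` and the iterated divided difference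
`∂_{a₁b₁} ⋯ ∂_{a_m b_m} (Q(x_A)/Z(x_B))` is nonzero for some `A ⊆ B ⊆ [n]`,
then the set of non-fixed points of `w` is exactly `{a₁,b₁,…,a_m,b_m}`. -/
theorem stmt4 (n : ℕ) (l : List (Fin n × Fin n)) (A B : Finset (Fin n)) (hAB : A ⊆ B)
    (h : l.foldr (fun p f => dd n p.1 p.2 f) (Qp n A / Zp n B) ≠ 0) :
    {i : Fin n | (l.map fun p => Equiv.swap p.1 p.2).prod i ≠ i} =
      {i : Fin n | ∃ p ∈ l, p.1 = i ∨ p.2 = i} := by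
  obtain ⟨hmov, -⟩ := key A B hAB l h
  ext i
  simp only [Set.mem_setOf_eq]
  rw [hmov i, mem_lettersF]
end
end

section
/- The nonhomogeneous Demazure–Lusztig operators T_i = −s_i + ∂_i on the polynomial ring ℚ[x_1,...,x_n] satisfy: T_i² = id, T_i T_j = T_j T_i for |i−j| ≥ 2, and T_i T_{i+1} T_i = T_{i+1} T_i T_{i+1}, for all admissible indices i, j in [n−1]. -/
noncomputable section

open MvPolynomial

/-- The field of rational functions `ℚ(x_1,…,x_n)`. -/
abbrev F5 (n : ℕ) := FractionRing (MvPolynomial (Fin n) ℚ)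

/-- The field automorphism exchanging the variables `x_a` and `x_b`. -/
def sAut (n : ℕ) (a b : Fin n) : F5 n ≃+* F5 n :=
  IsFractionRing.ringEquivOfRingEquiv ((renameEquiv ℚ (Equiv.swap a b)).toRingEquiv)

/-- The variable `x_i`. -/
def Xv (n : ℕ) (i : Fin n) : F5 n := algebraMap (MvPolynomial (Fin n) ℚ) (F5 n) (X i)

/-- The BGG Demazure operator `∂_{ab} f = (f − s_{ab} f)/(x_a − x_b)`. -/
def dOp (n : ℕ) (a b : Fin n) (f : F5 n) : F5 n :=
  (f - sAut n a b f) / (Xv n a - Xv n b)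

/-- The nonhomogeneous Demazure–Lusztig operator `T = −s + ∂`. -/
def TOp (n : ℕ) (a b : Fin n) (f : F5 n) : F5 n :=
  - sAut n a b f + dOp n a b f

/-- `T_i` for an adjacent index `i ∈ [n−1]` (0-indexed: swaps `x_i, x_{i+1}`). -/
def Ti (n i : ℕ) (hi : i + 1 < n) : F5 n → F5 n :=
  TOp n ⟨i, Nat.lt_of_succ_lt hi⟩ ⟨i + 1, hi⟩

/-- The embedding `ℚ[x_1,…,x_n] → ℚ(x_1,…,x_n)`. -/
def emb (n : ℕ) (f : MvPolynomial (Fin n) ℚ) : F5 n :=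
  algebraMap (MvPolynomial (Fin n) ℚ) (F5 n) f

/-! ### Auxiliary abstract lemmas over an arbitrary field -/

section Abstract
variable {K : Type*} [Field K]

/-- Generic operator `Th s u f = -s f + (f - s f)/u`. -/
def Th (s : K ≃+* K) (u : K) (f : K) : K := - s f + (f - s f) / u

lemma Th_frac0 (s : K ≃+* K) (u f : K) (hu : u ≠ 0) :
    Th s u f = (f - s f * (u + 1)) / u := by
  rw [Th]; field_simp; ring

lemma Th_frac (s : K ≃+* K) (u N v : K) (hu : u ≠ 0) (hv : v ≠ 0) (hsv : s v ≠ 0) :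
    Th s u (N / v) = (N * s v - s N * v * (u + 1)) / (u * v * s v) := by
  rw [Th, map_div₀]; field_simp; ring

lemma Th_quad (s : K ≃+* K) (u : K) (hs : ∀ x, s (s x) = x) (hu : s u = -u)
    (hu0 : u ≠ 0) (f : K) : Th s u (Th s u f) = f := by
  rw [Th_frac0 s u f hu0, Th_frac s u _ u hu0 hu0 (by rw [hu]; simpa using hu0),
    div_eq_iff (by simp [hu, hu0])]
  simp only [map_sub, map_mul, map_add, map_one, hs, hu]
  ring

lemma Th_comm (s t : K ≃+* K) (u v : K)
    (hst : ∀ x, s (t x) = t (s x)) (hsv : s v = v) (htu : t u = u) (f : K) :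
    Th s u (Th t v f) = Th t v (Th s u f) := by
  simp only [Th, map_add, map_neg, map_sub, map_div₀, hst, hsv, htu]
  ring

set_option maxHeartbeats 1600000 in
lemma Th_braid (s t : K ≃+* K) (a b c : K)
    (hs : ∀ x, s (s x) = x) (ht : ∀ x, t (t x) = x)
    (hbr : ∀ x, t (s (t x)) = s (t (s x)))
    (hsa : s a = b) (hsb : s b = a) (hsc : s c = c)
    (hta : t a = a) (htb : t b = c) (htc : t c = b)
    (hab : a ≠ b) (hbc : b ≠ c) (hac : a ≠ c) (f : K) :
    Th s (a - b) (Th t (b - c) (Th s (a - b) f)) =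
      Th t (b - c) (Th s (a - b) (Th t (b - c) f)) := by
  set u := a - b with hu'
  set v := b - c with hv'
  set w := a - c with hw'
  have hu : u ≠ 0 := sub_ne_zero.mpr hab
  have hv : v ≠ 0 := sub_ne_zero.mpr hbc
  have hw : w ≠ 0 := sub_ne_zero.mpr hac
  have hsu : s u = -u := by rw [hu', map_sub, hsa, hsb]; ring
  have hsv : s v = w := by rw [hv', hw', map_sub, hsb, hsc]
  have hsw : s w = v := by rw [hv', hw', map_sub, hsa, hsc]
  have htu : t u = w := by rw [hu', hw', map_sub, hta, htb]
  have htv : t v = -v := by rw [hv', map_sub, htb, htc]; ring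
  have htw : t w = u := by rw [hu', hw', map_sub, hta, htc]
  rw [Th_frac0 s u f hu, Th_frac t v _ u hv hu (htu ▸ hw),
      Th_frac s u _ (v * u * t u) hu (by simp [htu, hv, hu, hw]) (by
        simp [map_mul, hsv, hsu, htu, hsw, hv, hu, hw]),
      Th_frac0 t v f hv, Th_frac s u _ v hu hv (hsv ▸ hw),
      Th_frac t v _ (u * v * s v) hv (by simp [hsv, hv, hu, hw]) (by
        simp [map_mul, htu, htv, hsv, htw, hv, hu, hw])]
  rw [div_eq_div_iff (by simp [map_mul, hsv, hsu, htu, hsw, hv, hu, hw])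
      (by simp [map_mul, htu, htv, hsv, htw, hv, hu, hw])]
  simp only [map_mul, map_sub, map_add, map_one, map_neg, hs, ht, hsu, hsv, hsw, htu, htv,
    htw, hbr]
  ring

end Abstract

/-! ### Concrete facts about `sAut` -/

lemma sAut_emb (n : ℕ) (a b : Fin n) (f : MvPolynomial (Fin n) ℚ) :
    sAut n a b (emb n f) = emb n (rename (Equiv.swap a b) f) := by
  simp [sAut, emb, IsFractionRing.ringEquivOfRingEquiv_algebraMap]

lemma sAut_Xv (n : ℕ) (a b c : Fin n) :
    sAut n a b (Xv n c) = Xv n (Equiv.swap a b c) := by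
  have := sAut_emb n a b (X c)
  simpa [Xv, emb, rename_X] using this

/-- Extensionality principle for ring homomorphisms on `F5 n`. -/
lemma autext (n : ℕ) (g h : F5 n →+* F5 n)
    (H : ∀ p, g (emb n p) = h (emb n p)) : ∀ x, g x = h x := by
  have : g = h := IsLocalization.ringHom_ext (nonZeroDivisors (MvPolynomial (Fin n) ℚ))
    (RingHom.ext H)
  intro x; rw [this]

lemma sAut_invol (n : ℕ) (a b : Fin n) (x : F5 n) :
    sAut n a b (sAut n a b x) = x := by
  refine autext n ((sAut n a b).toRingHom.comp (sAut n a b).toRingHom) (RingHom.id _) ?_ x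
  intro p
  simp only [RingHom.coe_comp, Function.comp_apply, RingEquiv.toRingHom_eq_coe,
    RingEquiv.coe_toRingHom, RingHom.id_apply]
  rw [sAut_emb, sAut_emb, rename_rename]
  have : ⇑(Equiv.swap a b) ∘ ⇑(Equiv.swap a b) = id := by
    ext y; simp
  rw [this, rename_id, AlgHom.id_apply]

lemma sAut_comm (n : ℕ) (a b c d : Fin n)
    (h1 : a ≠ c) (h2 : a ≠ d) (h3 : b ≠ c) (h4 : b ≠ d) (x : F5 n) :
    sAut n a b (sAut n c d x) = sAut n c d (sAut n a b x) := by
  have key : ⇑(Equiv.swap a b) ∘ ⇑(Equiv.swap c d) = ⇑(Equiv.swap c d) ∘ ⇑(Equiv.swap a b) := by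
    ext y
    simp only [Function.comp_apply, Equiv.swap_apply_def]
    split_ifs <;> simp_all
  refine autext n ((sAut n a b).toRingHom.comp (sAut n c d).toRingHom)
    ((sAut n c d).toRingHom.comp ((sAut n a b).toRingHom)) ?_ x
  intro p
  simp only [RingHom.coe_comp, Function.comp_apply, RingEquiv.toRingHom_eq_coe,
    RingEquiv.coe_toRingHom]
  rw [sAut_emb, sAut_emb, sAut_emb, sAut_emb, rename_rename, rename_rename, key]

lemma sAut_braid (n : ℕ) (a b c : Fin n) (hab : a ≠ b) (hbc : b ≠ c) (hac : a ≠ c) (x : F5 n) :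
    sAut n b c (sAut n a b (sAut n b c x)) = sAut n a b (sAut n b c (sAut n a b x)) := by
  have key : ⇑(Equiv.swap b c) ∘ ⇑(Equiv.swap a b) ∘ ⇑(Equiv.swap b c)
      = ⇑(Equiv.swap a b) ∘ ⇑(Equiv.swap b c) ∘ ⇑(Equiv.swap a b) := by
    ext y
    simp only [Function.comp_apply, Equiv.swap_apply_def]
    split_ifs <;> simp_all
  refine autext n
    ((sAut n b c).toRingHom.comp ((sAut n a b).toRingHom.comp (sAut n b c).toRingHom))
    ((sAut n a b).toRingHom.comp ((sAut n b c).toRingHom.comp (sAut n a b).toRingHom)) ?_ x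
  intro p
  simp only [RingHom.coe_comp, Function.comp_apply, RingEquiv.toRingHom_eq_coe,
    RingEquiv.coe_toRingHom]
  rw [sAut_emb, sAut_emb, sAut_emb, sAut_emb, sAut_emb, sAut_emb,
    rename_rename, rename_rename, rename_rename, rename_rename]
  have key' : ((⇑(Equiv.swap b c) ∘ ⇑(Equiv.swap a b)) ∘ ⇑(Equiv.swap b c))
      = ((⇑(Equiv.swap a b) ∘ ⇑(Equiv.swap b c)) ∘ ⇑(Equiv.swap a b)) := by
    funext y; simpa using congrFun key y
  rw [key']

lemma Xv_ne (n : ℕ) (a b : Fin n) (h : a ≠ b) : Xv n a ≠ Xv n b := by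
  intro hh
  exact h (MvPolynomial.X_injective
    (IsFractionRing.injective (MvPolynomial (Fin n) ℚ) (F5 n) hh))

lemma TOp_eq_Th (n : ℕ) (a b : Fin n) (f : F5 n) :
    TOp n a b f = Th (sAut n a b) (Xv n a - Xv n b) f := rfl

/-- The operators `T_i = −s_i + ∂_i` on `ℚ[x_1,…,x_n]` satisfy `T_i² = id`,
`T_i T_j = T_j T_i` for `|i−j| ≥ 2`, and the braid relation
`T_i T_{i+1} T_i = T_{i+1} T_i T_{i+1}`, for all admissible indices. -/
theorem stmt5 (n : ℕ) :
    (∀ (i : ℕ) (hi : i + 1 < n) (f : MvPolynomial (Fin n) ℚ),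
        Ti n i hi (Ti n i hi (emb n f)) = emb n f) ∧
      (∀ (i j : ℕ) (hi : i + 1 < n) (hj : j + 1 < n),
        (i + 2 ≤ j ∨ j + 2 ≤ i) →
          ∀ f : MvPolynomial (Fin n) ℚ,
            Ti n i hi (Ti n j hj (emb n f)) = Ti n j hj (Ti n i hi (emb n f))) ∧
      (∀ (i : ℕ) (hi : i + 2 < n) (f : MvPolynomial (Fin n) ℚ),
        Ti n i (Nat.lt_of_succ_lt hi) (Ti n (i + 1) hi
            (Ti n i (Nat.lt_of_succ_lt hi) (emb n f))) =
          Ti n (i + 1) hi (Ti n i (Nat.lt_of_succ_lt hi)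
            (Ti n (i + 1) hi (emb n f)))) := by
  refine ⟨?_, ?_, ?_⟩
  · -- quadratic relation
    intro i hi f
    set a : Fin n := ⟨i, Nat.lt_of_succ_lt hi⟩ with ha
    set b : Fin n := ⟨i + 1, hi⟩ with hb
    have hab : a ≠ b := by simp [ha, hb, Fin.ext_iff]
    show TOp n a b (TOp n a b (emb n f)) = emb n f
    rw [TOp_eq_Th, TOp_eq_Th]
    refine Th_quad _ _ (sAut_invol n a b) ?_ (sub_ne_zero.mpr (Xv_ne n a b hab)) _
    rw [map_sub, sAut_Xv, sAut_Xv, Equiv.swap_apply_left, Equiv.swap_apply_right]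
    ring
  · -- commutation
    intro i j hi hj hij f
    set a : Fin n := ⟨i, Nat.lt_of_succ_lt hi⟩ with ha
    set b : Fin n := ⟨i + 1, hi⟩ with hb
    set c : Fin n := ⟨j, Nat.lt_of_succ_lt hj⟩ with hc
    set d : Fin n := ⟨j + 1, hj⟩ with hd
    have h1 : a ≠ c := by simp only [ha, hc, ne_eq, Fin.mk.injEq]; omega
    have h2 : a ≠ d := by simp only [ha, hd, ne_eq, Fin.mk.injEq]; omega
    have h3 : b ≠ c := by simp only [hb, hc, ne_eq, Fin.mk.injEq]; omega
    have h4 : b ≠ d := by simp only [hb, hd, ne_eq, Fin.mk.injEq]; omega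
    show TOp n a b (TOp n c d (emb n f)) = TOp n c d (TOp n a b (emb n f))
    rw [TOp_eq_Th, TOp_eq_Th, TOp_eq_Th, TOp_eq_Th]
    refine Th_comm _ _ _ _ (fun x => sAut_comm n a b c d h1 h2 h3 h4 x) ?_ ?_ _
    · rw [map_sub, sAut_Xv, sAut_Xv, Equiv.swap_apply_of_ne_of_ne h1.symm h3.symm,
        Equiv.swap_apply_of_ne_of_ne h2.symm h4.symm]
    · rw [map_sub, sAut_Xv, sAut_Xv, Equiv.swap_apply_of_ne_of_ne h1 h2,
        Equiv.swap_apply_of_ne_of_ne h3 h4]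
  · -- braid relation
    intro i hi f
    set a : Fin n := ⟨i, Nat.lt_of_succ_lt (Nat.lt_of_succ_lt hi)⟩ with ha
    set b : Fin n := ⟨i + 1, Nat.lt_of_succ_lt hi⟩ with hb
    set c : Fin n := ⟨i + 2, hi⟩ with hc
    have hab : a ≠ b := by simp only [ha, hb, ne_eq, Fin.mk.injEq]; omega
    have hbc : b ≠ c := by simp only [hb, hc, ne_eq, Fin.mk.injEq]; omega
    have hac : a ≠ c := by simp only [ha, hc, ne_eq, Fin.mk.injEq]; omega
    show TOp n a b (TOp n b c (TOp n a b (emb n f)))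
        = TOp n b c (TOp n a b (TOp n b c (emb n f)))
    rw [TOp_eq_Th, TOp_eq_Th, TOp_eq_Th, TOp_eq_Th, TOp_eq_Th, TOp_eq_Th]
    refine Th_braid (sAut n a b) (sAut n b c) (Xv n a) (Xv n b) (Xv n c)
      (sAut_invol n a b) (sAut_invol n b c)
      (fun x => sAut_braid n a b c hab hbc hac x) ?_ ?_ ?_ ?_ ?_ ?_
      (Xv_ne n a b hab) (Xv_ne n b c hbc) (Xv_ne n a c hac) (emb n f)
    · rw [sAut_Xv, Equiv.swap_apply_left]
    · rw [sAut_Xv, Equiv.swap_apply_right]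
    · rw [sAut_Xv, Equiv.swap_apply_of_ne_of_ne hac.symm hbc.symm]
    · rw [sAut_Xv, Equiv.swap_apply_of_ne_of_ne hab hac]
    · rw [sAut_Xv, Equiv.swap_apply_left]
    · rw [sAut_Xv, Equiv.swap_apply_right]
end
end

section
/- Suppose u ≠ w in S_n, and suppose there is a path u = w_0 → w_1 → ⋯ → w_m = w in the extended k-Bruhat order with edge labels τ_i = w_{i−1}(a_i) where w_i = w_{i−1} t_{a_i b_i}, a_i ≤ k < b_i. Then min{u(i) : u(i) ≠ w(i)} = min{τ_1, ..., τ_m}; moreover, the index a attaining min{u(i) : u(i) ≠ w(i)} satisfies a ≤ k. -/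
/-- `IsKPath k u l` : starting from `u`, the list of position pairs `l`
describes a path of `k`-edges in the Bruhat graph of `S_n`. -/
def IsKPath {n : ℕ} (k : ℕ) : Equiv.Perm (Fin n) → List (Fin n × Fin n) → Prop
  | _, [] => True
  | u, p :: l => p.1.val < k ∧ k ≤ p.2.val ∧ u p.1 < u p.2 ∧
      IsKPath k (u * Equiv.swap p.1 p.2) l

/-- The labels `τ_i = w_{i-1}(a_i)` of the edges of a path. -/
def pathLabels {n : ℕ} : Equiv.Perm (Fin n) → List (Fin n × Fin n) → List (Fin n)
  | _, [] => []
  | u, p :: l => u p.1 :: pathLabels (u * Equiv.swap p.1 p.2) l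

/-- The endpoint `u · t_{a₁b₁} ⋯ t_{a_m b_m}` of a path starting at `u`. -/
def pathEnd {n : ℕ} (u : Equiv.Perm (Fin n)) (l : List (Fin n × Fin n)) : Equiv.Perm (Fin n) :=
  u * (l.map fun p => Equiv.swap p.1 p.2).prod

lemma pathEnd_nil {n : ℕ} (u : Equiv.Perm (Fin n)) : pathEnd u [] = u := by
  simp [pathEnd]

lemma pathEnd_cons {n : ℕ} (u : Equiv.Perm (Fin n)) (p : Fin n × Fin n)
    (l : List (Fin n × Fin n)) :
    pathEnd u (p :: l) = pathEnd (u * Equiv.swap p.1 p.2) l := by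
  simp [pathEnd, mul_assoc]

/-- Values at positions `< k` weakly increase along a `k`-path. -/
lemma pathEnd_mono {n k : ℕ} : ∀ (l : List (Fin n × Fin n)) (u : Equiv.Perm (Fin n)),
    IsKPath k u l → ∀ i : Fin n, i.val < k → u i ≤ pathEnd u l i := by
  intro l
  induction l with
  | nil => intro u _ i _; rw [pathEnd_nil]
  | cons p l ih =>
      intro u hpath i hi
      obtain ⟨h1, h2, h3, h4⟩ := hpath
      rw [pathEnd_cons]
      refine le_trans ?_ (ih _ h4 i hi)
      by_cases hip : i = p.1
      · subst hip
        rw [Equiv.Perm.mul_apply, Equiv.swap_apply_left]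
        exact le_of_lt h3
      · have hip2 : i ≠ p.2 := fun h => by rw [h] at hi; omega
        rw [Equiv.Perm.mul_apply, Equiv.swap_apply_of_ne_of_ne hip hip2]

/-- (A) A moved position `< k` has its `u`-value among the labels. -/
lemma movedLow_mem_labels {n k : ℕ} : ∀ (l : List (Fin n × Fin n)) (u : Equiv.Perm (Fin n)),
    IsKPath k u l → ∀ i : Fin n, i.val < k → u i ≠ pathEnd u l i →
    u i ∈ pathLabels u l := by
  intro l
  induction l with
  | nil => intro u _ i _ hne; rw [pathEnd_nil] at hne; exact absurd rfl hne
  | cons p l ih =>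
      intro u hpath i hi hne
      obtain ⟨h1, h2, h3, h4⟩ := hpath
      by_cases hip : i = p.1
      · subst hip
        show u p.1 ∈ u p.1 :: pathLabels (u * Equiv.swap p.1 p.2) l
        exact List.mem_cons_self
      · have hip2 : i ≠ p.2 := fun h => by rw [h] at hi; omega
        have heq : (u * Equiv.swap p.1 p.2) i = u i := by
          rw [Equiv.Perm.mul_apply, Equiv.swap_apply_of_ne_of_ne hip hip2]
        rw [pathEnd_cons] at hne
        have := ih (u * Equiv.swap p.1 p.2) h4 i hi (by rw [heq]; exact hne)
        rw [heq] at this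
        show u i ∈ u p.1 :: pathLabels (u * Equiv.swap p.1 p.2) l
        exact List.mem_cons_of_mem _ this

/-- (B) A moved position `≥ k` has some label strictly below its `u`-value. -/
lemma movedHigh_gt_label {n k : ℕ} : ∀ (l : List (Fin n × Fin n)) (u : Equiv.Perm (Fin n)),
    IsKPath k u l → ∀ i : Fin n, k ≤ i.val → u i ≠ pathEnd u l i →
    ∃ τ ∈ pathLabels u l, τ < u i := by
  intro l
  induction l with
  | nil => intro u _ i _ hne; rw [pathEnd_nil] at hne; exact absurd rfl hne
  | cons p l ih =>
      intro u hpath i hi hne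
      obtain ⟨h1, h2, h3, h4⟩ := hpath
      by_cases hip : i = p.2
      · subst hip
        refine ⟨u p.1, ?_, h3⟩
        show u p.1 ∈ u p.1 :: pathLabels (u * Equiv.swap p.1 p.2) l
        exact List.mem_cons_self
      · have hip1 : i ≠ p.1 := fun h => by rw [h] at hi; omega
        have heq : (u * Equiv.swap p.1 p.2) i = u i := by
          rw [Equiv.Perm.mul_apply, Equiv.swap_apply_of_ne_of_ne hip1 hip]
        rw [pathEnd_cons] at hne
        obtain ⟨τ, hτ, hlt⟩ := ih (u * Equiv.swap p.1 p.2) h4 i hi (by rw [heq]; exact hne)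
        rw [heq] at hlt
        refine ⟨τ, ?_, hlt⟩
        show τ ∈ u p.1 :: pathLabels (u * Equiv.swap p.1 p.2) l
        exact List.mem_cons_of_mem _ hτ

/-- (C) Every label dominates the `u`-value of some moved position `< k`. -/
lemma label_ge_moved {n k : ℕ} : ∀ (l : List (Fin n × Fin n)) (u : Equiv.Perm (Fin n)),
    IsKPath k u l → ∀ τ ∈ pathLabels u l,
    ∃ i : Fin n, i.val < k ∧ u i ≠ pathEnd u l i ∧ u i ≤ τ := by
  intro l
  induction l with
  | nil => intro u _ τ hτ; exact absurd hτ (by simp [pathLabels])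
  | cons p l ih =>
      intro u hpath τ hτ
      obtain ⟨h1, h2, h3, h4⟩ := hpath
      have hτ' : τ ∈ u p.1 :: pathLabels (u * Equiv.swap p.1 p.2) l := hτ
      have hkey1 : (u * Equiv.swap p.1 p.2) p.1 = u p.2 := by
        rw [Equiv.Perm.mul_apply, Equiv.swap_apply_left]
      rcases List.mem_cons.mp hτ' with hhead | htail
      · -- τ = u p.1, take i = p.1
        refine ⟨p.1, h1, ?_, le_of_eq hhead.symm⟩
        rw [pathEnd_cons]
        have : u p.2 ≤ pathEnd (u * Equiv.swap p.1 p.2) l p.1 := by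
          have := pathEnd_mono (k := k) l (u * Equiv.swap p.1 p.2) h4 p.1 h1
          rwa [hkey1] at this
        exact ne_of_lt (lt_of_lt_of_le h3 this)
      · obtain ⟨i, hik, hne, hle⟩ := ih (u * Equiv.swap p.1 p.2) h4 τ htail
        rw [pathEnd_cons]
        by_cases hip : i = p.1
        · subst hip
          refine ⟨p.1, h1, ?_, ?_⟩
          · have : u p.2 ≤ pathEnd (u * Equiv.swap p.1 p.2) l p.1 := by
              have := pathEnd_mono (k := k) l (u * Equiv.swap p.1 p.2) h4 p.1 h1
              rwa [hkey1] at this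
            exact ne_of_lt (lt_of_lt_of_le h3 this)
          · rw [hkey1] at hle
            exact le_trans (le_of_lt h3) hle
        · have hip2 : i ≠ p.2 := fun h => by rw [h] at hik; omega
          have heq : (u * Equiv.swap p.1 p.2) i = u i := by
            rw [Equiv.Perm.mul_apply, Equiv.swap_apply_of_ne_of_ne hip hip2]
          rw [heq] at hne hle
          exact ⟨i, hik, hne, hle⟩

/-- For a path from `u` to `w ≠ u` in the extended `k`-Bruhat order,
`min{u(i) : u(i) ≠ w(i)}` equals the minimum of the labels, and the
index attaining `min{u(i) : u(i) ≠ w(i)}` lies among the first `k` positions. -/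
theorem stmt7 (n k : ℕ) (u w : Equiv.Perm (Fin n)) (hne : u ≠ w)
    (l : List (Fin n × Fin n)) (hpath : IsKPath k u l) (hend : pathEnd u l = w) :
    ((Finset.univ.filter fun i : Fin n => u i ≠ w i).image u).min
        = (pathLabels u l).toFinset.min ∧
      ∀ a : Fin n, u a ≠ w a → (∀ i : Fin n, u i ≠ w i → u a ≤ u i) → a.val < k := by
  subst hend
  set w := pathEnd u l with hw
  -- the moved set is nonempty
  have hmoved : ∃ i : Fin n, u i ≠ w i := by
    by_contra h
    push_neg at h
    exact hne (Equiv.ext h)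
  -- l is nonempty, so the labels are nonempty
  have hlne : l ≠ [] := by
    intro h
    have : w = u := by rw [hw, h, pathEnd_nil]
    exact hne this.symm
  have hlabne : pathLabels u l ≠ [] := by
    cases l with
    | nil => exact absurd rfl hlne
    | cons p l => exact List.cons_ne_nil _ _
  set S := (Finset.univ.filter fun i : Fin n => u i ≠ w i).image u with hS
  set T := (pathLabels u l).toFinset with hT
  have hSne : S.Nonempty := by
    obtain ⟨i, hi⟩ := hmoved
    exact ⟨u i, Finset.mem_image_of_mem u (Finset.mem_filter.mpr ⟨Finset.mem_univ i, hi⟩)⟩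
  have hTne : T.Nonempty := by
    rw [hT]
    obtain ⟨x, hx⟩ := List.exists_mem_of_ne_nil _ hlabne
    exact ⟨x, List.mem_toFinset.mpr hx⟩
  constructor
  · rw [← Finset.coe_min' hSne, ← Finset.coe_min' hTne]
    congr 1
    apply le_antisymm
    · -- S.min' ≤ T.min' : use (C) on the minimal label
      have hTmem : T.min' hTne ∈ pathLabels u l := List.mem_toFinset.mp (Finset.min'_mem T hTne)
      obtain ⟨i, _, hine, hile⟩ := label_ge_moved l u hpath _ hTmem
      refine le_trans (Finset.min'_le S (u i) ?_) hile
      exact Finset.mem_image_of_mem u (Finset.mem_filter.mpr ⟨Finset.mem_univ i, hine⟩)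
    · -- T.min' ≤ S.min' : the minimal moved value dominates some label
      have hSmem := Finset.min'_mem S hSne
      obtain ⟨i, hi, hiv⟩ := Finset.mem_image.mp hSmem
      have hine : u i ≠ w i := (Finset.mem_filter.mp hi).2
      rcases lt_or_ge i.val k with hik | hik
      · have := movedLow_mem_labels l u hpath i hik hine
        rw [hiv] at this
        exact Finset.min'_le T _ (List.mem_toFinset.mpr this)
      · obtain ⟨τ, hτ, hlt⟩ := movedHigh_gt_label l u hpath i hik hine
        rw [hiv] at hlt
        exact le_of_lt (lt_of_le_of_lt (Finset.min'_le T τ (List.mem_toFinset.mpr hτ)) hlt)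
  · intro a hane hamin
    by_contra hak
    push_neg at hak
    obtain ⟨τ, hτ, hlt⟩ := movedHigh_gt_label l u hpath a hak hane
    obtain ⟨i, _, hine, hile⟩ := label_ge_moved l u hpath τ hτ
    exact absurd (hamin i hine) (not_le.mpr (lt_of_le_of_lt hile hlt))
end

section
/- Let u = w_0 → w_1 → ⋯ → w_m = w be a path in the extended k-Bruhat order on S_n, with w_i = w_{i−1}·t_{a_i b_i}, a_i ≤ k < b_i. Then {a_1, b_1, ..., a_m, b_m} = {i ∈ [n] : u(i) ≠ w(i)}; more precisely, {a_1,...,a_m} = {a : u(a) < w(a)} and {b_1,...,b_m} = {b : u(b) > w(b)}. -/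
lemma kpath_bounds {n k : ℕ} : ∀ (l : List (Fin n × Fin n)) (u : Equiv.Perm (Fin n)),
    IsKPath k u l → ∀ q ∈ l, q.1.val < k ∧ k ≤ q.2.val
  | [], _, _, q, hq => by simp at hq
  | p :: l, u, h, q, hq => by
    obtain ⟨ha, hb, _, htail⟩ := h
    rcases List.mem_cons.mp hq with rfl | hq
    · exact ⟨ha, hb⟩
    · exact kpath_bounds l _ htail q hq

lemma kpath_mono {n k : ℕ} : ∀ (l : List (Fin n × Fin n)) (u : Equiv.Perm (Fin n)),
    IsKPath k u l → ∀ i : Fin n,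
      (i.val < k → u i ≤ pathEnd u l i) ∧ (k ≤ i.val → pathEnd u l i ≤ u i)
  | [], u, _, i => by simp [pathEnd_nil]
  | p :: l, u, h, i => by
    obtain ⟨ha, hb, huv, htail⟩ := h
    rw [pathEnd_cons]
    have IH := kpath_mono l (u * Equiv.swap p.1 p.2) htail i
    constructor
    · intro hi
      refine le_trans ?_ (IH.1 hi)
      simp only [Equiv.Perm.mul_apply]
      rcases eq_or_ne i p.1 with rfl | h1
      · rw [Equiv.swap_apply_left]; exact le_of_lt huv
      · have h2 : i ≠ p.2 := by rintro rfl; omega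
        rw [Equiv.swap_apply_of_ne_of_ne h1 h2]
    · intro hi
      refine le_trans (IH.2 hi) ?_
      simp only [Equiv.Perm.mul_apply]
      rcases eq_or_ne i p.2 with rfl | h2
      · rw [Equiv.swap_apply_right]; exact le_of_lt huv
      · have h1 : i ≠ p.1 := by rintro rfl; omega
        rw [Equiv.swap_apply_of_ne_of_ne h1 h2]

lemma kpath_first {n k : ℕ} : ∀ (l : List (Fin n × Fin n)) (u : Equiv.Perm (Fin n)),
    IsKPath k u l → ∀ i : Fin n, (∃ p ∈ l, p.1 = i) ↔ u i < pathEnd u l i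
  | [], u, _, i => by simp [pathEnd_nil]
  | p :: l, u, h, i => by
    obtain ⟨ha, hb, huv, htail⟩ := h
    have hmono := kpath_mono (p :: l) u ⟨ha, hb, huv, htail⟩ i
    rw [pathEnd_cons] at hmono ⊢
    have IH := kpath_first l (u * Equiv.swap p.1 p.2) htail i
    constructor
    · rintro ⟨q, hq, rfl⟩
      rcases List.mem_cons.mp hq with rfl | hq
      · have : (u * Equiv.swap q.1 q.2) q.1 = u q.2 := by
          simp [Equiv.Perm.mul_apply]
        calc u q.1 < u q.2 := huv
          _ = (u * Equiv.swap q.1 q.2) q.1 := this.symm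
          _ ≤ _ := (kpath_mono l _ htail q.1).1 ha
      · have hlt := IH.mp ⟨q, hq, rfl⟩
        refine lt_of_le_of_lt ?_ hlt
        have hq1 : q.1.val < k := (kpath_bounds l _ htail q hq).1
        simp only [Equiv.Perm.mul_apply]
        rcases eq_or_ne q.1 p.1 with h1 | h1
        · rw [h1, Equiv.swap_apply_left]; exact le_of_lt huv
        · have h2 : q.1 ≠ p.2 := by rintro h2; rw [h2] at hq1; omega
          rw [Equiv.swap_apply_of_ne_of_ne h1 h2]
    · intro hlt
      have hik : i.val < k := by
        by_contra hik
        exact absurd (lt_of_lt_of_le hlt (hmono.2 (by omega))) (lt_irrefl _)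
      rcases eq_or_ne i p.1 with rfl | h1
      · exact ⟨p, List.mem_cons_self, rfl⟩
      · have h2 : i ≠ p.2 := by rintro rfl; omega
        have : (u * Equiv.swap p.1 p.2) i = u i := by
          simp only [Equiv.Perm.mul_apply, Equiv.swap_apply_of_ne_of_ne h1 h2]
        obtain ⟨q, hq, hq1⟩ := IH.mpr (this ▸ hlt)
        exact ⟨q, List.mem_cons_of_mem p hq, hq1⟩

lemma kpath_second {n k : ℕ} : ∀ (l : List (Fin n × Fin n)) (u : Equiv.Perm (Fin n)),
    IsKPath k u l → ∀ i : Fin n, (∃ p ∈ l, p.2 = i) ↔ pathEnd u l i < u i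
  | [], u, _, i => by simp [pathEnd_nil]
  | p :: l, u, h, i => by
    obtain ⟨ha, hb, huv, htail⟩ := h
    have hmono := kpath_mono (p :: l) u ⟨ha, hb, huv, htail⟩ i
    rw [pathEnd_cons] at hmono ⊢
    have IH := kpath_second l (u * Equiv.swap p.1 p.2) htail i
    constructor
    · rintro ⟨q, hq, rfl⟩
      rcases List.mem_cons.mp hq with rfl | hq
      · have : (u * Equiv.swap q.1 q.2) q.2 = u q.1 := by
          simp [Equiv.Perm.mul_apply]
        calc pathEnd (u * Equiv.swap q.1 q.2) l q.2
            ≤ (u * Equiv.swap q.1 q.2) q.2 := (kpath_mono l _ htail q.2).2 hb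
          _ = u q.1 := this
          _ < u q.2 := huv
      · have hlt := IH.mp ⟨q, hq, rfl⟩
        refine lt_of_lt_of_le hlt ?_
        have hq2 : k ≤ q.2.val := (kpath_bounds l _ htail q hq).2
        simp only [Equiv.Perm.mul_apply]
        rcases eq_or_ne q.2 p.2 with h2 | h2
        · rw [h2, Equiv.swap_apply_right]; exact le_of_lt huv
        · have h1 : q.2 ≠ p.1 := by rintro h1; rw [h1] at hq2; omega
          rw [Equiv.swap_apply_of_ne_of_ne h1 h2]
    · intro hlt
      have hik : k ≤ i.val := by
        by_contra hik
        exact absurd (lt_of_le_of_lt (hmono.1 (by omega)) hlt) (lt_irrefl _)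
      rcases eq_or_ne i p.2 with rfl | h2
      · exact ⟨p, List.mem_cons_self, rfl⟩
      · have h1 : i ≠ p.1 := by rintro rfl; omega
        have : (u * Equiv.swap p.1 p.2) i = u i := by
          simp only [Equiv.Perm.mul_apply, Equiv.swap_apply_of_ne_of_ne h1 h2]
        obtain ⟨q, hq, hq2⟩ := IH.mpr (by rw [this]; exact hlt)
        exact ⟨q, List.mem_cons_of_mem p hq, hq2⟩

/-- For a path `u = w₀ → w₁ → ⋯ → w_m = w` in the extended `k`-Bruhat order
with `w_i = w_{i-1}·t_{a_i b_i}`, one has `{a₁,…,a_m} = {a : u(a) < w(a)}`,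
`{b₁,…,b_m} = {b : u(b) > w(b)}`, and their union is `{i : u(i) ≠ w(i)}`. -/
theorem stmt8 (n k : ℕ) (u w : Equiv.Perm (Fin n))
    (l : List (Fin n × Fin n)) (hpath : IsKPath k u l) (hend : pathEnd u l = w) :
    (∀ i : Fin n, (∃ p ∈ l, p.1 = i) ↔ u i < w i) ∧
      (∀ i : Fin n, (∃ p ∈ l, p.2 = i) ↔ w i < u i) ∧
      (∀ i : Fin n, (∃ p ∈ l, p.1 = i ∨ p.2 = i) ↔ u i ≠ w i) := by
  subst hend
  have h1 := kpath_first l u hpath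
  have h2 := kpath_second l u hpath
  refine ⟨h1, h2, fun i => ?_⟩
  constructor
  · rintro ⟨p, hp, rfl | rfl⟩
    · exact ne_of_lt (h1 p.1 |>.mp ⟨p, hp, rfl⟩)
    · exact (ne_of_lt (h2 p.2 |>.mp ⟨p, hp, rfl⟩)).symm
  · intro hne
    rcases lt_or_gt_of_ne hne with hlt | hgt
    · obtain ⟨p, hp, hp1⟩ := (h1 i).mpr hlt
      exact ⟨p, hp, Or.inl hp1⟩
    · obtain ⟨p, hp, hp2⟩ := (h2 i).mpr hgt
      exact ⟨p, hp, Or.inr hp2⟩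
end

section
/- Let u, w ∈ S_n with u ≠ w. There exists a decreasing path of length r from u to w in the extended k-Bruhat order (i.e., a path whose edge labels strictly decrease) if and only if there exist transpositions t_{a_1 b_1}, ..., t_{a_r b_r} with w = u·t_{a_1 b_1}⋯t_{a_r b_r}, each step being a k-edge, and the a_i pairwise distinct. Moreover, when such a decreasing path exists it is unique. -/
namespace KAux

variable {n k : ℕ}

lemma isKPath_cons {u : Equiv.Perm (Fin n)} {p : Fin n × Fin n} {l : List (Fin n × Fin n)} :
    IsKPath k u (p :: l) ↔ p.1.val < k ∧ k ≤ p.2.val ∧ u p.1 < u p.2 ∧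
      IsKPath k (u * Equiv.swap p.1 p.2) l := Iff.rfl

lemma pathLabels_cons (u : Equiv.Perm (Fin n)) (p : Fin n × Fin n) (l : List (Fin n × Fin n)) :
    pathLabels u (p :: l) = u p.1 :: pathLabels (u * Equiv.swap p.1 p.2) l := rfl

lemma pathEnd_nil (u : Equiv.Perm (Fin n)) : pathEnd u ([] : List (Fin n × Fin n)) = u := by
  simp [pathEnd]

lemma pathEnd_cons (u : Equiv.Perm (Fin n)) (p : Fin n × Fin n) (l : List (Fin n × Fin n)) :
    pathEnd u (p :: l) = pathEnd (u * Equiv.swap p.1 p.2) l := by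
  simp [pathEnd, mul_assoc]

lemma swap_fix {p : Fin n × Fin n} (hk : k ≤ p.2.val) {a : Fin n} (ha : a.val < k)
    (hne : a ≠ p.1) : Equiv.swap p.1 p.2 a = a :=
  Equiv.swap_apply_of_ne_of_ne hne (fun h => by rw [h] at ha; omega)

lemma mem_facts : ∀ {l : List (Fin n × Fin n)} {u : Equiv.Perm (Fin n)},
    IsKPath k u l → ∀ p ∈ l, p.1.val < k ∧ k ≤ p.2.val := by
  intro l
  induction l with
  | nil => intro u _ p hp; cases hp
  | cons q t ih =>
    intro u h p hp
    rcases List.mem_cons.1 hp with rfl | hp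
    · exact ⟨h.1, h.2.1⟩
    · exact ih h.2.2.2 p hp

lemma pathEnd_fix : ∀ {l : List (Fin n × Fin n)} {u : Equiv.Perm (Fin n)},
    IsKPath k u l → ∀ {a : Fin n}, a.val < k → a ∉ l.map Prod.fst → pathEnd u l a = u a := by
  intro l
  induction l with
  | nil => intro u _ a _ _; simp [pathEnd]
  | cons p t ih =>
    intro u h a ha hm
    simp only [List.map_cons, List.mem_cons, not_or] at hm
    rw [pathEnd_cons, ih h.2.2.2 ha hm.2]
    simp [Equiv.Perm.mul_apply, swap_fix h.2.1 ha hm.1]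

lemma labels_eq : ∀ {l : List (Fin n × Fin n)} {u : Equiv.Perm (Fin n)},
    IsKPath k u l → (l.map Prod.fst).Nodup →
    pathLabels u l = l.map fun p => u p.1 := by
  intro l
  induction l with
  | nil => intro u _ _; rfl
  | cons p t ih =>
    intro u h hnd
    simp only [List.map_cons, List.nodup_cons] at hnd
    rw [pathLabels_cons, ih h.2.2.2 hnd.2, List.map_cons]
    congr 1
    apply List.map_congr_left
    intro q hq
    have hq1 : q.1.val < k := (mem_facts h.2.2.2 q hq).1
    have hne : q.1 ≠ p.1 := fun he => hnd.1 (he ▸ List.mem_map_of_mem (f := Prod.fst) hq)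
    simp [Equiv.Perm.mul_apply, swap_fix h.2.1 hq1 hne]

lemma chain_nodup : ∀ {l : List (Fin n × Fin n)} {u : Equiv.Perm (Fin n)},
    IsKPath k u l → List.Chain' (· > ·) (pathLabels u l) → (l.map Prod.fst).Nodup := by
  intro l
  induction l with
  | nil => intro u _ _; simp
  | cons p t ih =>
    intro u h hc
    rw [pathLabels_cons] at hc
    have hct := hc.tail
    have hnd := ih h.2.2.2 hct
    simp only [List.map_cons, List.nodup_cons]
    refine ⟨fun hmem => ?_, hnd⟩
    have hlbl := labels_eq h.2.2.2 hnd
    replace hc := List.pairwise_cons.1 (List.isChain_iff_pairwise.1 hc)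
    have : (u * Equiv.swap p.1 p.2) p.1 ∈ pathLabels (u * Equiv.swap p.1 p.2) t := by
      rw [hlbl]
      rcases List.mem_map.1 hmem with ⟨q, hq, hq1⟩
      exact List.mem_map.2 ⟨q, hq, by rw [hq1]⟩
    have hgt := hc.1 _ this
    simp only [Equiv.Perm.mul_apply, Equiv.swap_apply_left] at hgt
    exact absurd h.2.2.1 (not_lt.2 (le_of_lt hgt))

lemma endVal {u : Equiv.Perm (Fin n)} {p : Fin n × Fin n} {l : List (Fin n × Fin n)}
    (h : IsKPath k u (p :: l)) (hc : List.Chain' (· > ·) (pathLabels u (p :: l))) :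
    pathEnd u (p :: l) p.1 = u p.2 := by
  have hnd := chain_nodup h hc
  simp only [List.map_cons, List.nodup_cons] at hnd
  rw [pathEnd_cons, pathEnd_fix h.2.2.2 h.1 hnd.1]
  simp [Equiv.Perm.mul_apply]

lemma grow : ∀ {l : List (Fin n × Fin n)} {u : Equiv.Perm (Fin n)},
    IsKPath k u l → List.Chain' (· > ·) (pathLabels u l) →
    ∀ a ∈ l.map Prod.fst, u a < pathEnd u l a := by
  intro l
  induction l with
  | nil => intro u _ _ a ha; cases ha
  | cons p t ih =>
    intro u h hc a ha
    have hnd := chain_nodup h hc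
    simp only [List.map_cons, List.nodup_cons] at hnd
    rcases List.mem_cons.1 ha with rfl | ha'
    · rw [endVal h hc]; exact h.2.2.1
    · have ha1 : a.val < k := by
        rcases List.mem_map.1 ha' with ⟨q, hq, hq1⟩
        exact hq1 ▸ (mem_facts h.2.2.2 q hq).1
      have hne : a ≠ p.1 := fun he => hnd.1 (he ▸ ha')
      have := ih h.2.2.2 hc.tail a ha'
      rw [pathEnd_cons]
      have hfix : (u * Equiv.swap p.1 p.2) a = u a := by
        simp [Equiv.Perm.mul_apply, swap_fix h.2.1 ha1 hne]
      rw [← hfix]; exact this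

end KAux

namespace KAux

variable {n k : ℕ}

lemma swap_comm' {a b c d : Fin n} (h1 : a ≠ c) (h2 : a ≠ d) (h3 : b ≠ c) (h4 : b ≠ d) :
    Equiv.swap a b * Equiv.swap c d = Equiv.swap c d * Equiv.swap a b := by
  have hd : Equiv.Perm.Disjoint (Equiv.swap a b) (Equiv.swap c d) := by
    intro x
    rcases eq_or_ne x a with rfl | hxa
    · right; exact Equiv.swap_apply_of_ne_of_ne h1 h2
    rcases eq_or_ne x b with rfl | hxb
    · right; exact Equiv.swap_apply_of_ne_of_ne h3 h4
    · left; exact Equiv.swap_apply_of_ne_of_ne hxa hxb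
  exact hd.commute

lemma bubble : ∀ (l : List (Fin n × Fin n)) (u : Equiv.Perm (Fin n)), l ≠ [] →
    IsKPath k u l → (l.map Prod.fst).Nodup →
    ∃ p t, IsKPath k u (p :: t) ∧ pathEnd u (p :: t) = pathEnd u l ∧
      ((p :: t).map Prod.fst).Perm (l.map Prod.fst) ∧ (p :: t).length = l.length ∧
      ∀ a ∈ t.map Prod.fst, u a < u p.1 := by
  intro l
  induction l with
  | nil => intro u h; exact absurd rfl h
  | cons p t ih =>
    intro u _ h hnd
    rcases eq_or_ne t [] with rfl | ht
    · exact ⟨p, [], h, rfl, List.Perm.refl _, rfl, by simp⟩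
    simp only [List.map_cons, List.nodup_cons] at hnd
    set u1 := u * Equiv.swap p.1 p.2 with hu1
    obtain ⟨q, t', hP, hE, hperm, hlen, hmax⟩ := ih u1 ht h.2.2.2 hnd.2
    -- facts
    have hq1k : q.1.val < k := hP.1
    have hq2k : k ≤ q.2.val := hP.2.1
    have hp1k : p.1.val < k := h.1
    have hp2k : k ≤ p.2.val := h.2.1
    have hq1p1 : q.1 ≠ p.1 := by
      intro he
      exact hnd.1 (hperm.mem_iff.1 (by simp [he]) : p.1 ∈ t.map Prod.fst)
    have hval : ∀ a : Fin n, a.val < k → a ≠ p.1 → u1 a = u a := by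
      intro a hak hne
      simp [hu1, Equiv.Perm.mul_apply, swap_fix hp2k hak hne]
    have hu1q1 : u1 q.1 = u q.1 := hval q.1 hq1k hq1p1
    have ht'k : ∀ a ∈ t'.map Prod.fst, a.val < k := by
      intro a ha
      rcases List.mem_map.1 ha with ⟨r, hr, rfl⟩
      exact (mem_facts hP.2.2.2 r hr).1
    have ht'p1 : ∀ a ∈ t'.map Prod.fst, a ≠ p.1 := by
      intro a ha he
      have : a ∈ t.map Prod.fst := hperm.mem_iff.1 (by simp [ha])
      exact hnd.1 (he ▸ this)
    rcases lt_or_gt_of_ne (fun he : u q.1 = u p.1 => hq1p1 (u.injective he)) with hlt | hgt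
    · -- u q.1 < u p.1 : keep p in front
      refine ⟨p, q :: t', ⟨h.1, h.2.1, h.2.2.1, hP⟩, ?_, ?_, by simpa using hlen, ?_⟩
      · rw [pathEnd_cons, hE, ← pathEnd_cons]
      · simpa using (hperm.cons p.1)
      · intro a ha
        rcases (by simpa using ha : a = q.1 ∨ a ∈ t'.map Prod.fst) with rfl | ha'
        · exact hlt
        · have := hmax a ha'
          rw [hval a (ht'k a ha') (ht'p1 a ha'), hu1q1] at this
          exact lt_trans this hlt
    · -- u p.1 < u q.1 : swap p and q
      have hq2p2 : q.2 ≠ p.2 := by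
        intro he
        have h1 : u1 q.1 < u1 q.2 := hP.2.2.1
        rw [hu1q1, he] at h1
        have : u1 p.2 = u p.1 := by
          simp [hu1, Equiv.Perm.mul_apply]
        rw [this] at h1
        exact absurd hgt (not_lt.2 (le_of_lt h1))
      have hq2p1 : q.2 ≠ p.1 := fun he => by rw [he] at hq2k; omega
      have hp2q1 : p.2 ≠ q.1 := fun he => by rw [he] at hp2k; omega
      have hu1q2 : u1 q.2 = u q.2 := by
        simp [hu1, Equiv.Perm.mul_apply,
          Equiv.swap_apply_of_ne_of_ne hq2p1 hq2p2]
      have hcomm : Equiv.swap p.1 p.2 * Equiv.swap q.1 q.2 =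
          Equiv.swap q.1 q.2 * Equiv.swap p.1 p.2 :=
        swap_comm' (Ne.symm hq1p1) (Ne.symm hq2p1) hp2q1 (Ne.symm hq2p2)
      have hp1q2 : p.1 ≠ q.2 := Ne.symm hq2p1
      have hp1move : (u * Equiv.swap q.1 q.2) p.1 = u p.1 := by
        simp [Equiv.Perm.mul_apply,
          Equiv.swap_apply_of_ne_of_ne (Ne.symm hq1p1) hp1q2]
      have hp2move : (u * Equiv.swap q.1 q.2) p.2 = u p.2 := by
        simp [Equiv.Perm.mul_apply,
          Equiv.swap_apply_of_ne_of_ne hp2q1 (Ne.symm hq2p2)]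
      have hrest : u * Equiv.swap q.1 q.2 * Equiv.swap p.1 p.2 = u1 * Equiv.swap q.1 q.2 := by
        rw [hu1, mul_assoc, mul_assoc, hcomm]
      refine ⟨q, p :: t', ?_, ?_, ?_, ?_, ?_⟩
      · refine ⟨hq1k, hq2k, ?_, hp1k, hp2k, ?_, ?_⟩
        · rw [← hu1q1, ← hu1q2]; exact hP.2.2.1
        · rw [hp1move, hp2move]; exact h.2.2.1
        · rw [hrest]; exact hP.2.2.2
      · rw [pathEnd_cons, pathEnd_cons, hrest, ← pathEnd_cons, hE, ← pathEnd_cons]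
      · refine List.Perm.trans ?_ ((hperm.cons p.1).trans (List.Perm.refl _))
        simp only [List.map_cons]
        exact List.Perm.swap _ _ _
      · simpa using hlen
      · intro a ha
        rcases (by simpa using ha : a = p.1 ∨ a ∈ t'.map Prod.fst) with rfl | ha'
        · exact hgt
        · have := hmax a ha'
          rw [hval a (ht'k a ha') (ht'p1 a ha'), hu1q1] at this
          exact this

end KAux

namespace KAux

lemma sortPath {n k : ℕ} : ∀ (m : ℕ) (l : List (Fin n × Fin n)) (u : Equiv.Perm (Fin n)),
    l.length = m → IsKPath k u l → (l.map Prod.fst).Nodup →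
    ∃ l', IsKPath k u l' ∧ pathEnd u l' = pathEnd u l ∧
      (l'.map Prod.fst).Perm (l.map Prod.fst) ∧ l'.length = l.length ∧
      List.Chain' (· > ·) (pathLabels u l') := by
  intro m
  induction m with
  | zero =>
    intro l u hl _ _
    rw [List.length_eq_zero_iff] at hl
    subst hl
    exact ⟨[], trivial, rfl, List.Perm.refl _, rfl, List.isChain_nil⟩
  | succ m ih =>
    intro l u hl h hnd
    have hne : l ≠ [] := by intro h0; subst h0; simp at hl
    obtain ⟨p, t, hP, hE, hperm, hlen, hmax⟩ := bubble l u hne h hnd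
    have hndpt : ((p :: t).map Prod.fst).Nodup := hperm.nodup_iff.2 hnd
    simp only [List.map_cons, List.nodup_cons] at hndpt
    have htlen : t.length = m := by
      have := hlen.trans hl
      simpa using this
    obtain ⟨t', hP', hE', hperm', hlen', hchain⟩ :=
      ih t (u * Equiv.swap p.1 p.2) htlen hP.2.2.2 hndpt.2
    refine ⟨p :: t', ⟨hP.1, hP.2.1, hP.2.2.1, hP'⟩, ?_, ?_, ?_, ?_⟩
    · rw [pathEnd_cons, hE', ← pathEnd_cons, hE]
    · simpa using (hperm'.cons p.1).trans hperm
    · have h1 : (p :: t).length = l.length := hlen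
      simp only [List.length_cons] at h1 ⊢
      omega
    · rw [pathLabels_cons]
      refine List.isChain_cons.2 ⟨?_, hchain⟩
      intro y hy
      have hy' : y ∈ pathLabels (u * Equiv.swap p.1 p.2) t' := List.mem_of_mem_head? hy
      have hndt' : (t'.map Prod.fst).Nodup := hperm'.nodup_iff.2 hndpt.2
      rw [labels_eq hP' hndt'] at hy'
      rcases List.mem_map.1 hy' with ⟨q, hq, rfl⟩
      have hqa : q.1 ∈ t.map Prod.fst := hperm'.mem_iff.1 (List.mem_map_of_mem (f := Prod.fst) hq)
      have hq1k : q.1.val < k := (mem_facts hP' q hq).1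
      have hq1p1 : q.1 ≠ p.1 := fun he => hndpt.1 (he ▸ hqa)
      have : (u * Equiv.swap p.1 p.2) q.1 = u q.1 := by
        simp [Equiv.Perm.mul_apply, swap_fix hP.2.1 hq1k hq1p1]
      rw [this]
      exact hmax q.1 hqa

end KAux

namespace KAux

variable {n k : ℕ}

lemma mem_fst_iff {l : List (Fin n × Fin n)} {u : Equiv.Perm (Fin n)}
    (h : IsKPath k u l) (hc : List.Chain' (· > ·) (pathLabels u l)) (a : Fin n) :
    a ∈ l.map Prod.fst ↔ (a.val < k ∧ pathEnd u l a ≠ u a) := by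
  constructor
  · intro ha
    rcases List.mem_map.1 ha with ⟨q, hq, rfl⟩
    exact ⟨(mem_facts h q hq).1, (grow h hc _ ha).ne'⟩
  · rintro ⟨hak, hne⟩
    by_contra hmem
    exact hne (pathEnd_fix h hak hmem)

lemma uniq : ∀ (l₁ : List (Fin n × Fin n)) (u : Equiv.Perm (Fin n)) (l₂ : List (Fin n × Fin n)),
    IsKPath k u l₁ → List.Chain' (· > ·) (pathLabels u l₁) →
    IsKPath k u l₂ → List.Chain' (· > ·) (pathLabels u l₂) →
    pathEnd u l₁ = pathEnd u l₂ → l₁ = l₂ := by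
  intro l₁
  induction l₁ with
  | nil =>
    intro u l₂ _ _ h2 hc2 he
    cases l₂ with
    | nil => rfl
    | cons q t₂ =>
      exfalso
      have hv := endVal h2 hc2
      rw [← he] at hv
      simp only [pathEnd, List.map_nil, List.prod_nil, mul_one] at hv
      have hq := u.injective hv
      have hv2 : q.1.val = q.2.val := congrArg Fin.val hq
      have := h2.1
      have := h2.2.1
      omega
  | cons p t₁ ih =>
    intro u l₂ h1 hc1 h2 hc2 he
    cases l₂ with
    | nil =>
      exfalso
      have hv := endVal h1 hc1
      rw [he] at hv
      simp only [pathEnd, List.map_nil, List.prod_nil, mul_one] at hv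
      have hq := u.injective hv
      have hv2 : p.1.val = p.2.val := congrArg Fin.val hq
      have := h1.1
      have := h1.2.1
      omega
    | cons q t₂ =>
      have hnd1 := chain_nodup h1 hc1
      have hnd2 := chain_nodup h2 hc2
      have hL1 := labels_eq h1 hnd1
      have hL2 := labels_eq h2 hnd2
      have hmemiff : ∀ a, a ∈ (p :: t₁).map Prod.fst ↔ a ∈ (q :: t₂).map Prod.fst := by
        intro a
        rw [mem_fst_iff h1 hc1 a, mem_fst_iff h2 hc2 a, he]
      have hndV1 : (((p :: t₁).map Prod.fst).map u).Nodup := hnd1.map u.injective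
      have hndV2 : (((q :: t₂).map Prod.fst).map u).Nodup := hnd2.map u.injective
      have hmemV : ∀ x, x ∈ ((p :: t₁).map Prod.fst).map u ↔ x ∈ ((q :: t₂).map Prod.fst).map u := by
        intro x
        constructor
        · intro hx
          rcases List.mem_map.1 hx with ⟨a, ha, rfl⟩
          exact List.mem_map_of_mem (f := u) ((hmemiff a).1 ha)
        · intro hx
          rcases List.mem_map.1 hx with ⟨a, ha, rfl⟩
          exact List.mem_map_of_mem (f := u) ((hmemiff a).2 ha)
      have hpermV : (((p :: t₁).map Prod.fst).map u).Perm (((q :: t₂).map Prod.fst).map u) :=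
        (List.perm_ext_iff_of_nodup hndV1 hndV2).2 hmemV
      haveI : IsAntisymm (Fin n) (· > ·) := ⟨fun a b hab hba => (asymm hab hba).elim⟩
      have hmm : ∀ (l : List (Fin n × Fin n)), (l.map Prod.fst).map u = l.map fun r => u r.1 := by
        intro l; rw [List.map_map]; rfl
      have hs1 : List.Pairwise (· > ·) (((p :: t₁).map Prod.fst).map u) := by
        rw [hmm, ← hL1, ← List.isChain_iff_pairwise]; exact hc1
      have hs2 : List.Pairwise (· > ·) (((q :: t₂).map Prod.fst).map u) := by
        rw [hmm, ← hL2, ← List.isChain_iff_pairwise]; exact hc2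
      have hVeq := List.Perm.eq_of_pairwise (fun a b _ _ hab hba => (asymm hab hba).elim) hs1 hs2 hpermV
      have hfst : (p :: t₁).map Prod.fst = (q :: t₂).map Prod.fst :=
        List.map_injective_iff.2 u.injective hVeq
      simp only [List.map_cons, List.cons.injEq] at hfst
      have hfst1 : p.1 = q.1 := hfst.1
      have hv1 := endVal h1 hc1
      have hv2 := endVal h2 hc2
      rw [he, hfst1, hv2] at hv1
      have hsnd : p.2 = q.2 := u.injective hv1.symm
      have hpq : p = q := Prod.ext hfst1 hsnd
      subst hpq
      congr 1
      rw [pathLabels_cons] at hc1 hc2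
      rw [pathEnd_cons, pathEnd_cons] at he
      exact ih (u * Equiv.swap p.1 p.2) t₂ h1.2.2.2 hc1.tail h2.2.2.2 hc2.tail he

end KAux

/-- There is a decreasing path (strictly decreasing labels) of length `r`
from `u` to `w ≠ u` in the extended `k`-Bruhat order iff `w` can be reached
from `u` by `r` `k`-edges whose first coordinates `a₁,…,a_r` are pairwise
distinct; moreover the decreasing path, when it exists, is unique. -/
theorem stmt9 (n k r : ℕ) (u w : Equiv.Perm (Fin n)) (hne : u ≠ w) :
    ((∃ l : List (Fin n × Fin n), IsKPath k u l ∧ pathEnd u l = w ∧ l.length = r ∧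
        List.Chain' (· > ·) (pathLabels u l)) ↔
      (∃ l : List (Fin n × Fin n), IsKPath k u l ∧ pathEnd u l = w ∧ l.length = r ∧
        (l.map Prod.fst).Nodup)) ∧
      ∀ l₁ l₂ : List (Fin n × Fin n),
        IsKPath k u l₁ → pathEnd u l₁ = w → List.Chain' (· > ·) (pathLabels u l₁) →
        IsKPath k u l₂ → pathEnd u l₂ = w → List.Chain' (· > ·) (pathLabels u l₂) →
        l₁ = l₂ := by
  constructor
  · constructor
    · rintro ⟨l, h, hE, hr, hc⟩
      exact ⟨l, h, hE, hr, KAux.chain_nodup h hc⟩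
    · rintro ⟨l, h, hE, hr, hnd⟩
      obtain ⟨l', hP', hE', _, hlen', hc'⟩ := KAux.sortPath l.length l u rfl h hnd
      exact ⟨l', hP', hE'.trans hE, hlen'.trans hr, hc'⟩
  · intro l₁ l₂ h1 he1 hc1 h2 he2 hc2
    exact KAux.uniq l₁ u l₂ h1 hc1 h2 hc2 (he1.trans he2.symm)
end

section
/- Let u, w ∈ S_n with u ≠ w. There exists an increasing path of length r from u to w in the extended k-Bruhat order (labels strictly increasing) if and only if w = u·t_{a_1 b_1}⋯t_{a_r b_r} with each step a k-edge and the b_i pairwise distinct. Moreover, when such an increasing path exists it is unique. -/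
namespace Stmt10

variable {n k : ℕ}

lemma pathEnd_nil (u : Equiv.Perm (Fin n)) : pathEnd u [] = u := by simp [pathEnd]

lemma pathEnd_cons (u : Equiv.Perm (Fin n)) (p : Fin n × Fin n) (l : List (Fin n × Fin n)) :
    pathEnd u (p :: l) = pathEnd (u * Equiv.swap p.1 p.2) l := by
  simp [pathEnd, mul_assoc]

lemma kpath_mem {u : Equiv.Perm (Fin n)} {l : List (Fin n × Fin n)} (h : IsKPath k u l) :
    ∀ p ∈ l, p.1.val < k ∧ k ≤ p.2.val := by
  induction l generalizing u with
  | nil => simp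
  | cons p t ih =>
    obtain ⟨h1, h2, h3, h4⟩ := h
    rintro q hq
    rcases List.mem_cons.1 hq with rfl | hq
    · exact ⟨h1, h2⟩
    · exact ih h4 q hq

lemma pathEnd_apply_of_fixed {u : Equiv.Perm (Fin n)} {l : List (Fin n × Fin n)}
    (h : IsKPath k u l) {x : Fin n} (hx : k ≤ x.val) (hnx : x ∉ l.map Prod.snd) :
    pathEnd u l x = u x := by
  induction l generalizing u with
  | nil => simp [pathEnd]
  | cons p t ih =>
    obtain ⟨h1, h2, h3, h4⟩ := h
    simp only [List.map_cons, List.mem_cons, not_or] at hnx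
    rw [pathEnd_cons, ih h4 hnx.2, Equiv.Perm.mul_apply,
      Equiv.swap_apply_of_ne_of_ne (a := p.1) (by rintro rfl; omega) hnx.1]

/-- For a path with distinct `b`'s, the labels are the final values at the `b`'s. -/
lemma labels_eq {u : Equiv.Perm (Fin n)} {l : List (Fin n × Fin n)}
    (h : IsKPath k u l) (hnd : (l.map Prod.snd).Nodup) :
    pathLabels u l = l.map fun p => pathEnd u l p.2 := by
  induction l generalizing u with
  | nil => simp [pathLabels]
  | cons p t ih =>
    obtain ⟨h1, h2, h3, h4⟩ := h
    simp only [List.map_cons, List.nodup_cons] at hnd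
    simp only [pathLabels, List.map_cons, pathEnd_cons]
    rw [pathEnd_apply_of_fixed h4 h2 hnd.1, Equiv.Perm.mul_apply, Equiv.swap_apply_right,
      ih h4 hnd.2]

/-- membership of `b ≥ k` in the `snd`s of a nodup path ↔ the endpoints differ at `b`. -/
lemma snd_mem_iff {u : Equiv.Perm (Fin n)} {l : List (Fin n × Fin n)}
    (h : IsKPath k u l) (hnd : (l.map Prod.snd).Nodup) (b : Fin n) :
    b ∈ l.map Prod.snd ↔ (k ≤ b.val ∧ u b ≠ pathEnd u l b) := by
  induction l generalizing u with
  | nil => simp [pathEnd]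
  | cons p t ih =>
    obtain ⟨h1, h2, h3, h4⟩ := h
    simp only [List.map_cons, List.nodup_cons] at hnd
    simp only [List.map_cons, List.mem_cons]
    have key : ∀ x : Fin n, x ≠ p.2 → k ≤ x.val → (u * Equiv.swap p.1 p.2) x = u x := by
      intro x hx2 hxk
      rw [Equiv.Perm.mul_apply, Equiv.swap_apply_of_ne_of_ne (by rintro rfl; omega) hx2]
    constructor
    · rintro (rfl | hb)
      · refine ⟨h2, ?_⟩
        rw [pathEnd_cons, pathEnd_apply_of_fixed h4 h2 hnd.1, Equiv.Perm.mul_apply,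
          Equiv.swap_apply_right]
        exact fun hc => absurd hc.symm (ne_of_lt h3)
      · have h5 := (ih h4 hnd.2).1 hb
        have hb2 : b ≠ p.2 := by rintro rfl; exact hnd.1 hb
        refine ⟨h5.1, ?_⟩
        rw [pathEnd_cons]
        rw [key b hb2 h5.1] at h5
        exact h5.2
    · rintro ⟨hkb, hub⟩
      by_contra hc
      push_neg at hc
      obtain ⟨hb2, hbt⟩ := hc
      apply hub
      rw [pathEnd_cons, pathEnd_apply_of_fixed h4 hkb hbt, key b hb2 hkb]

/-- sum of the window values. -/
def wsum (k : ℕ) {n : ℕ} (v : Equiv.Perm (Fin n)) : ℕ :=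
  ∑ a ∈ Finset.univ.filter (fun a : Fin n => a.val < k), (v a).val

lemma wsum_lt {v : Equiv.Perm (Fin n)} {a b : Fin n} (ha : a.val < k) (hb : k ≤ b.val)
    (hab : v a < v b) : wsum k v < wsum k (v * Equiv.swap a b) := by
  classical
  have hamem : a ∈ Finset.univ.filter (fun a : Fin n => a.val < k) := by simp [ha]
  rw [wsum, wsum, ← Finset.add_sum_erase _ _ hamem, ← Finset.add_sum_erase _ _ hamem]
  have heq : ∀ x ∈ (Finset.univ.filter (fun a : Fin n => a.val < k)).erase a,
      ((v * Equiv.swap a b) x).val = (v x).val := by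
    intro x hx
    rw [Finset.mem_erase, Finset.mem_filter] at hx
    rw [Equiv.Perm.mul_apply, Equiv.swap_apply_of_ne_of_ne hx.1 (by rintro rfl; omega)]
  rw [Finset.sum_congr rfl heq]
  have : (v * Equiv.swap a b) a = v b := by rw [Equiv.Perm.mul_apply, Equiv.swap_apply_left]
  rw [this]
  exact Nat.add_lt_add_right hab _

lemma wsum_le_pathEnd {u : Equiv.Perm (Fin n)} {l : List (Fin n × Fin n)}
    (h : IsKPath k u l) : wsum k u ≤ wsum k (pathEnd u l) := by
  induction l generalizing u with
  | nil => simp [pathEnd]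
  | cons p t ih =>
    obtain ⟨h1, h2, h3, h4⟩ := h
    rw [pathEnd_cons]
    exact le_trans (le_of_lt (wsum_lt h1 h2 h3)) (ih h4)

lemma pathEnd_ne {u : Equiv.Perm (Fin n)} {l : List (Fin n × Fin n)}
    (h : IsKPath k u l) (hl : l ≠ []) : pathEnd u l ≠ u := by
  intro hc
  cases l with
  | nil => exact hl rfl
  | cons p t =>
    obtain ⟨h1, h2, h3, h4⟩ := h
    have := lt_of_lt_of_le (wsum_lt h1 h2 h3) (wsum_le_pathEnd h4)
    rw [← pathEnd_cons, hc] at this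
    omega

/-- In an increasing path, if the current value at a window-complement
position `b` is below every label, then `b` is never used. -/
lemma not_mem_snd_of_labels_gt {u : Equiv.Perm (Fin n)} {l : List (Fin n × Fin n)}
    (h : IsKPath k u l) {b : Fin n}
    (hlab : ∀ τ ∈ pathLabels u l, u b < τ) : b ∉ l.map Prod.snd := by
  induction l generalizing u with
  | nil => simp
  | cons p t ih =>
    obtain ⟨h1, h2, h3, h4⟩ := h
    simp only [List.map_cons, List.mem_cons, not_or]
    have hb2 : b ≠ p.2 := by
      rintro rfl
      exact absurd h3 (not_lt_of_gt (hlab _ (by simp [pathLabels])))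
    refine ⟨hb2, ih h4 ?_⟩
    intro τ hτ
    by_cases hb1 : b = p.1
    · rw [hb1] at hlab
      exact absurd (hlab _ (by simp [pathLabels])) (lt_irrefl _)
    · rw [Equiv.Perm.mul_apply, Equiv.swap_apply_of_ne_of_ne hb1 hb2]
      exact hlab _ (by simp [pathLabels, hτ])

lemma chain'_head_lt {L : List (Fin n)} {x : Fin n} (h : List.Chain' (· < ·) (x :: L)) :
    ∀ τ ∈ L, x < τ :=
  (List.pairwise_cons.1 (List.isChain_iff_pairwise.1 h)).1

/-- An increasing path has pairwise distinct `b`'s. -/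
lemma nodup_of_chain {u : Equiv.Perm (Fin n)} {l : List (Fin n × Fin n)}
    (h : IsKPath k u l) (hc : List.Chain' (· < ·) (pathLabels u l)) :
    (l.map Prod.snd).Nodup := by
  induction l generalizing u with
  | nil => simp
  | cons p t ih =>
    obtain ⟨h1, h2, h3, h4⟩ := h
    simp only [pathLabels] at hc
    simp only [List.map_cons, List.nodup_cons]
    refine ⟨?_, ih h4 (List.IsChain.tail hc)⟩
    apply not_mem_snd_of_labels_gt h4
    intro τ hτ
    have : (u * Equiv.swap p.1 p.2) p.2 = u p.1 := by
      rw [Equiv.Perm.mul_apply, Equiv.swap_apply_right]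
    rw [this]
    exact chain'_head_lt hc τ hτ

lemma swap_comm' {a b c d : Fin n} (h1 : a ≠ c) (h2 : a ≠ d) (h3 : b ≠ c) (h4 : b ≠ d) :
    Equiv.swap a b * Equiv.swap c d = Equiv.swap c d * Equiv.swap a b := by
  have hdisj : (Equiv.swap a b).Disjoint (Equiv.swap c d) := by
    intro x
    by_cases hxa : x = a
    · subst hxa; right; exact Equiv.swap_apply_of_ne_of_ne h1 h2
    by_cases hxb : x = b
    · subst hxb; right; exact Equiv.swap_apply_of_ne_of_ne h3 h4
    · left; exact Equiv.swap_apply_of_ne_of_ne hxa hxb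
  exact hdisj.commute.eq

/-- labels of a nodup path are distinct. -/
lemma labels_nodup {u : Equiv.Perm (Fin n)} {l : List (Fin n × Fin n)}
    (h : IsKPath k u l) (hnd : (l.map Prod.snd).Nodup) : (pathLabels u l).Nodup := by
  rw [labels_eq h hnd, show (l.map fun p => pathEnd u l p.2) =
    (l.map Prod.snd).map (pathEnd u l) by rw [List.map_map]; rfl]
  exact hnd.map (Equiv.injective _)

/-- Insertion step: if the tail is sorted, the whole path can be sorted. -/
lemma insert_sorted (t : List (Fin n × Fin n)) :
    ∀ (u : Equiv.Perm (Fin n)) (p : Fin n × Fin n),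
    IsKPath k u (p :: t) → ((p :: t).map Prod.snd).Nodup →
    List.Chain' (· < ·) (pathLabels (u * Equiv.swap p.1 p.2) t) →
    ∃ l', IsKPath k u l' ∧ pathEnd u l' = pathEnd u (p :: t) ∧
      l'.length = t.length + 1 ∧ (l'.map Prod.snd).Perm ((p :: t).map Prod.snd) ∧
      List.Chain' (· < ·) (pathLabels u l') := by
  induction t with
  | nil =>
    intro u p h hnd hc
    exact ⟨[p], h, rfl, rfl, List.Perm.refl _, by simp [pathLabels]; exact List.isChain_singleton _⟩
  | cons q s ih =>
    intro u p h hnd hc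
    obtain ⟨h1, h2, h3, h4⟩ := h
    obtain ⟨h5, h6, h7, h8⟩ := h4
    have hN := labels_nodup (l := p :: q :: s) (u := u) ⟨h1, h2, h3, h5, h6, h7, h8⟩ hnd
    have hτne : u p.1 ≠ (u * Equiv.swap p.1 p.2) q.1 := by
      simp only [pathLabels, List.nodup_cons, List.mem_cons] at hN
      exact fun hc' => hN.1 (Or.inl hc')
    rcases lt_or_gt_of_ne hτne with hlt | hgt
    · -- already sorted at the junction
      refine ⟨p :: q :: s, ⟨h1, h2, h3, h5, h6, h7, h8⟩, rfl, rfl, List.Perm.refl _, ?_⟩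
      show List.Chain' (· < ·) (u p.1 :: (u * Equiv.swap p.1 p.2) q.1 ::
        pathLabels ((u * Equiv.swap p.1 p.2) * Equiv.swap q.1 q.2) s)
      exact List.isChain_cons_cons.2 ⟨hlt, hc⟩
    · -- exchange p and q
      have ha : p.1 ≠ q.1 := by
        rintro hpq
        rw [← hpq, Equiv.Perm.mul_apply, Equiv.swap_apply_left] at hgt
        exact absurd h3 (not_lt_of_gt hgt)
      have hb : p.2 ≠ q.2 := by
        simp only [List.map_cons, List.nodup_cons, List.mem_cons, not_or] at hnd
        exact hnd.1.1
      have hq1 : (u * Equiv.swap p.1 p.2) q.1 = u q.1 := by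
        rw [Equiv.Perm.mul_apply,
          Equiv.swap_apply_of_ne_of_ne (Ne.symm ha) (by rintro hc'; rw [hc'] at h5; omega)]
      have hq2 : (u * Equiv.swap p.1 p.2) q.2 = u q.2 := by
        rw [Equiv.Perm.mul_apply,
          Equiv.swap_apply_of_ne_of_ne (by rintro hc'; rw [hc'] at h6; omega) (Ne.symm hb)]
      have hp1 : (u * Equiv.swap q.1 q.2) p.1 = u p.1 := by
        rw [Equiv.Perm.mul_apply,
          Equiv.swap_apply_of_ne_of_ne ha (by rintro hc'; rw [hc'] at h1; omega)]
      have hp2 : (u * Equiv.swap q.1 q.2) p.2 = u p.2 := by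
        rw [Equiv.Perm.mul_apply,
          Equiv.swap_apply_of_ne_of_ne (by rintro hc'; rw [hc'] at h2; omega) hb]
      have hcomm : Equiv.swap p.1 p.2 * Equiv.swap q.1 q.2
          = Equiv.swap q.1 q.2 * Equiv.swap p.1 p.2 :=
        swap_comm' ha (by rintro hc'; rw [hc'] at h1; omega)
          (by rintro hc'; rw [hc'] at h2; omega) hb
      have hvv : u * Equiv.swap q.1 q.2 * Equiv.swap p.1 p.2
          = u * Equiv.swap p.1 p.2 * Equiv.swap q.1 q.2 := by
        rw [mul_assoc, mul_assoc, ← hcomm]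
      -- the path p :: s from u * swap q
      have hkps : IsKPath k (u * Equiv.swap q.1 q.2) (p :: s) := by
        refine ⟨h1, h2, by rw [hp1, hp2]; exact h3, ?_⟩
        rw [hvv]; exact h8
      have hndps : ((p :: s).map Prod.snd).Nodup := by
        simp only [List.map_cons, List.nodup_cons, List.mem_cons, not_or] at hnd ⊢
        exact ⟨hnd.1.2, hnd.2.2⟩
      have hcps : List.Chain' (· < ·) (pathLabels (u * Equiv.swap q.1 q.2 * Equiv.swap p.1 p.2) s) := by
        rw [hvv]
        exact (List.isChain_cons.1 hc).2
      obtain ⟨l'', hk'', hend'', hlen'', hperm'', hch''⟩ := ih (u * Equiv.swap q.1 q.2) p hkps hndps hcps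
      -- identify global endpoint
      have hw : pathEnd (u * Equiv.swap q.1 q.2) (p :: s) = pathEnd u (p :: q :: s) := by
        rw [pathEnd_cons, hvv, ← pathEnd_cons, ← pathEnd_cons]
      refine ⟨q :: l'', ⟨h5, h6, by rw [← hq1, ← hq2]; exact h7, hk''⟩, ?_, ?_, ?_, ?_⟩
      · rw [pathEnd_cons, hend'', hw]
      · simp [hlen'']
      · simp only [List.map_cons]
        simp only [List.map_cons] at hperm''
        exact (hperm''.cons q.2).trans (List.Perm.swap p.2 q.2 _)
      · -- chain for q :: l''
        show List.Chain' (· < ·) (u q.1 :: pathLabels (u * Equiv.swap q.1 q.2) l'')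
        have hnd'' : (l''.map Prod.snd).Nodup := (hperm''.nodup_iff).2 hndps
        have hlabels'' := labels_eq hk'' hnd''
        -- original labels decomposition
        have horig := labels_eq (l := p :: q :: s) (u := u) ⟨h1, h2, h3, h5, h6, h7, h8⟩ hnd
        simp only [pathLabels, List.map_cons] at horig
        rw [List.cons_eq_cons] at horig
        obtain ⟨hτp, horig2⟩ := horig
        rw [List.cons_eq_cons] at horig2
        obtain ⟨hτq, hτs⟩ := horig2
        refine List.isChain_cons.2 ⟨?_, hch''⟩
        intro y hy
        have hymem : y ∈ pathLabels (u * Equiv.swap q.1 q.2) l'' := List.mem_of_mem_head? hy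
        rw [hlabels''] at hymem
        obtain ⟨x, hxmem, rfl⟩ := List.mem_map.1 hymem
        have hxsnd : x.2 ∈ (p :: s).map Prod.snd := hperm''.subset (List.mem_map_of_mem hxmem)
        have hW : pathEnd (u * Equiv.swap q.1 q.2) l'' = pathEnd u (p :: q :: s) := by
          rw [hend'', hw]
        rw [hW]
        have hgt' : u q.1 < u p.1 := by rwa [hq1] at hgt
        simp only [List.map_cons, List.mem_cons] at hxsnd
        rcases hxsnd with hx | hx
        · rw [hx, ← hτp]
          exact hgt'
        · -- x.2 ∈ s.map snd, so w x.2 is a label of s-part, above τ' = u q.1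
          have : pathEnd u (p :: q :: s) x.2 ∈ pathLabels ((u * Equiv.swap p.1 p.2) * Equiv.swap q.1 q.2) s := by
            rw [hτs]
            exact List.mem_map.2 (by
              obtain ⟨z, hz, hz2⟩ := List.mem_map.1 hx
              exact ⟨z, hz, by rw [hz2]⟩)
          have := chain'_head_lt (show List.Chain' (· < ·)
            ((u * Equiv.swap p.1 p.2) q.1 :: pathLabels ((u * Equiv.swap p.1 p.2) * Equiv.swap q.1 q.2) s) from hc) _ this
          rwa [hq1] at this

lemma sortPath {l : List (Fin n × Fin n)} : ∀ u, IsKPath k u l → (l.map Prod.snd).Nodup →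
    ∃ l', IsKPath k u l' ∧ pathEnd u l' = pathEnd u l ∧ l'.length = l.length ∧
      (l'.map Prod.snd).Perm (l.map Prod.snd) ∧ List.Chain' (· < ·) (pathLabels u l') := by
  induction l with
  | nil => intro u _ _; exact ⟨[], trivial, rfl, rfl, List.Perm.refl _, by simp [pathLabels]; exact List.isChain_nil⟩
  | cons p t ih =>
    intro u h hnd
    obtain ⟨h1, h2, h3, h4⟩ := h
    simp only [List.map_cons, List.nodup_cons] at hnd
    obtain ⟨t', hk', hend', hlen', hperm', hch'⟩ := ih _ h4 hnd.2
    have hnd' : ((p :: t').map Prod.snd).Nodup := by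
      simp only [List.map_cons, List.nodup_cons]
      exact ⟨fun hmem => hnd.1 (hperm'.subset hmem), hperm'.nodup_iff.2 hnd.2⟩
    obtain ⟨l', ha', hb', hc', hd', he'⟩ := insert_sorted t' u p ⟨h1, h2, h3, hk'⟩ hnd' hch'
    refine ⟨l', ha', ?_, ?_, ?_, he'⟩
    · rw [hb', pathEnd_cons, hend', ← pathEnd_cons]
    · simp [hc', hlen']
    · refine hd'.trans ?_
      simp only [List.map_cons]
      exact hperm'.cons p.2

/-- Uniqueness of increasing paths. -/
lemma uniq : ∀ (l₁ : List (Fin n × Fin n)) (u : Equiv.Perm (Fin n)) (l₂ : List (Fin n × Fin n)),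
    IsKPath k u l₁ → IsKPath k u l₂ → pathEnd u l₁ = pathEnd u l₂ →
    List.Chain' (· < ·) (pathLabels u l₁) → List.Chain' (· < ·) (pathLabels u l₂) →
    l₁ = l₂ := by
  intro l₁
  induction l₁ with
  | nil =>
    intro u l₂ hk1 hk2 hend _ _
    cases l₂ with
    | nil => rfl
    | cons q t₂ =>
      rw [pathEnd_nil] at hend
      exact absurd hend.symm (pathEnd_ne hk2 (by simp))
  | cons p t₁ ih =>
    intro u l₂ hk1 hk2 hend hc1 hc2
    cases l₂ with
    | nil =>
      rw [pathEnd_nil] at hend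
      exact absurd hend (pathEnd_ne hk1 (by simp))
    | cons q t₂ =>
      have hnd1 := nodup_of_chain hk1 hc1
      have hnd2 := nodup_of_chain hk2 hc2
      have hL1 := labels_eq hk1 hnd1
      have hL2 := labels_eq hk2 hnd2
      set w := pathEnd u (p :: t₁) with hw
      have hL2' : pathLabels u (q :: t₂) = (q :: t₂).map fun x => w x.2 := by
        rw [hL2, hend]
      have hc1' : List.Chain' (· < ·) ((w p.2) :: List.map (fun x => w x.2) t₁) := by
        have h := hc1; rw [hL1] at h; simp only [List.map_cons] at h; exact h
      have hc2' : List.Chain' (· < ·) ((w q.2) :: List.map (fun x => w x.2) t₂) := by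
        have h := hc2; rw [hL2'] at h; simp only [List.map_cons] at h; exact h
      have hple : ∀ b ∈ (p :: t₁).map Prod.snd, w p.2 ≤ w b := by
        rintro b hb
        simp only [List.map_cons, List.mem_cons] at hb
        rcases hb with rfl | hb
        · exact le_refl _
        · obtain ⟨x, hx, rfl⟩ := List.mem_map.1 hb
          exact le_of_lt (chain'_head_lt hc1' _ (List.mem_map.2 ⟨x, hx, rfl⟩))
      have hqle : ∀ b ∈ (q :: t₂).map Prod.snd, w q.2 ≤ w b := by
        rintro b hb
        simp only [List.map_cons, List.mem_cons] at hb
        rcases hb with rfl | hb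
        · exact le_refl _
        · obtain ⟨x, hx, rfl⟩ := List.mem_map.1 hb
          exact le_of_lt (chain'_head_lt hc2' _ (List.mem_map.2 ⟨x, hx, rfl⟩))
      have hmemiff : ∀ b, b ∈ (p :: t₁).map Prod.snd ↔ b ∈ (q :: t₂).map Prod.snd := by
        intro b
        rw [snd_mem_iff hk1 hnd1 b, snd_mem_iff hk2 hnd2 b, ← hw, hend]
      have hq2 : q.2 = p.2 := by
        apply Equiv.injective w
        apply le_antisymm
        · exact hqle _ ((hmemiff p.2).1 (by simp))
        · exact hple _ ((hmemiff q.2).2 (by simp))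
      have hq1 : q.1 = p.1 := by
        apply Equiv.injective u
        have e1 : u p.1 = w p.2 := by
          have := hL1
          simp only [pathLabels, List.map_cons] at this
          exact (List.cons_eq_cons.1 this).1
        have e2 : u q.1 = w q.2 := by
          have := hL2'
          simp only [pathLabels, List.map_cons] at this
          exact (List.cons_eq_cons.1 this).1
        rw [e1, e2, hq2]
      have hqp : q = p := Prod.ext hq1 hq2
      subst hqp
      have ht : t₁ = t₂ := by
        apply ih (u * Equiv.swap q.1 q.2)
        · exact hk1.2.2.2
        · exact hk2.2.2.2
        · rw [← pathEnd_cons, ← pathEnd_cons]; exact hend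
        · exact List.IsChain.tail hc1
        · exact List.IsChain.tail hc2
      rw [ht]

end Stmt10

/-- There is an increasing path (strictly increasing labels) of length `r`
from `u` to `w ≠ u` in the extended `k`-Bruhat order iff `w` can be reached
from `u` by `r` `k`-edges whose second coordinates `b₁,…,b_r` are pairwise
distinct; moreover the increasing path, when it exists, is unique. -/
theorem stmt10 (n k r : ℕ) (u w : Equiv.Perm (Fin n)) (hne : u ≠ w) :
    ((∃ l : List (Fin n × Fin n), IsKPath k u l ∧ pathEnd u l = w ∧ l.length = r ∧
        List.Chain' (· < ·) (pathLabels u l)) ↔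
      (∃ l : List (Fin n × Fin n), IsKPath k u l ∧ pathEnd u l = w ∧ l.length = r ∧
        (l.map Prod.snd).Nodup)) ∧
      ∀ l₁ l₂ : List (Fin n × Fin n),
        IsKPath k u l₁ → pathEnd u l₁ = w → List.Chain' (· < ·) (pathLabels u l₁) →
        IsKPath k u l₂ → pathEnd u l₂ = w → List.Chain' (· < ·) (pathLabels u l₂) →
        l₁ = l₂ := by
  constructor
  · constructor
    · rintro ⟨l, h, he, hl, hc⟩
      exact ⟨l, h, he, hl, Stmt10.nodup_of_chain h hc⟩
    · rintro ⟨l, h, he, hl, hnd⟩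
      obtain ⟨l', hk', hend', hlen', _, hch'⟩ := Stmt10.sortPath u h hnd
      exact ⟨l', hk', hend'.trans he, hlen'.trans hl, hch'⟩
  · intro l₁ l₂ h1 e1 c1 h2 e2 c2
    exact Stmt10.uniq l₁ u l₂ h1 h2 (e1.trans e2.symm) c1 c2
end

section
/- Let u ∈ S_n and let η ∈ S_n be an (m+1)-cycle with m ≥ 1 such that u ≤_k u·η in the extended k-Bruhat order. Then there exists a unique unimodal path γ from u to u·η in the extended k-Bruhat order; moreover γ has length m and its number of decreasing steps de(γ) equals ht_k(η) := #{i ≤ k : η(i) ≠ i} − 1. -/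
/-- `L` is unimodal via the decomposition `L = L1 ++ L2`: the nonempty `L1`
is strictly increasing up to the peak (its last entry) and from the peak the
labels strictly decrease along `L2`; `L2.length` is `de(γ)`. -/
def UnimodalWith {n : ℕ} (L L1 L2 : List (Fin n)) : Prop :=
  L = L1 ++ L2 ∧ L1 ≠ [] ∧ List.Chain' (· < ·) L1 ∧
    ∀ x ∈ L1.getLast?, List.Chain (· > ·) x L2

/-- A nonempty list of labels is unimodal: `τ₁ < ⋯ < τ_i > ⋯ > τ_m` for some `i`. -/
def Unimodal {n : ℕ} (L : List (Fin n)) : Prop := ∃ L1 L2, UnimodalWith L L1 L2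

theorem Equiv.Perm.apply_inv_self {α : Type*} (f : Equiv.Perm α) (x : α) : f (f⁻¹ x) = x :=
  f.apply_symm_apply x

theorem Equiv.Perm.inv_apply_self {α : Type*} (f : Equiv.Perm α) (x : α) : f⁻¹ (f x) = x :=
  f.symm_apply_apply x

namespace Stmt12

open Equiv Equiv.Perm List Finset

variable {n : ℕ} {k : ℕ}

@[simp] lemma pathEnd_nil (u : Equiv.Perm (Fin n)) : pathEnd u [] = u := by
  simp [pathEnd]

@[simp] lemma pathEnd_cons (u : Equiv.Perm (Fin n)) (p : Fin n × Fin n) (l) :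
    pathEnd u (p :: l) = pathEnd (u * Equiv.swap p.1 p.2) l := by
  simp [pathEnd, mul_assoc]

lemma pathEnd_append (u : Equiv.Perm (Fin n)) (l₁ l₂) :
    pathEnd u (l₁ ++ l₂) = pathEnd (pathEnd u l₁) l₂ := by
  induction l₁ generalizing u with
  | nil => simp
  | cons p l ih => simp [ih]

@[simp] lemma isKPath_nil (u : Equiv.Perm (Fin n)) : IsKPath k u [] := trivial

lemma isKPath_cons {u : Equiv.Perm (Fin n)} {p : Fin n × Fin n} {l} :
    IsKPath k u (p :: l) ↔ p.1.val < k ∧ k ≤ p.2.val ∧ u p.1 < u p.2 ∧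
      IsKPath k (u * Equiv.swap p.1 p.2) l := Iff.rfl

lemma isKPath_append {u : Equiv.Perm (Fin n)} {l₁ l₂} :
    IsKPath k u (l₁ ++ l₂) ↔ IsKPath k u l₁ ∧ IsKPath k (pathEnd u l₁) l₂ := by
  induction l₁ generalizing u with
  | nil => simp
  | cons p l ih => simp [isKPath_cons, ih, and_assoc]

@[simp] lemma pathLabels_nil (u : Equiv.Perm (Fin n)) : pathLabels u [] = [] := rfl

@[simp] lemma pathLabels_cons (u : Equiv.Perm (Fin n)) (p : Fin n × Fin n) (l) :
    pathLabels u (p :: l) = u p.1 :: pathLabels (u * Equiv.swap p.1 p.2) l := rfl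

lemma pathLabels_append (u : Equiv.Perm (Fin n)) (l₁ l₂) :
    pathLabels u (l₁ ++ l₂) = pathLabels u l₁ ++ pathLabels (pathEnd u l₁) l₂ := by
  induction l₁ generalizing u with
  | nil => simp
  | cons p l ih => simp [ih]

lemma length_pathLabels (u : Equiv.Perm (Fin n)) (l) :
    (pathLabels u l).length = l.length := by
  induction l generalizing u with
  | nil => rfl
  | cons p l ih => simp [ih]

lemma extKBruhat_path {u w : Equiv.Perm (Fin n)} (h : extKBruhat k u w) :
    ∃ l, IsKPath k u l ∧ pathEnd u l = w := by
  induction h with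
  | refl => exact ⟨[], trivial, by simp⟩
  | tail _ hedge ih =>
    obtain ⟨l, hl, hend⟩ := ih
    obtain ⟨a, b, hak, hbk, hab, rfl⟩ := hedge
    refine ⟨l ++ [(a, b)], ?_, ?_⟩
    · rw [isKPath_append]
      exact ⟨hl, by rw [hend]; exact ⟨hak, hbk, hab, trivial⟩⟩
    · rw [pathEnd_append, hend]; simp [pathEnd]

/-- product of the swaps of a path -/
lemma pathEnd_eq_mul (u : Equiv.Perm (Fin n)) (l) :
    pathEnd u l = u * (l.map fun p => Equiv.swap p.1 p.2).prod := rfl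

-- Monotonicity: values at positions < k only increase
lemma isKPath_mem {u : Equiv.Perm (Fin n)} {l} (h : IsKPath k u l) {q : Fin n × Fin n}
    (hq : q ∈ l) : q.1.val < k ∧ k ≤ q.2.val := by
  induction l generalizing u with
  | nil => simp at hq
  | cons p l ih =>
    obtain ⟨h1, h2, h3, h4⟩ := h
    rcases List.mem_cons.1 hq with rfl | hq'
    · exact ⟨h1, h2⟩
    · exact ih h4 hq'

lemma le_pathEnd {u : Equiv.Perm (Fin n)} {l} (h : IsKPath k u l) {c : Fin n} (hc : c.val < k) :
    u c ≤ pathEnd u l c := by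
  induction l generalizing u with
  | nil => simp
  | cons p l ih =>
    obtain ⟨h1, h2, h3, h4⟩ := h
    rw [pathEnd_cons]
    refine le_trans ?_ (ih h4)
    rcases eq_or_ne c p.1 with rfl | hne1
    · simpa using h3.le
    · have hne2 : c ≠ p.2 := fun hh => by subst hh; omega
      rw [Equiv.Perm.mul_apply, Equiv.swap_apply_of_ne_of_ne hne1 hne2]

lemma pathEnd_le {u : Equiv.Perm (Fin n)} {l} (h : IsKPath k u l) {c : Fin n} (hc : k ≤ c.val) :
    pathEnd u l c ≤ u c := by
  induction l generalizing u with
  | nil => simp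
  | cons p l ih =>
    obtain ⟨h1, h2, h3, h4⟩ := h
    rw [pathEnd_cons]
    refine le_trans (ih h4) ?_
    rcases eq_or_ne c p.2 with rfl | hne2
    · simpa using h3.le
    · have hne1 : c ≠ p.1 := fun hh => by subst hh; omega
      rw [Equiv.Perm.mul_apply, Equiv.swap_apply_of_ne_of_ne hne1 hne2]

-- strict version: if some step uses c as first component
lemma lt_pathEnd_of_mem {u : Equiv.Perm (Fin n)} {l} (h : IsKPath k u l) {c : Fin n}
    (hmem : ∃ q ∈ l, q.1 = c) : u c < pathEnd u l c := by
  induction l generalizing u with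
  | nil => simp at hmem
  | cons p l ih =>
    obtain ⟨h1, h2, h3, h4⟩ := h
    rw [pathEnd_cons]
    rcases eq_or_ne c p.1 with rfl | hne1
    · calc u p.1 < u p.2 := h3
        _ = (u * Equiv.swap p.1 p.2) p.1 := by simp
        _ ≤ _ := le_pathEnd h4 h1
    · obtain ⟨q, hq, rfl⟩ := hmem
      have hq' : q ∈ l := by
        rcases List.mem_cons.1 hq with rfl | hq'
        · exact absurd rfl hne1
        · exact hq'
      have hck : q.1.val < k := (isKPath_mem h4 hq').1
      have hne2 : q.1 ≠ p.2 := fun hh => by rw [hh] at hck; omega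
      have heq : (u * Equiv.swap p.1 p.2) q.1 = u q.1 := by
        rw [Equiv.Perm.mul_apply, Equiv.swap_apply_of_ne_of_ne hne1 hne2]
      rw [← heq]
      exact ih h4 ⟨q, hq', rfl⟩

lemma pathEnd_lt_of_mem {u : Equiv.Perm (Fin n)} {l} (h : IsKPath k u l) {c : Fin n}
    (hmem : ∃ q ∈ l, q.2 = c) : pathEnd u l c < u c := by
  induction l generalizing u with
  | nil => simp at hmem
  | cons p l ih =>
    obtain ⟨h1, h2, h3, h4⟩ := h
    rw [pathEnd_cons]
    rcases eq_or_ne c p.2 with rfl | hne2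
    · calc pathEnd (u * Equiv.swap p.1 p.2) l p.2 ≤ (u * Equiv.swap p.1 p.2) p.2 := pathEnd_le h4 h2
        _ = u p.1 := by simp
        _ < u p.2 := h3
    · obtain ⟨q, hq, rfl⟩ := hmem
      have hq' : q ∈ l := by
        rcases List.mem_cons.1 hq with rfl | hq'
        · exact absurd rfl hne2
        · exact hq'
      have hck : k ≤ q.2.val := (isKPath_mem h4 hq').2
      have hne1 : q.2 ≠ p.1 := fun hh => by rw [hh] at hck; omega
      have heq : (u * Equiv.swap p.1 p.2) q.2 = u q.2 := by
        rw [Equiv.Perm.mul_apply, Equiv.swap_apply_of_ne_of_ne hne1 hne2]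
      rw [← heq]
      exact ih h4 ⟨q, hq', rfl⟩

-- positions fixed by the product of a path are never used
lemma not_mem_of_fixed {u : Equiv.Perm (Fin n)} {l} {ζ : Equiv.Perm (Fin n)}
    (h : IsKPath k u l) (hend : pathEnd u l = u * ζ) {c : Fin n} (hc : ζ c = c) :
    ∀ q ∈ l, q.1 ≠ c ∧ q.2 ≠ c := by
  intro q hq
  have hfix : pathEnd u l c = u c := by rw [hend, Equiv.Perm.mul_apply, hc]
  constructor
  · rintro rfl
    exact absurd hfix (ne_of_gt (lt_pathEnd_of_mem h ⟨q, hq, rfl⟩))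
  · rintro rfl
    exact absurd hfix (ne_of_lt (pathEnd_lt_of_mem h ⟨q, hq, rfl⟩))

-- positions of all steps lie in the support of the product
lemma mem_support_of_mem {u : Equiv.Perm (Fin n)} {l} {ζ : Equiv.Perm (Fin n)}
    (h : IsKPath k u l) (hend : pathEnd u l = u * ζ) {q : Fin n × Fin n} (hq : q ∈ l) :
    q.1 ∈ ζ.support ∧ q.2 ∈ ζ.support := by
  constructor
  · by_contra hc
    simp only [Equiv.Perm.mem_support, not_not] at hc
    exact (not_mem_of_fixed h hend hc q hq).1 rfl
  · by_contra hc
    simp only [Equiv.Perm.mem_support, not_not] at hc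
    exact (not_mem_of_fixed h hend hc q hq).2 rfl

-- necessity of the order condition
lemma cond_of_path {u : Equiv.Perm (Fin n)} {l} {ζ : Equiv.Perm (Fin n)}
    (h : IsKPath k u l) (hend : pathEnd u l = u * ζ) {c : Fin n} (hc : ζ c ≠ c) :
    (c.val < k → u c < u (ζ c)) ∧ (k ≤ c.val → u (ζ c) < u c) := by
  have hfix : pathEnd u l c = u (ζ c) := by rw [hend]; rfl
  constructor
  · intro hk
    have := le_pathEnd h hk
    rw [hfix] at this
    exact lt_of_le_of_ne this (fun hh => hc (u.injective hh).symm)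
  · intro hk
    have := pathEnd_le h hk
    rw [hfix] at this
    exact lt_of_le_of_ne this (fun hh => hc (u.injective hh))



/-! ### Unimodal list lemmas -/

lemma chain_gt_append_singleton {z μ : Fin n} {L : List (Fin n)}
    (h : List.Chain (· > ·) z L) (hall : ∀ y ∈ z :: L, μ < y) :
    List.Chain (· > ·) z (L ++ [μ]) := by
  induction L generalizing z with
  | nil => exact List.Chain.cons (hall z (by simp)) List.Chain.nil
  | cons h' t ih =>
    obtain ⟨hzh, hrest⟩ := List.isChain_cons_cons.1 h
    exact List.Chain.cons hzh (ih hrest (fun y hy => hall y (by simp at hy ⊢; tauto)))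

lemma chain_gt_of_append {z : Fin n} {L L' : List (Fin n)}
    (h : List.Chain (· > ·) z (L ++ L')) : List.Chain (· > ·) z L := by
  induction L generalizing z with
  | nil => exact List.Chain.nil
  | cons h' t ih =>
    obtain ⟨hzh, hrest⟩ := List.isChain_cons_cons.1 h
    exact List.Chain.cons hzh (ih hrest)

lemma unimodal_cons_of_lt {μ : Fin n} {L : List (Fin n)}
    (h : Unimodal L) (hall : ∀ y ∈ L, μ < y) : Unimodal (μ :: L) := by
  obtain ⟨L1, L2, rfl, h1, h2, h3⟩ := h
  refine ⟨μ :: L1, L2, rfl, by simp, ?_, ?_⟩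
  · cases L1 with
    | nil => exact absurd rfl h1
    | cons a t =>
      exact List.isChain_cons.2 ⟨fun y hy => by simp at hy; exact hy ▸ hall a (by simp), h2⟩
  · intro x hx
    cases L1 with
    | nil => exact absurd rfl h1
    | cons a t =>
      apply h3
      rwa [List.getLast?_cons_cons] at hx

lemma unimodal_append_singleton_of_lt {μ : Fin n} {L : List (Fin n)}
    (h : Unimodal L) (hall : ∀ y ∈ L, μ < y) : Unimodal (L ++ [μ]) := by
  obtain ⟨L1, L2, rfl, h1, h2, h3⟩ := h
  refine ⟨L1, L2 ++ [μ], by simp, h1, h2, ?_⟩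
  intro x hx
  refine chain_gt_append_singleton (h3 x hx) ?_
  intro y hy
  rcases List.mem_cons.1 hy with rfl | hy'
  · exact hall y (by
      have := List.mem_of_mem_getLast? hx
      simp [this])
  · exact hall y (by simp [hy'])

lemma unimodal_tail {x : Fin n} {L : List (Fin n)}
    (h : Unimodal (x :: L)) (hL : L ≠ []) : Unimodal L := by
  obtain ⟨L1, L2, heq, h1, h2, h3⟩ := h
  cases L1 with
  | nil => exact absurd rfl h1
  | cons a t =>
    simp only [List.cons_append, List.cons.injEq] at heq
    obtain ⟨rfl, rfl⟩ := heq
    cases t with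
    | nil =>
      have hch := h3 x (by simp)
      cases L2 with
      | nil => exact absurd rfl hL
      | cons b t2 =>
        obtain ⟨hab, hrest⟩ := List.isChain_cons_cons.1 hch
        exact ⟨[b], t2, rfl, by simp, List.IsChain.singleton b, by intro y hy; simp at hy; subst hy; exact hrest⟩
    | cons c t' =>
      refine ⟨c :: t', L2, rfl, by simp, h2.tail, ?_⟩
      intro y hy
      exact h3 y (by rwa [List.getLast?_cons_cons])

lemma unimodal_dropLast {x : Fin n} {L : List (Fin n)}
    (h : Unimodal (L ++ [x])) (hL : L ≠ []) : Unimodal L := by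
  obtain ⟨L1, L2, heq, h1, h2, h3⟩ := h
  rcases List.eq_nil_or_concat L2 with rfl | ⟨L2', y, hy⟩
  · rw [List.append_nil] at heq
    refine ⟨L, [], by simp, hL, ?_, fun _ _ => List.IsChain.singleton _⟩
    have hpre : L <+: L ++ [x] := ⟨[x], rfl⟩
    exact List.IsChain.prefix (heq ▸ h2) (heq ▸ hpre)
  · rw [List.concat_eq_append] at hy
    subst hy
    have heq2 : L ++ [x] = (L1 ++ L2') ++ [y] := by simp [heq]
    have hxy : x = y := by
      have h5 := congrArg List.getLast? heq2
      simpa using h5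
    subst hxy
    have hL' : L = L1 ++ L2' := by
      have h6 := congrArg List.dropLast heq2
      simpa using h6
    refine ⟨L1, L2', hL', h1, h2, ?_⟩
    intro z hz
    exact chain_gt_of_append (h3 z hz)

/-- the strict minimum of a list with unimodal labels is at the front or at the back -/
lemma unimodal_min_split {m : Fin n} {X Y : List (Fin n)}
    (h : Unimodal (X ++ m :: Y)) (hX : ∀ x ∈ X, m < x) (hY : ∀ y ∈ Y, m < y) :
    X = [] ∨ Y = [] := by
  obtain ⟨L1, L2, h0, h1, h2, h3⟩ := h
  replace h2 := List.isChain_iff_pairwise.1 h2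
  have hm : m ∈ L1 ++ L2 := by rw [← h0]; simp
  rcases List.mem_append.1 hm with hm1 | hm2
  · left
    cases L1 with
    | nil => simp at hm1
    | cons a t =>
      have ha : a = m := by
        rcases List.mem_cons.1 hm1 with rfl | hmt
        · rfl
        · exfalso
          have ham : a < m := (List.pairwise_cons.1 h2).1 m hmt
          cases X with
          | nil =>
            simp only [List.nil_append, List.cons_append, List.cons.injEq] at h0
            exact absurd (h0.1 ▸ ham) (lt_irrefl m)
          | cons x0 X' =>
            simp only [List.cons_append, List.cons.injEq] at h0
            have : m < a := h0.1 ▸ hX x0 (by simp)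
            exact absurd (lt_trans ham this) (lt_irrefl a)
      subst ha
      cases X with
      | nil => rfl
      | cons x0 X' =>
        exfalso
        simp only [List.cons_append, List.cons.injEq] at h0
        exact absurd (h0.1 ▸ hX x0 (by simp)) (lt_irrefl a)
  · -- m ∈ L2 : m must be the last element
    have hL1ne := h1
    have hlast : L1.getLast? = some (L1.getLast h1) := List.getLast?_eq_getLast h1
    have hchain := h3 _ hlast
    replace hchain := List.isChain_iff_pairwise.1 hchain
    have hpw2 : List.Pairwise (· > ·) L2 := hchain.tail
    obtain ⟨L2a, L2b, rfl⟩ := List.append_of_mem hm2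
    cases L2b with
    | cons y rest =>
      exfalso
      have hmy : m > y := by
        have := (List.pairwise_append.1 hpw2).1
        have h7 : List.Pairwise (· > ·) (m :: y :: rest) := (List.pairwise_append.1 hpw2).2.1
        exact (List.pairwise_cons.1 h7).1 y (by simp)
      have hyL : y ∈ X ++ m :: Y := by rw [h0]; simp
      rcases List.mem_append.1 hyL with hyX | hyY
      · exact absurd (lt_trans (hX y hyX) hmy) (lt_irrefl _)
      · rcases List.mem_cons.1 hyY with rfl | hyY'
        · exact absurd hmy (lt_irrefl _)
        · exact absurd (lt_trans (hY y hyY') hmy) (lt_irrefl _)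
    | nil =>
      right
      cases Y with
      | nil => rfl
      | cons y0 Y' =>
        exfalso
        have h8 : (y0 :: Y').getLast? = some m := by
          have h81 := congrArg List.getLast? h0
          simp only [List.getLast?_append, List.getLast?_cons_cons] at h81 ⊢
          simpa using h81
        have h9 : m ∈ y0 :: Y' := List.mem_of_mem_getLast? h8
        rcases List.mem_cons.1 h9 with h10 | h10
        · exact absurd (h10 ▸ hY y0 (by simp)) (lt_irrefl _)
        · exact absurd (hY m (List.mem_cons_of_mem _ h10)) (lt_irrefl _)

lemma unimodalWith_unique {L L1 L2 M1 M2 : List (Fin n)}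
    (h : UnimodalWith L L1 L2) (h' : UnimodalWith L M1 M2) : L2.length = M2.length := by
  suffices haux : ∀ (A1 A2 B1 B2 : List (Fin n)), UnimodalWith L A1 A2 → UnimodalWith L B1 B2 →
      (∃ c, B1 = A1 ++ c ∧ A2 = c ++ B2) → A2.length = B2.length by
    obtain ⟨hL, -, -, -⟩ := id h
    obtain ⟨hL', -, -, -⟩ := id h'
    have heqq : L1 ++ L2 = M1 ++ M2 := by rw [← hL, ← hL']
    rcases List.append_eq_append_iff.1 heqq with ⟨c, hc1, hc2⟩ | ⟨c, hc1, hc2⟩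
    · exact haux L1 L2 M1 M2 h h' ⟨c, hc1, hc2⟩
    · exact (haux M1 M2 L1 L2 h' h ⟨c, hc1, hc2⟩).symm
  rintro A1 A2 B1 B2 ⟨hL1, hne1, hch1, hgt1⟩ ⟨hL2, hne2, hch2, hgt2⟩ ⟨c, hc1, hc2⟩
  cases c with
  | nil => simp [hc2]
  | cons h t =>
    exfalso
    subst hc1 hc2
    replace hch2 := List.isChain_iff_pairwise.1 hch2
    have hlt : A1.getLast hne1 < h := by
      have := (List.pairwise_append.1 hch2).2.2
      exact this _ (List.getLast_mem hne1) h (by simp)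
    have hgt : A1.getLast hne1 > h := by
      have hch := hgt1 _ (List.getLast?_eq_getLast hne1)
      obtain ⟨hh, _⟩ := List.isChain_cons_cons.1 hch
      exact hh
    exact absurd (lt_trans hlt hgt) (lt_irrefl _)



lemma swap_mem_of_mem {S : Finset (Fin n)} {a b c : Fin n}
    (ha : a ∈ S) (hb : b ∈ S) (hc : c ∈ S) : Equiv.swap a b c ∈ S := by
  rcases eq_or_ne c a with rfl | h1
  · simpa using hb
  · rcases eq_or_ne c b with rfl | h2
    · simpa using ha
    · rwa [Equiv.swap_apply_of_ne_of_ne h1 h2]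

lemma pathLabels_mem {v : Equiv.Perm (Fin n)} {l} {S : Finset (Fin n)}
    (h : IsKPath k v l) (hS : ∀ q ∈ l, q.1 ∈ S ∧ q.2 ∈ S) :
    ∀ x ∈ pathLabels v l, ∃ c ∈ S, x = v c := by
  induction l generalizing v with
  | nil => simp
  | cons p l ih =>
    obtain ⟨h1, h2, h3, h4⟩ := h
    intro x hx
    rcases List.mem_cons.1 hx with rfl | hx'
    · exact ⟨p.1, (hS p (by simp)).1, rfl⟩
    · obtain ⟨c, hcS, rfl⟩ := ih h4 (fun q hq => hS q (by simp [hq])) x hx'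
      exact ⟨Equiv.swap p.1 p.2 c,
        swap_mem_of_mem (hS p (by simp)).1 (hS p (by simp)).2 hcS, rfl⟩

/-- the minimal value sits still at a position `b ≥ k`, and all labels exceed it -/
lemma min_qside {v : Equiv.Perm (Fin n)} {l} {S : Finset (Fin n)} {b : Fin n}
    (h : IsKPath k v l) (hS : ∀ q ∈ l, q.1 ∈ S ∧ q.2 ∈ S) (hb : b ∈ S) (hbk : k ≤ b.val)
    (hmin : ∀ c ∈ S, c ≠ b → v b < v c) :
    pathEnd v l b = v b ∧ ∀ x ∈ pathLabels v l, v b < x := by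
  induction l generalizing v with
  | nil => simp
  | cons p l ih =>
    obtain ⟨h1, h2, h3, h4⟩ := h
    have hp1S := (hS p (by simp)).1
    have hp2S := (hS p (by simp)).2
    have hp1b : p.1 ≠ b := fun hh => by rw [hh] at h1; omega
    have hp2b : p.2 ≠ b := by
      rintro rfl
      exact absurd h3 (not_lt_of_gt (hmin p.1 hp1S hp1b))
    have htb : Equiv.swap p.1 p.2 b = b :=
      Equiv.swap_apply_of_ne_of_ne (Ne.symm hp1b) (Ne.symm hp2b)
    have hvb : (v * Equiv.swap p.1 p.2) b = v b := by
      rw [Equiv.Perm.mul_apply, htb]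
    have hmin' : ∀ c ∈ S, c ≠ b → (v * Equiv.swap p.1 p.2) b < (v * Equiv.swap p.1 p.2) c := by
      intro c hcS hcb
      rw [hvb, Equiv.Perm.mul_apply]
      refine hmin _ (swap_mem_of_mem hp1S hp2S hcS) ?_
      intro hh
      exact hcb ((Equiv.swap p.1 p.2).injective (hh.trans htb.symm))
    obtain ⟨ih1, ih2⟩ := ih h4 (fun q hq => hS q (by simp [hq])) hmin'
    refine ⟨by rwa [pathEnd_cons, ih1], ?_⟩
    intro x hx
    rcases List.mem_cons.1 hx with rfl | hx'
    · exact hmin p.1 hp1S hp1b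
    · have := ih2 x hx'
      rwa [hvb] at this

/-- the minimal value sits still at an unused position `a₀ < k`, and all labels exceed it -/
lemma min_pside {v : Equiv.Perm (Fin n)} {l} {S : Finset (Fin n)} {a₀ : Fin n}
    (h : IsKPath k v l) (hS : ∀ q ∈ l, q.1 ∈ S ∧ q.2 ∈ S) (ha : a₀ ∈ S) (hak : a₀.val < k)
    (hnot : ∀ q ∈ l, q.1 ≠ a₀)
    (hmin : ∀ c ∈ S, c ≠ a₀ → v a₀ < v c) :
    pathEnd v l a₀ = v a₀ ∧ ∀ x ∈ pathLabels v l, v a₀ < x := by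
  induction l generalizing v with
  | nil => simp
  | cons p l ih =>
    obtain ⟨h1, h2, h3, h4⟩ := h
    have hp1S := (hS p (by simp)).1
    have hp2S := (hS p (by simp)).2
    have hp1a : p.1 ≠ a₀ := hnot p (by simp)
    have hp2a : p.2 ≠ a₀ := fun hh => by rw [hh] at h2; omega
    have hta : Equiv.swap p.1 p.2 a₀ = a₀ :=
      Equiv.swap_apply_of_ne_of_ne (Ne.symm hp1a) (Ne.symm hp2a)
    have hva : (v * Equiv.swap p.1 p.2) a₀ = v a₀ := by
      rw [Equiv.Perm.mul_apply, hta]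
    have hmin' : ∀ c ∈ S, c ≠ a₀ → (v * Equiv.swap p.1 p.2) a₀ < (v * Equiv.swap p.1 p.2) c := by
      intro c hcS hca
      rw [hva, Equiv.Perm.mul_apply]
      refine hmin _ (swap_mem_of_mem hp1S hp2S hcS) ?_
      intro hh
      exact hca ((Equiv.swap p.1 p.2).injective (hh.trans hta.symm))
    obtain ⟨ih1, ih2⟩ := ih h4 (fun q hq => hS q (by simp [hq])) (fun q hq => hnot q (by simp [hq])) hmin'
    refine ⟨by rwa [pathEnd_cons, ih1], ?_⟩
    intro x hx
    rcases List.mem_cons.1 hx with rfl | hx'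
    · exact hmin p.1 hp1S hp1a
    · have := ih2 x hx'
      rwa [hva] at this

/-! ### deleting a point from a cycle -/

section Delete

variable {η : Equiv.Perm (Fin n)} {a₀ : Fin n}

lemma eta_sq_ne {N : ℕ} (hcyc : η.IsCycle) (hcard : η.support.card = N) (hN : 3 ≤ N)
    (ha : η a₀ ≠ a₀) : η (η a₀) ≠ a₀ := by
  intro hh
  have := hcyc.eq_swap_of_apply_apply_eq_self ha hh
  rw [this, Equiv.Perm.card_support_swap ha.symm] at hcard
  omega

-- η' = swap a₀ (η⁻¹ a₀) * η  : deletes p = η⁻¹ a₀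
lemma etaP_apply_p (ha : η a₀ ≠ a₀) :
    (Equiv.swap a₀ (η⁻¹ a₀) * η) (η⁻¹ a₀) = η⁻¹ a₀ := by
  rw [Equiv.Perm.mul_apply, Equiv.Perm.apply_inv_self, Equiv.swap_apply_left]

lemma etaP_apply_a₀ (ha : η a₀ ≠ a₀) (h2 : η (η a₀) ≠ a₀) :
    (Equiv.swap a₀ (η⁻¹ a₀) * η) a₀ = η a₀ := by
  rw [Equiv.Perm.mul_apply]
  apply Equiv.swap_apply_of_ne_of_ne ha
  intro hh
  exact h2 (by rw [hh, Equiv.Perm.apply_inv_self])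

lemma etaP_apply_pre (ha : η a₀ ≠ a₀) (h2 : η (η a₀) ≠ a₀) :
    (Equiv.swap a₀ (η⁻¹ a₀) * η) (η⁻¹ (η⁻¹ a₀)) = a₀ := by
  rw [Equiv.Perm.mul_apply, Equiv.Perm.apply_inv_self, Equiv.swap_apply_right]

lemma etaP_apply_other (ha : η a₀ ≠ a₀) {c : Fin n}
    (hc1 : c ≠ η⁻¹ a₀) (hc2 : c ≠ η⁻¹ (η⁻¹ a₀)) :
    (Equiv.swap a₀ (η⁻¹ a₀) * η) c = η c := by
  rw [Equiv.Perm.mul_apply]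
  apply Equiv.swap_apply_of_ne_of_ne
  · intro hh; exact hc1 (by rw [← hh, Equiv.Perm.inv_apply_self])
  · intro hh; exact hc2 (by rw [← hh, Equiv.Perm.inv_apply_self])

lemma etaP_support (ha : η a₀ ≠ a₀) (h2 : η (η a₀) ≠ a₀) :
    (Equiv.swap a₀ (η⁻¹ a₀) * η).support = η.support.erase (η⁻¹ a₀) := by
  have hpa : η⁻¹ a₀ ≠ a₀ := by
    intro hh
    have h9 := congrArg η hh
    rw [Equiv.Perm.apply_inv_self] at h9
    exact ha h9.symm
  ext c
  rw [Finset.mem_erase, Equiv.Perm.mem_support, Equiv.Perm.mem_support]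
  constructor
  · intro hc
    rcases eq_or_ne c (η⁻¹ a₀) with rfl | h3
    · exact absurd (etaP_apply_p ha) hc
    constructor
    · exact h3
    · rcases eq_or_ne c (η⁻¹ (η⁻¹ a₀)) with rfl | h4
      · rw [Equiv.Perm.apply_inv_self]
        exact Ne.symm h3
      · rw [etaP_apply_other ha h3 h4] at hc
        exact hc
  · rintro ⟨h3, h4⟩
    rcases eq_or_ne c (η⁻¹ (η⁻¹ a₀)) with rfl | h5
    · rw [etaP_apply_pre ha h2]
      intro hh
      have h9 := congrArg η hh
      rw [Equiv.Perm.apply_inv_self] at h9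
      have h10 := congrArg η h9
      rw [Equiv.Perm.apply_inv_self] at h10
      exact h2 h10
    · rw [etaP_apply_other ha h3 h5]
      exact h4

lemma etaP_isCycle {N : ℕ} (hcyc : η.IsCycle) (hcard : η.support.card = N) (hN : 3 ≤ N)
    (ha : η a₀ ≠ a₀) : (Equiv.swap a₀ (η⁻¹ a₀) * η).IsCycle := by
  have h2 := eta_sq_ne hcyc hcard hN ha
  have hp : η (η⁻¹ a₀) = a₀ := Equiv.Perm.apply_inv_self η a₀
  have hswap : Equiv.swap a₀ (η⁻¹ a₀) = Equiv.swap (η⁻¹ a₀) (η (η⁻¹ a₀)) := by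
    rw [hp, Equiv.swap_comm]
  rw [hswap]
  apply hcyc.swap_mul
  · rw [hp]
    intro hh
    have h9 := congrArg η hh
    rw [Equiv.Perm.apply_inv_self] at h9
    exact ha h9
  · rw [hp]
    intro hh
    have h9 := congrArg η hh
    rw [Equiv.Perm.apply_inv_self] at h9
    exact h2 h9

end Delete


variable {η : Equiv.Perm (Fin n)} {a₀ : Fin n}

lemma etaD_apply_a₀ : (η * Equiv.swap a₀ (η⁻¹ a₀)) a₀ = a₀ := by
  rw [Equiv.Perm.mul_apply, Equiv.swap_apply_left, Equiv.Perm.apply_inv_self]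

lemma etaD_apply_p : (η * Equiv.swap a₀ (η⁻¹ a₀)) (η⁻¹ a₀) = η a₀ := by
  rw [Equiv.Perm.mul_apply, Equiv.swap_apply_right]

lemma etaD_apply_other {c : Fin n} (hc1 : c ≠ a₀) (hc2 : c ≠ η⁻¹ a₀) :
    (η * Equiv.swap a₀ (η⁻¹ a₀)) c = η c := by
  rw [Equiv.Perm.mul_apply, Equiv.swap_apply_of_ne_of_ne hc1 hc2]

lemma inv_ne_self_of_ne (ha : η a₀ ≠ a₀) : η⁻¹ a₀ ≠ a₀ := by
  intro hh
  have h9 := congrArg η hh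
  rw [Equiv.Perm.apply_inv_self] at h9
  exact ha h9.symm

lemma etaD_support (ha : η a₀ ≠ a₀) (h2 : η (η a₀) ≠ a₀) :
    (η * Equiv.swap a₀ (η⁻¹ a₀)).support = η.support.erase a₀ := by
  have hpa : η⁻¹ a₀ ≠ a₀ := inv_ne_self_of_ne ha
  ext c
  rw [Finset.mem_erase, Equiv.Perm.mem_support, Equiv.Perm.mem_support]
  constructor
  · intro hc
    rcases eq_or_ne c a₀ with rfl | h3
    · exact absurd etaD_apply_a₀ hc
    refine ⟨h3, ?_⟩
    rcases eq_or_ne c (η⁻¹ a₀) with rfl | h4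
    · intro hh
      rw [Equiv.Perm.apply_inv_self] at hh
      exact hpa hh.symm
    · rw [etaD_apply_other h3 h4] at hc
      exact hc
  · rintro ⟨h3, h4⟩
    rcases eq_or_ne c (η⁻¹ a₀) with rfl | h5
    · rw [etaD_apply_p]
      intro hh
      have h9 := congrArg η hh
      rw [Equiv.Perm.apply_inv_self] at h9
      exact h2 h9
    · rw [etaD_apply_other h3 h5]
      exact h4

lemma etaD_isCycle {N : ℕ} (hcyc : η.IsCycle) (hcard : η.support.card = N) (hN : 3 ≤ N)
    (ha : η a₀ ≠ a₀) : (η * Equiv.swap a₀ (η⁻¹ a₀)).IsCycle := by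
  have h2 := eta_sq_ne hcyc hcard hN ha
  have hx : η⁻¹ a₀ ≠ a₀ := inv_ne_self_of_ne ha
  have hffx : η⁻¹ (η⁻¹ a₀) ≠ a₀ := by
    intro hh
    have h9 := congrArg η hh
    rw [Equiv.Perm.apply_inv_self] at h9
    have h10 := congrArg η h9
    rw [Equiv.Perm.apply_inv_self] at h10
    exact h2 h10.symm
  have key : (Equiv.swap a₀ (η⁻¹ a₀) * η⁻¹).IsCycle := by
    have := hcyc.inv.swap_mul (x := a₀) (by
        show η⁻¹ a₀ ≠ a₀
        exact hx) (by
        show η⁻¹ (η⁻¹ a₀) ≠ a₀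
        exact hffx)
    exact this
  have heq : η * Equiv.swap a₀ (η⁻¹ a₀) = (Equiv.swap a₀ (η⁻¹ a₀) * η⁻¹)⁻¹ := by
    rw [mul_inv_rev, Equiv.swap_inv, inv_inv]
  rw [heq]
  exact key.inv



lemma exists_first_split {α : Type*} {P : α → Prop} [DecidablePred P] {l : List α}
    (h : ∃ x ∈ l, P x) : ∃ l₁ x l₂, l = l₁ ++ x :: l₂ ∧ P x ∧ ∀ y ∈ l₁, ¬ P y := by
  induction l with
  | nil => simp at h
  | cons a t ih =>
    by_cases ha : P a
    · exact ⟨[], a, t, rfl, ha, by simp⟩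
    · obtain ⟨x, hx, hPx⟩ := h
      rcases List.mem_cons.1 hx with rfl | hx'
      · exact absurd hPx ha
      · obtain ⟨l₁, x', l₂, rfl, hPx', hl₁⟩ := ih ⟨x, hx', hPx⟩
        refine ⟨a :: l₁, x', l₂, rfl, hPx', ?_⟩
        intro y hy
        rcases List.mem_cons.1 hy with rfl | hy'
        · exact ha
        · exact hl₁ y hy'

lemma pathEnd_mem {v : Equiv.Perm (Fin n)} {l} {S : Finset (Fin n)}
    (h : IsKPath k v l) (hS : ∀ q ∈ l, q.1 ∈ S ∧ q.2 ∈ S) :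
    ∀ c ∈ S, ∃ d ∈ S, pathEnd v l c = v d := by
  induction l generalizing v with
  | nil => exact fun c hc => ⟨c, hc, by simp⟩
  | cons p l ih =>
    obtain ⟨h1, h2, h3, h4⟩ := h
    intro c hc
    obtain ⟨d, hd, hda⟩ := ih h4 (fun q hq => hS q (by simp [hq])) c hc
    rw [pathEnd_cons]
    refine ⟨Equiv.swap p.1 p.2 d,
      swap_mem_of_mem (hS p (by simp)).1 (hS p (by simp)).2 hd, ?_⟩
    rw [hda, Equiv.Perm.mul_apply]

lemma unimodalWith_cons_of_lt {μ : Fin n} {L L1 L2 : List (Fin n)}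
    (h : UnimodalWith L L1 L2) (hall : ∀ y ∈ L, μ < y) :
    UnimodalWith (μ :: L) (μ :: L1) L2 := by
  obtain ⟨rfl, h1, h2, h3⟩ := h
  refine ⟨rfl, by simp, ?_, ?_⟩
  · cases L1 with
    | nil => exact absurd rfl h1
    | cons a t =>
      exact List.isChain_cons.2 ⟨fun y hy => by simp at hy; exact hy ▸ hall a (by simp), h2⟩
  · intro x hx
    cases L1 with
    | nil => exact absurd rfl h1
    | cons a t =>
      apply h3
      rwa [List.getLast?_cons_cons] at hx

lemma unimodalWith_append_singleton_of_lt {μ : Fin n} {L L1 L2 : List (Fin n)}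
    (h : UnimodalWith L L1 L2) (hall : ∀ y ∈ L, μ < y) :
    UnimodalWith (L ++ [μ]) L1 (L2 ++ [μ]) := by
  obtain ⟨rfl, h1, h2, h3⟩ := h
  refine ⟨by simp, h1, h2, ?_⟩
  intro x hx
  refine chain_gt_append_singleton (h3 x hx) ?_
  intro y hy
  rcases List.mem_cons.1 hy with rfl | hy'
  · exact hall y (by
      have := List.mem_of_mem_getLast? hx
      simp [this])
  · exact hall y (by simp [hy'])

def KCond (k : ℕ) (w η : Equiv.Perm (Fin n)) : Prop :=
  ∀ c : Fin n, η c ≠ c → (c.val < k → w c < w (η c)) ∧ (k ≤ c.val → w (η c) < w c)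



lemma main (k : ℕ) : ∀ N : ℕ, 2 ≤ N → ∀ (w η : Equiv.Perm (Fin n)), η.IsCycle →
    η.support.card = N → KCond k w η →
    ∃ l : List (Fin n × Fin n),
      (IsKPath k w l ∧ pathEnd w l = w * η ∧ Unimodal (pathLabels w l)) ∧
      (∀ l', IsKPath k w l' → pathEnd w l' = w * η → Unimodal (pathLabels w l') → l' = l) ∧
      l.length + 1 = N ∧
      ∃ L1 L2, UnimodalWith (pathLabels w l) L1 L2 ∧
        L2.length + 1 = (Finset.univ.filter fun i : Fin n => i.val < k ∧ η i ≠ i).card := by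
  intro N
  induction N using Nat.strong_induction_on with
  | _ N IH =>
  intro hN w η hcyc hcard hcond
  have hsuppne : η.support.Nonempty := by
    rw [← Finset.card_pos, hcard]; omega
  obtain ⟨a₀, ha₀S, hmin⟩ := η.support.exists_min_image w hsuppne
  have hminlt : ∀ c ∈ η.support, c ≠ a₀ → w a₀ < w c := by
    intro c hc hne
    exact lt_of_le_of_ne (hmin c hc) (fun hh => hne (w.injective hh.symm))
  have ha₀ : η a₀ ≠ a₀ := Equiv.Perm.mem_support.1 ha₀S
  have hηa₀S : η a₀ ∈ η.support := Equiv.Perm.apply_mem_support.2 ha₀S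
  have ha₀k : a₀.val < k := by
    by_contra hh
    push_neg at hh
    exact absurd ((hcond a₀ ha₀).2 hh) (not_lt_of_ge (hmin _ hηa₀S))
  have hpa : η⁻¹ a₀ ≠ a₀ := inv_ne_self_of_ne ha₀
  have hηp : η (η⁻¹ a₀) = a₀ := Equiv.Perm.apply_inv_self η a₀
  have hpS : η⁻¹ a₀ ∈ η.support := by
    rw [Equiv.Perm.mem_support, hηp]
    exact fun hh => hpa hh.symm
  have hpk : k ≤ (η⁻¹ a₀).val := by
    by_contra hh
    push_neg at hh
    have h9 := (hcond (η⁻¹ a₀) (by rw [hηp]; exact fun hh2 => hpa hh2.symm)).1 hh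
    rw [hηp] at h9
    exact absurd h9 (not_lt_of_ge (hmin _ hpS))
  have hwa₀p : w a₀ < w (η⁻¹ a₀) := hminlt _ hpS hpa
  -- the common first/last step
  rcases eq_or_lt_of_le hN with hN2 | hN3
  · -- base case N = 2
    have hsupp : ({a₀, η⁻¹ a₀} : Finset (Fin n)) = η.support := by
      apply Finset.eq_of_subset_of_card_le
      · intro c hc
        rcases Finset.mem_insert.1 hc with rfl | hc'
        · exact ha₀S
        · rw [Finset.mem_singleton] at hc'
          exact hc' ▸ hpS
      · rw [hcard, ← hN2]
        rw [Finset.card_insert_of_notMem (by simpa using fun hh => hpa hh.symm),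
          Finset.card_singleton]
    have hηa₀p : η a₀ = η⁻¹ a₀ := by
      have h9 : η a₀ ∈ ({a₀, η⁻¹ a₀} : Finset (Fin n)) := hsupp ▸ hηa₀S
      rcases Finset.mem_insert.1 h9 with hh | hh
      · exact absurd hh ha₀
      · rwa [Finset.mem_singleton] at hh
    have hswap : η = Equiv.swap a₀ (η⁻¹ a₀) := by
      apply Equiv.ext
      intro c
      rcases eq_or_ne c a₀ with rfl | hc1
      · rw [Equiv.swap_apply_left, hηa₀p]
      · rcases eq_or_ne c (η⁻¹ a₀) with rfl | hc2
        · rw [Equiv.swap_apply_right, hηp]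
        · rw [Equiv.swap_apply_of_ne_of_ne hc1 hc2]
          by_contra hh
          have : c ∈ η.support := Equiv.Perm.mem_support.2 hh
          rw [← hsupp] at this
          rcases Finset.mem_insert.1 this with h | h
          · exact hc1 h
          · exact hc2 (Finset.mem_singleton.1 h)
    refine ⟨[(a₀, η⁻¹ a₀)], ⟨⟨ha₀k, hpk, hwa₀p, trivial⟩, ?_, ?_⟩, ?_, ?_, ?_⟩
    · rw [pathEnd_cons, pathEnd_nil]
      exact congrArg (fun z => w * z) hswap.symm
    · exact ⟨[w a₀], [], by simp, by simp, List.IsChain.singleton _, fun _ _ => List.IsChain.singleton _⟩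
    · -- uniqueness
      intro l' hP' hE' hU'
      have hsteps : ∀ q ∈ l', q.1 ∈ η.support ∧ q.2 ∈ η.support :=
        fun q hq => mem_support_of_mem hP' hE' hq
      cases l' with
      | nil =>
        exfalso
        obtain ⟨L1, L2, hL, hL1, _, _⟩ := hU'
        simp only [pathLabels_nil] at hL
        exact hL1 (List.append_eq_nil_iff.1 hL.symm).1
      | cons q rest =>
        obtain ⟨hq1k, hq2k, hqlt, hPrest⟩ := hP'
        have hq1 : q.1 = a₀ := by
          have h9 := (hsteps q (by simp)).1
          rw [← hsupp] at h9
          rcases Finset.mem_insert.1 h9 with h | h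
          · exact h
          · rw [Finset.mem_singleton] at h
            rw [h] at hq1k
            omega
        have hq2 : q.2 = η⁻¹ a₀ := by
          have h9 := (hsteps q (by simp)).2
          rw [← hsupp] at h9
          rcases Finset.mem_insert.1 h9 with h | h
          · rw [h] at hq2k; omega
          · rwa [Finset.mem_singleton] at h
        have hq : q = (a₀, η⁻¹ a₀) := Prod.ext hq1 hq2
        subst hq
        have hrest : pathEnd (w * Equiv.swap a₀ (η⁻¹ a₀)) rest
            = (w * Equiv.swap a₀ (η⁻¹ a₀)) * 1 := by
          rw [mul_one]
          have h9 : pathEnd w ((a₀, η⁻¹ a₀) :: rest) = w * Equiv.swap a₀ (η⁻¹ a₀) := by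
            rw [hE']
            exact congrArg (fun z => w * z) hswap
          rw [pathEnd_cons] at h9
          exact h9
        cases rest with
        | nil => rfl
        | cons q' rest' =>
          exfalso
          have h9 := mem_support_of_mem hPrest hrest (q := q') (by simp)
          simp at h9
    · simp only [List.length_singleton]
      omega
    · refine ⟨[w a₀], [], ⟨by simp, by simp, List.IsChain.singleton _, fun _ _ => List.IsChain.singleton _⟩, ?_⟩
      have hfilter : (Finset.univ.filter fun i : Fin n => i.val < k ∧ η i ≠ i) = {a₀} := by
        ext c
        simp only [Finset.mem_filter, Finset.mem_univ, true_and, Finset.mem_singleton]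
        constructor
        · rintro ⟨hck, hc⟩
          have h9 : c ∈ η.support := Equiv.Perm.mem_support.2 hc
          rw [← hsupp] at h9
          rcases Finset.mem_insert.1 h9 with h | h
          · exact h
          · rw [Finset.mem_singleton] at h
            rw [h] at hck; omega
        · rintro rfl
          exact ⟨ha₀k, ha₀⟩
      rw [hfilter, Finset.card_singleton]
      simp
  · -- inductive step N ≥ 3
    have hN3' : 3 ≤ N := hN3
    have h2 : η (η a₀) ≠ a₀ := eta_sq_ne hcyc hcard hN3' ha₀
    have hqp' : η a₀ ≠ η⁻¹ a₀ := by
      intro hh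
      exact h2 (by rw [hh, hηp])
    have hqppne : w (η a₀) ≠ w (η⁻¹ a₀) := fun hh => hqp' (w.injective hh)
    rcases lt_or_gt_of_ne hqppne with hB | hA
    · -- CASE B : w (η a₀) < w (η⁻¹ a₀) ; last step (a₀, η⁻¹ a₀)
      have hcyc' : (η * Equiv.swap a₀ (η⁻¹ a₀)).IsCycle := etaD_isCycle hcyc hcard hN3' ha₀
      have hsupp' : (η * Equiv.swap a₀ (η⁻¹ a₀)).support = η.support.erase a₀ :=
        etaD_support ha₀ h2
      have hcard' : (η * Equiv.swap a₀ (η⁻¹ a₀)).support.card = N - 1 := by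
        rw [hsupp', Finset.card_erase_of_mem ha₀S, hcard]
      have hcond' : KCond k w (η * Equiv.swap a₀ (η⁻¹ a₀)) := by
        intro c hc
        have hcS : c ∈ η.support.erase a₀ := by
          rw [← hsupp']; exact Equiv.Perm.mem_support.2 hc
        obtain ⟨hca₀, hcSupp⟩ := Finset.mem_erase.1 hcS
        rcases eq_or_ne c (η⁻¹ a₀) with hceq | hcp
        · subst hceq
          rw [etaD_apply_p]
          constructor
          · intro hck; exfalso; omega
          · intro _; exact hB
        · rw [etaD_apply_other hca₀ hcp]
          exact hcond c (Equiv.Perm.mem_support.1 hcSupp)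
      obtain ⟨l₁, ⟨hP1, hE1, hU1⟩, huniq1, hlen1, L1a, L2a, hsplit1, hstat1⟩ :=
        IH (N - 1) (by omega) (by omega) w (η * Equiv.swap a₀ (η⁻¹ a₀)) hcyc' hcard' hcond'
      have hl₁pairs : ∀ q ∈ l₁, q.1 ∈ (η * Equiv.swap a₀ (η⁻¹ a₀)).support ∧
          q.2 ∈ (η * Equiv.swap a₀ (η⁻¹ a₀)).support :=
        fun q hq => mem_support_of_mem hP1 hE1 hq
      have hall₁ : ∀ y ∈ pathLabels w l₁, w a₀ < y := by
        intro y hy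
        obtain ⟨c, hcS, rfl⟩ := pathLabels_mem hP1 hl₁pairs y hy
        rw [hsupp', Finset.mem_erase] at hcS
        exact hminlt c hcS.2 hcS.1
      have hva : pathEnd w l₁ a₀ = w a₀ := by
        rw [hE1, Equiv.Perm.mul_apply, etaD_apply_a₀]
      have hvp : pathEnd w l₁ (η⁻¹ a₀) = w (η a₀) := by
        rw [hE1, Equiv.Perm.mul_apply, etaD_apply_p]
      have hlabcomp : pathLabels w (l₁ ++ [(a₀, η⁻¹ a₀)]) = pathLabels w l₁ ++ [w a₀] := by
        rw [pathLabels_append]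
        simp only [pathLabels_cons, pathLabels_nil]
        rw [hva]
      refine ⟨l₁ ++ [(a₀, η⁻¹ a₀)], ⟨?_, ?_, ?_⟩, ?_, ?_, ?_⟩
      · refine isKPath_append.2 ⟨hP1, ha₀k, hpk, ?_, trivial⟩
        show pathEnd w l₁ a₀ < pathEnd w l₁ (η⁻¹ a₀)
        rw [hva, hvp]
        exact hminlt (η a₀) hηa₀S ha₀
      · rw [pathEnd_append, pathEnd_cons, pathEnd_nil, hE1, mul_assoc, mul_assoc,
          Equiv.swap_mul_self, mul_one]
      · rw [hlabcomp]
        exact unimodal_append_singleton_of_lt hU1 hall₁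
      · -- uniqueness
        intro l' hP' hE' hU'
        have hsteps : ∀ q ∈ l', q.1 ∈ η.support ∧ q.2 ∈ η.support :=
          fun q hq => mem_support_of_mem hP' hE' hq
        have hexists : ∃ q ∈ l', q.1 = a₀ := by
          by_contra hh
          push_neg at hh
          have h9 := (min_pside hP' hsteps ha₀S ha₀k hh hminlt).1
          rw [hE'] at h9
          exact ha₀ (w.injective h9)
        obtain ⟨lA, q, lB, rfl, hq1, hqA⟩ := exists_first_split hexists
        obtain ⟨q1, b⟩ := q
        dsimp at hq1
        subst q1
        rw [isKPath_append] at hP'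
        obtain ⟨hPA, hPq⟩ := hP'
        obtain ⟨hq1k, hqbk, hqlt, hPB⟩ := hPq
        simp only [Prod.fst, Prod.snd] at hq1k hqbk hqlt hPB
        have hlApairs : ∀ r ∈ lA, r.1 ∈ η.support ∧ r.2 ∈ η.support :=
          fun r hr => hsteps r (by simp [hr])
        have hbS : b ∈ η.support := by
          have h9 := (hsteps (a₀, b) (by simp)).2
          simpa using h9
        have hminA := min_pside hPA hlApairs ha₀S ha₀k (fun r hr => hqA r hr) hminlt
        have hwBb : (pathEnd w lA * Equiv.swap a₀ b) b = w a₀ := by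
          rw [Equiv.Perm.mul_apply, Equiv.swap_apply_right, hminA.1]
        have hEB : pathEnd (pathEnd w lA * Equiv.swap a₀ b) lB = w * η := by
          rw [← hE', pathEnd_append, pathEnd_cons]
        have hlBpairs : ∀ r ∈ lB, r.1 ∈ η.support ∧ r.2 ∈ η.support :=
          fun r hr => hsteps r (by simp [hr])
        have hPfront : IsKPath k w (lA ++ [(a₀, b)]) :=
          isKPath_append.2 ⟨hPA, hq1k, hqbk, hqlt, trivial⟩
        have hwBeq : pathEnd w (lA ++ [(a₀, b)]) = pathEnd w lA * Equiv.swap a₀ b := by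
          rw [pathEnd_append, pathEnd_cons, pathEnd_nil]
        have hminB : ∀ c ∈ η.support, c ≠ b →
            (pathEnd w lA * Equiv.swap a₀ b) b < (pathEnd w lA * Equiv.swap a₀ b) c := by
          intro c hc hcb
          have hfrontpairs : ∀ r ∈ lA ++ [(a₀, b)], r.1 ∈ η.support ∧ r.2 ∈ η.support := by
            intro r hr
            rcases List.mem_append.1 hr with h | h
            · exact hlApairs r h
            · simp only [List.mem_singleton] at h
              subst h
              exact ⟨ha₀S, hbS⟩
          obtain ⟨d, hd, hda⟩ := pathEnd_mem hPfront hfrontpairs c hc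
          rw [hwBeq] at hda
          rw [hwBb, hda]
          apply lt_of_le_of_ne (hmin d hd)
          intro hh
          apply hcb
          apply (pathEnd w lA * Equiv.swap a₀ b).injective
          rw [hda, hwBb]
          exact hh.symm
        have hminq := min_qside hPB hlBpairs hbS hqbk hminB
        have hbp : b = η⁻¹ a₀ := by
          have h9 : (w * η) b = w a₀ := by rw [← hEB, hminq.1, hwBb]
          rw [Equiv.Perm.mul_apply] at h9
          have h10 : η b = a₀ := w.injective h9
          rw [← h10, Equiv.Perm.inv_apply_self]
        subst hbp
        have hlabels : pathLabels w (lA ++ (a₀, η⁻¹ a₀) :: lB)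
            = pathLabels w lA ++ w a₀ ::
              pathLabels (pathEnd w lA * Equiv.swap a₀ (η⁻¹ a₀)) lB := by
          rw [pathLabels_append]
          simp only [pathLabels_cons]
          rw [hminA.1]
        have hallB : ∀ y ∈ pathLabels (pathEnd w lA * Equiv.swap a₀ (η⁻¹ a₀)) lB, w a₀ < y := by
          intro y hy
          have h9 := hminq.2 y hy
          rwa [hwBb] at h9
        have hU'' : Unimodal (pathLabels w lA ++ w a₀ ::
            pathLabels (pathEnd w lA * Equiv.swap a₀ (η⁻¹ a₀)) lB) := by
          rw [← hlabels]; exact hU'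
        rcases unimodal_min_split hU'' hminA.2 hallB with hX | hY
        · -- lA = [] : contradiction with case B
          exfalso
          have hlAnil : lA = [] := by
            have h9 := length_pathLabels w lA
            rw [hX] at h9
            exact List.eq_nil_of_length_eq_zero h9.symm
          subst hlAnil
          simp only [pathEnd_nil] at hEB hPB
          have hgr : (w * Equiv.swap a₀ (η⁻¹ a₀)) * (Equiv.swap a₀ (η⁻¹ a₀) * η) = w * η := by
            rw [← mul_assoc, mul_assoc w, Equiv.swap_mul_self, mul_one]
          have hEB' : pathEnd (w * Equiv.swap a₀ (η⁻¹ a₀)) lB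
              = (w * Equiv.swap a₀ (η⁻¹ a₀)) * (Equiv.swap a₀ (η⁻¹ a₀) * η) := by
            rw [hgr]; exact hEB
          have hne : (Equiv.swap a₀ (η⁻¹ a₀) * η) a₀ ≠ a₀ := by
            rw [etaP_apply_a₀ ha₀ h2]; exact ha₀
          have h9 := (cond_of_path hPB hEB' hne).1 ha₀k
          rw [etaP_apply_a₀ ha₀ h2] at h9
          have e1 : (w * Equiv.swap a₀ (η⁻¹ a₀)) a₀ = w (η⁻¹ a₀) := by
            rw [Equiv.Perm.mul_apply, Equiv.swap_apply_left]
          have e2 : (w * Equiv.swap a₀ (η⁻¹ a₀)) (η a₀) = w (η a₀) := by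
            rw [Equiv.Perm.mul_apply, Equiv.swap_apply_of_ne_of_ne ha₀ hqp']
          rw [e1, e2] at h9
          exact absurd h9 (lt_asymm hB)
        · -- lB = [] : consistent, apply IH uniqueness
          have hlBnil : lB = [] := by
            have h9 := length_pathLabels (pathEnd w lA * Equiv.swap a₀ (η⁻¹ a₀)) lB
            rw [hY] at h9
            exact List.eq_nil_of_length_eq_zero h9.symm
          subst hlBnil
          simp only [pathEnd_nil] at hEB
          have hEA : pathEnd w lA = w * (η * Equiv.swap a₀ (η⁻¹ a₀)) := by
            rw [← mul_assoc, ← hEB, mul_assoc, Equiv.swap_mul_self, mul_one]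
          have hlAne : lA ≠ [] := by
            intro hh
            subst hh
            simp only [pathEnd_nil] at hEA
            have h9 : η * Equiv.swap a₀ (η⁻¹ a₀) = 1 :=
              mul_left_cancel (a := w) (by rw [mul_one]; exact hEA.symm)
            rw [h9] at hcard'
            simp at hcard'
            omega
          have hUA : Unimodal (pathLabels w lA) := by
            apply unimodal_dropLast (x := w a₀)
            · have h9 : pathLabels w (lA ++ [(a₀, η⁻¹ a₀)]) = pathLabels w lA ++ [w a₀] := by
                rw [hlabels]
                rfl
              rw [← h9]
              exact hU'
            · intro hh
              apply hlAne
              apply List.eq_nil_of_length_eq_zero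
              rw [← length_pathLabels w lA, hh]
              rfl
          have h9 := huniq1 lA hPA hEA hUA
          rw [h9]
      · simp only [List.length_append, List.length_singleton]
        omega
      · rw [hlabcomp]
        refine ⟨L1a, L2a ++ [w a₀], unimodalWith_append_singleton_of_lt hsplit1 hall₁, ?_⟩
        have hfe : (Finset.univ.filter fun i : Fin n =>
              i.val < k ∧ (η * Equiv.swap a₀ (η⁻¹ a₀)) i ≠ i)
            = (Finset.univ.filter fun i : Fin n => i.val < k ∧ η i ≠ i).erase a₀ := by
          ext c
          simp only [Finset.mem_filter, Finset.mem_univ, true_and, Finset.mem_erase]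
          constructor
          · rintro ⟨hck, hc⟩
            have h9 : c ∈ η.support.erase a₀ := by
              rw [← hsupp']; exact Equiv.Perm.mem_support.2 hc
            obtain ⟨h10, h11⟩ := Finset.mem_erase.1 h9
            exact ⟨h10, hck, Equiv.Perm.mem_support.1 h11⟩
          · rintro ⟨hca, hck, hc⟩
            refine ⟨hck, ?_⟩
            apply Equiv.Perm.mem_support.1
            rw [hsupp', Finset.mem_erase]
            exact ⟨hca, Equiv.Perm.mem_support.2 hc⟩
        have ha₀f : a₀ ∈ (Finset.univ.filter fun i : Fin n => i.val < k ∧ η i ≠ i) :=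
          Finset.mem_filter.2 ⟨Finset.mem_univ _, ha₀k, ha₀⟩
        have hcardf := Finset.card_erase_of_mem ha₀f
        rw [hfe, hcardf] at hstat1
        have hpos : 0 < (Finset.univ.filter fun i : Fin n => i.val < k ∧ η i ≠ i).card :=
          Finset.card_pos.2 ⟨a₀, ha₀f⟩
        simp only [List.length_append, List.length_singleton]
        omega
    · -- CASE A : w (η⁻¹ a₀) < w (η a₀) ; first step (a₀, η⁻¹ a₀)
      have hcyc' : (Equiv.swap a₀ (η⁻¹ a₀) * η).IsCycle := etaP_isCycle hcyc hcard hN3' ha₀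
      have hsupp' : (Equiv.swap a₀ (η⁻¹ a₀) * η).support = η.support.erase (η⁻¹ a₀) :=
        etaP_support ha₀ h2
      have hcard' : (Equiv.swap a₀ (η⁻¹ a₀) * η).support.card = N - 1 := by
        rw [hsupp', Finset.card_erase_of_mem hpS, hcard]
      have hcond' : KCond k (w * Equiv.swap a₀ (η⁻¹ a₀)) (Equiv.swap a₀ (η⁻¹ a₀) * η) := by
        intro c hc
        have hcS : c ∈ η.support.erase (η⁻¹ a₀) := by
          rw [← hsupp']; exact Equiv.Perm.mem_support.2 hc
        obtain ⟨hcp, hcSupp⟩ := Finset.mem_erase.1 hcS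
        have hcsup : η c ≠ c := Equiv.Perm.mem_support.1 hcSupp
        rcases eq_or_ne c a₀ with hceq | hca₀
        · subst hceq
          constructor
          · intro _
            rw [etaP_apply_a₀ ha₀ h2]
            have e1 : (w * Equiv.swap c (η⁻¹ c)) c = w (η⁻¹ c) := by
              rw [Equiv.Perm.mul_apply, Equiv.swap_apply_left]
            have e2 : (w * Equiv.swap c (η⁻¹ c)) (η c) = w (η c) := by
              rw [Equiv.Perm.mul_apply, Equiv.swap_apply_of_ne_of_ne ha₀ hqp']
            rw [e1, e2]; exact hA
          · intro hh
            exfalso; omega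
        · rcases eq_or_ne c (η⁻¹ (η⁻¹ a₀)) with rfl | hcpre
          · have hec : η (η⁻¹ (η⁻¹ a₀)) = η⁻¹ a₀ := Equiv.Perm.apply_inv_self η (η⁻¹ a₀)
            have e1 : (w * Equiv.swap a₀ (η⁻¹ a₀)) (η⁻¹ (η⁻¹ a₀)) = w (η⁻¹ (η⁻¹ a₀)) := by
              rw [Equiv.Perm.mul_apply, Equiv.swap_apply_of_ne_of_ne hca₀ hcp]
            have e2 : (w * Equiv.swap a₀ (η⁻¹ a₀)) a₀ = w (η⁻¹ a₀) := by
              rw [Equiv.Perm.mul_apply, Equiv.swap_apply_left]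
            rw [etaP_apply_pre ha₀ h2]
            have h9 := hcond (η⁻¹ (η⁻¹ a₀)) hcsup
            rw [hec] at h9
            exact ⟨fun hck => by rw [e1, e2]; exact h9.1 hck,
              fun hck => by rw [e1, e2]; exact h9.2 hck⟩
          · have hec1 : η c ≠ a₀ := fun hh => hcp (by rw [← hh, Equiv.Perm.inv_apply_self])
            have hec2 : η c ≠ η⁻¹ a₀ := fun hh => hcpre (by rw [← hh, Equiv.Perm.inv_apply_self])
            rw [etaP_apply_other ha₀ hcp hcpre]
            have e1 : (w * Equiv.swap a₀ (η⁻¹ a₀)) c = w c := by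
              rw [Equiv.Perm.mul_apply, Equiv.swap_apply_of_ne_of_ne hca₀ hcp]
            have e2 : (w * Equiv.swap a₀ (η⁻¹ a₀)) (η c) = w (η c) := by
              rw [Equiv.Perm.mul_apply, Equiv.swap_apply_of_ne_of_ne hec1 hec2]
            have h9 := hcond c hcsup
            exact ⟨fun hck => by rw [e1, e2]; exact h9.1 hck,
              fun hck => by rw [e1, e2]; exact h9.2 hck⟩
      obtain ⟨l₁, ⟨hP1, hE1, hU1⟩, huniq1, hlen1, L1a, L2a, hsplit1, hstat1⟩ :=
        IH (N - 1) (by omega) (by omega) (w * Equiv.swap a₀ (η⁻¹ a₀))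
          (Equiv.swap a₀ (η⁻¹ a₀) * η) hcyc' hcard' hcond'
      have hl₁pairs : ∀ q ∈ l₁, q.1 ∈ (Equiv.swap a₀ (η⁻¹ a₀) * η).support ∧
          q.2 ∈ (Equiv.swap a₀ (η⁻¹ a₀) * η).support :=
        fun q hq => mem_support_of_mem hP1 hE1 hq
      have hall₁ : ∀ y ∈ pathLabels (w * Equiv.swap a₀ (η⁻¹ a₀)) l₁, w a₀ < y := by
        intro y hy
        obtain ⟨c, hcS, rfl⟩ := pathLabels_mem hP1 hl₁pairs y hy
        rw [hsupp', Finset.mem_erase] at hcS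
        obtain ⟨hcp, hcS⟩ := hcS
        rw [Equiv.Perm.mul_apply]
        rcases eq_or_ne c a₀ with rfl | hca
        · rw [Equiv.swap_apply_left]; exact hwa₀p
        · rw [Equiv.swap_apply_of_ne_of_ne hca hcp]; exact hminlt c hcS hca
      refine ⟨(a₀, η⁻¹ a₀) :: l₁, ⟨⟨ha₀k, hpk, hwa₀p, hP1⟩, ?_, ?_⟩, ?_, ?_, ?_⟩
      · rw [pathEnd_cons]
        show pathEnd (w * Equiv.swap a₀ (η⁻¹ a₀)) l₁ = w * η
        rw [hE1, ← mul_assoc, mul_assoc w, Equiv.swap_mul_self, mul_one]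
      · rw [pathLabels_cons]
        exact unimodal_cons_of_lt hU1 hall₁
      · -- uniqueness
        intro l' hP' hE' hU'
        have hsteps : ∀ q ∈ l', q.1 ∈ η.support ∧ q.2 ∈ η.support :=
          fun q hq => mem_support_of_mem hP' hE' hq
        have hexists : ∃ q ∈ l', q.1 = a₀ := by
          by_contra hh
          push_neg at hh
          have h9 := (min_pside hP' hsteps ha₀S ha₀k hh hminlt).1
          rw [hE'] at h9
          exact ha₀ (w.injective h9)
        obtain ⟨lA, q, lB, rfl, hq1, hqA⟩ := exists_first_split hexists
        obtain ⟨q1, b⟩ := q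
        dsimp at hq1
        subst q1
        rw [isKPath_append] at hP'
        obtain ⟨hPA, hPq⟩ := hP'
        obtain ⟨hq1k, hqbk, hqlt, hPB⟩ := hPq
        simp only [Prod.fst, Prod.snd] at hq1k hqbk hqlt hPB
        have hlApairs : ∀ r ∈ lA, r.1 ∈ η.support ∧ r.2 ∈ η.support :=
          fun r hr => hsteps r (by simp [hr])
        have hbS : b ∈ η.support := by
          have h9 := (hsteps (a₀, b) (by simp)).2
          simpa using h9
        have hminA := min_pside hPA hlApairs ha₀S ha₀k (fun r hr => hqA r hr) hminlt
        have hwBb : (pathEnd w lA * Equiv.swap a₀ b) b = w a₀ := by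
          rw [Equiv.Perm.mul_apply, Equiv.swap_apply_right, hminA.1]
        have hEB : pathEnd (pathEnd w lA * Equiv.swap a₀ b) lB = w * η := by
          rw [← hE', pathEnd_append, pathEnd_cons]
        have hlBpairs : ∀ r ∈ lB, r.1 ∈ η.support ∧ r.2 ∈ η.support :=
          fun r hr => hsteps r (by simp [hr])
        have hPfront : IsKPath k w (lA ++ [(a₀, b)]) :=
          isKPath_append.2 ⟨hPA, hq1k, hqbk, hqlt, trivial⟩
        have hwBeq : pathEnd w (lA ++ [(a₀, b)]) = pathEnd w lA * Equiv.swap a₀ b := by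
          rw [pathEnd_append, pathEnd_cons, pathEnd_nil]
        have hminB : ∀ c ∈ η.support, c ≠ b →
            (pathEnd w lA * Equiv.swap a₀ b) b < (pathEnd w lA * Equiv.swap a₀ b) c := by
          intro c hc hcb
          have hfrontpairs : ∀ r ∈ lA ++ [(a₀, b)], r.1 ∈ η.support ∧ r.2 ∈ η.support := by
            intro r hr
            rcases List.mem_append.1 hr with h | h
            · exact hlApairs r h
            · simp only [List.mem_singleton] at h
              subst h
              exact ⟨ha₀S, hbS⟩
          obtain ⟨d, hd, hda⟩ := pathEnd_mem hPfront hfrontpairs c hc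
          rw [hwBeq] at hda
          rw [hwBb, hda]
          apply lt_of_le_of_ne (hmin d hd)
          intro hh
          apply hcb
          apply (pathEnd w lA * Equiv.swap a₀ b).injective
          rw [hda, hwBb]
          exact hh.symm
        have hminq := min_qside hPB hlBpairs hbS hqbk hminB
        have hbp : b = η⁻¹ a₀ := by
          have h9 : (w * η) b = w a₀ := by rw [← hEB, hminq.1, hwBb]
          rw [Equiv.Perm.mul_apply] at h9
          have h10 : η b = a₀ := w.injective h9
          rw [← h10, Equiv.Perm.inv_apply_self]
        subst hbp
        have hlabels : pathLabels w (lA ++ (a₀, η⁻¹ a₀) :: lB)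
            = pathLabels w lA ++ w a₀ ::
              pathLabels (pathEnd w lA * Equiv.swap a₀ (η⁻¹ a₀)) lB := by
          rw [pathLabels_append]
          simp only [pathLabels_cons]
          rw [hminA.1]
        have hallB : ∀ y ∈ pathLabels (pathEnd w lA * Equiv.swap a₀ (η⁻¹ a₀)) lB, w a₀ < y := by
          intro y hy
          have h9 := hminq.2 y hy
          rwa [hwBb] at h9
        have hU'' : Unimodal (pathLabels w lA ++ w a₀ ::
            pathLabels (pathEnd w lA * Equiv.swap a₀ (η⁻¹ a₀)) lB) := by
          rw [← hlabels]; exact hU'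
        rcases unimodal_min_split hU'' hminA.2 hallB with hX | hY
        · -- lA = [] : consistent, apply IH uniqueness
          have hlAnil : lA = [] := by
            have h9 := length_pathLabels w lA
            rw [hX] at h9
            exact List.eq_nil_of_length_eq_zero h9.symm
          subst hlAnil
          simp only [pathEnd_nil] at hEB hPB
          have hgr : (w * Equiv.swap a₀ (η⁻¹ a₀)) * (Equiv.swap a₀ (η⁻¹ a₀) * η) = w * η := by
            rw [← mul_assoc, mul_assoc w, Equiv.swap_mul_self, mul_one]
          have hEB' : pathEnd (w * Equiv.swap a₀ (η⁻¹ a₀)) lB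
              = (w * Equiv.swap a₀ (η⁻¹ a₀)) * (Equiv.swap a₀ (η⁻¹ a₀) * η) := by
            rw [hgr]; exact hEB
          have hlBne : lB ≠ [] := by
            intro hh
            subst hh
            simp only [pathEnd_nil] at hEB'
            have h9 : (Equiv.swap a₀ (η⁻¹ a₀) * η) = 1 :=
              mul_left_cancel (a := w * Equiv.swap a₀ (η⁻¹ a₀)) (by rw [mul_one]; exact hEB'.symm)
            rw [h9] at hcard'
            simp at hcard'
            omega
          have hUB : Unimodal (pathLabels (w * Equiv.swap a₀ (η⁻¹ a₀)) lB) := by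
            have h9 : pathLabels w ([] ++ (a₀, η⁻¹ a₀) :: lB)
                = w a₀ :: pathLabels (w * Equiv.swap a₀ (η⁻¹ a₀)) lB := by
              simp [pathLabels_cons]
            apply unimodal_tail (x := w a₀)
            · rw [← h9]; exact hU'
            · intro hh
              apply hlBne
              apply List.eq_nil_of_length_eq_zero
              rw [← length_pathLabels (w * Equiv.swap a₀ (η⁻¹ a₀)) lB, hh]
              rfl
          have h9 := huniq1 lB hPB hEB' hUB
          rw [List.nil_append, h9]
        · -- lB = [] : contradiction with case A
          exfalso
          have hlBnil : lB = [] := by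
            have h9 := length_pathLabels (pathEnd w lA * Equiv.swap a₀ (η⁻¹ a₀)) lB
            rw [hY] at h9
            exact List.eq_nil_of_length_eq_zero h9.symm
          subst hlBnil
          simp only [pathEnd_nil] at hEB
          have hEA : pathEnd w lA = w * (η * Equiv.swap a₀ (η⁻¹ a₀)) := by
            rw [← mul_assoc, ← hEB, mul_assoc, Equiv.swap_mul_self, mul_one]
          have hne : (η * Equiv.swap a₀ (η⁻¹ a₀)) (η⁻¹ a₀) ≠ η⁻¹ a₀ := by
            rw [etaD_apply_p]; exact hqp'
          have h9 := (cond_of_path hPA hEA hne).2 hpk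
          rw [etaD_apply_p] at h9
          exact absurd h9 (not_lt_of_gt hA)
      · simp only [List.length_cons]
        omega
      · rw [pathLabels_cons]
        refine ⟨w a₀ :: L1a, L2a, unimodalWith_cons_of_lt hsplit1 hall₁, ?_⟩
        rw [hstat1]
        congr 1
        ext c
        simp only [Finset.mem_filter, Finset.mem_univ, true_and]
        constructor
        · rintro ⟨hck, hc⟩
          refine ⟨hck, ?_⟩
          have h9 : c ∈ η.support.erase (η⁻¹ a₀) := by
            rw [← hsupp']; exact Equiv.Perm.mem_support.2 hc
          exact Equiv.Perm.mem_support.1 (Finset.mem_erase.1 h9).2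
        · rintro ⟨hck, hc⟩
          refine ⟨hck, ?_⟩
          apply Equiv.Perm.mem_support.1
          rw [hsupp', Finset.mem_erase]
          exact ⟨fun hh => by rw [hh] at hck; omega, Equiv.Perm.mem_support.2 hc⟩


end Stmt12

/-- If `η` is an `(m+1)`-cycle with `m ≥ 1` and `u ≤_k u·η` in the extended
`k`-Bruhat order, then there is a unique unimodal path from `u` to `u·η`;
it has length `m` and its number of decreasing steps equals
`ht_k(η) = #{i ≤ k : η(i) ≠ i} − 1`. -/
theorem stmt12 (n k m : ℕ) (hm : 1 ≤ m) (u η : Equiv.Perm (Fin n))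
    (hcyc : η.IsCycle) (hcard : η.support.card = m + 1)
    (hle : extKBruhat k u (u * η)) :
    (∃! l : List (Fin n × Fin n),
        IsKPath k u l ∧ pathEnd u l = u * η ∧ Unimodal (pathLabels u l)) ∧
      ∀ l : List (Fin n × Fin n),
        IsKPath k u l → pathEnd u l = u * η → Unimodal (pathLabels u l) →
          l.length = m ∧
            ∀ L1 L2, UnimodalWith (pathLabels u l) L1 L2 →
              L2.length =
                (Finset.univ.filter fun i : Fin n => i.val < k ∧ η i ≠ i).card - 1 := by
  obtain ⟨l₀, hP₀, hE₀⟩ := Stmt12.extKBruhat_path hle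
  have hcond : Stmt12.KCond k u η := fun c hc => Stmt12.cond_of_path hP₀ hE₀ hc
  obtain ⟨l, ⟨hP, hE, hU⟩, huniq, hlen, L1c, L2c, hsplitc, hstatc⟩ :=
    Stmt12.main k (m + 1) (by omega) u η hcyc hcard hcond
  constructor
  · exact ⟨l, ⟨hP, hE, hU⟩, fun y hy => huniq y hy.1 hy.2.1 hy.2.2⟩
  · intro l' hP' hE' hU'
    have hl' : l' = l := huniq l' hP' hE' hU'
    subst hl'
    constructor
    · omega
    · intro L1 L2 hsplit
      have h9 := Stmt12.unimodalWith_unique hsplit hsplitc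
      omega
end
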